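/- arXiv:2604.19595 — 3 statements merged into one kernel-verified Lean document; each statement's English description precedes it below -/
import Mathlib

section
/- Assume (R) and let φ be a traveling-wave solution of u_t = P(u)_{xx} + g(u) on an open interval I with speed c. If φ is monotone, then for every ξ ∈ I_± such that g(φ(ξ)) ≠ 0, the profile φ is differentiable at ξ and φ'(ξ) ≠ 0. -/
open Set Filter MeasureTheory

noncomputable section

/-- `f` has a jump point at `ξ₀`: both one-sided limits exist, are finite, and differ. -/
def JumpPoint (f : ℝ → ℝ) (ξ₀ : ℝ) : Prop :=
  ∃ l r : ℝ, Tendsto f (nhdsWithin ξ₀ (Iio ξ₀)) (nhds l) ∧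
    Tendsto f (nhdsWithin ξ₀ (Ioi ξ₀)) (nhds r) ∧ l ≠ r

/-- The set of jump points of `f` lying in `I`. -/
def jumpSet (f : ℝ → ℝ) (I : Set ℝ) : Set ℝ := {ξ ∈ I | JumpPoint f ξ}

/-- Smooth, compactly supported test functions with support inside `I`. -/
def IsTestFun (I : Set ℝ) (ψ : ℝ → ℝ) : Prop :=
  ContDiff ℝ (⊤ : ℕ∞) ψ ∧ HasCompactSupport ψ ∧ tsupport ψ ⊆ I

/-- A traveling-wave solution of `u_t = P(u)_{xx} + g(u)` on the open interval `I`
with speed `c` and profile `φ`: `φ` is `[0,1]`-valued, continuous on `I` except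
possibly at finitely many jump points, and satisfies the weak (distributional)
formulation of `P(φ)'' + c φ' + g(φ) = 0` against all test functions. -/
structure IsTW (P g : ℝ → ℝ) (I : Set ℝ) (c : ℝ) (φ : ℝ → ℝ) : Prop where
  isOpen : IsOpen I
  ordConn : I.OrdConnected
  mapsTo : ∀ ξ ∈ I, φ ξ ∈ Icc (0:ℝ) 1
  jumps_finite : (jumpSet φ I).Finite
  cont : ContinuousOn φ (I \ jumpSet φ I)
  weak_eq : ∀ ψ : ℝ → ℝ, IsTestFun I ψ →
    ∫ ξ in I, P (φ ξ) * iteratedDeriv 2 ψ ξ =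
      c * (∫ ξ in I, φ ξ * deriv ψ ξ) - ∫ ξ in I, g (φ ξ) * ψ ξ

/-- A shock traveling wave: a traveling wave whose profile is not continuous. -/
def IsShockTW (P g : ℝ → ℝ) (I : Set ℝ) (c : ℝ) (φ : ℝ → ℝ) : Prop :=
  IsTW P g I c φ ∧ ¬ ContinuousOn φ I

/-- A wavefront: a global traveling wave with monotone non-constant profile whose
limits at `±∞` exist and are zeros of `g`. -/
def IsWavefront (P g : ℝ → ℝ) (c : ℝ) (φ : ℝ → ℝ) : Prop :=
  IsTW P g univ c φ ∧ (Monotone φ ∨ Antitone φ) ∧ (¬ ∃ k, ∀ ξ, φ ξ = k) ∧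
  ∃ l m : ℝ, Tendsto φ atBot (nhds l) ∧ Tendsto φ atTop (nhds m) ∧ g l = 0 ∧ g m = 0

/-- Condition (WF): `φ(−∞) = 1` and `φ(+∞) = 0`. -/
def CondWF (φ : ℝ → ℝ) : Prop :=
  Tendsto φ atBot (nhds 1) ∧ Tendsto φ atTop (nhds 0)

/-- A shock wavefront: a wavefront whose profile is not continuous. -/
def IsShockWavefront (P g : ℝ → ℝ) (c : ℝ) (φ : ℝ → ℝ) : Prop :=
  IsWavefront P g c φ ∧ ¬ ContinuousOn φ univ

/-- Condition (R): `P ∈ C²[0,1]`, `g ∈ C⁰[0,1]`, and `P' = D` and `g` have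
finitely many zeros in `[0,1]`. -/
def CondR (P g : ℝ → ℝ) : Prop :=
  ContDiffOn ℝ 2 P (Icc 0 1) ∧ ContinuousOn g (Icc 0 1) ∧
  {u ∈ Icc (0:ℝ) 1 | deriv P u = 0}.Finite ∧ {u ∈ Icc (0:ℝ) 1 | g u = 0}.Finite

/-- Condition (P): the diffusivity `D = P'` is positive on `(0,α) ∪ (β,1)` and
negative on `(α,β)`. -/
def CondP (P : ℝ → ℝ) (α β : ℝ) : Prop :=
  (∀ u ∈ Ioo (0:ℝ) α ∪ Ioo β 1, 0 < deriv P u) ∧ ∀ u ∈ Ioo α β, deriv P u < 0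

/-- Condition (g): `g(0) = g(1) = 0`, `g < 0` on `(0,γ)` and `g > 0` on `(γ,1)`. -/
def Condg (g : ℝ → ℝ) (γ : ℝ) : Prop :=
  g 0 = 0 ∧ g 1 = 0 ∧ (∀ u ∈ Ioo (0:ℝ) γ, g u < 0) ∧ ∀ u ∈ Ioo γ 1, 0 < g u

/-- `φ` has exactly one jump point, located at `ξs`, with left limit `φr` and
right limit `φl`. -/
def HasSingleJump (φ : ℝ → ℝ) (ξs φl φr : ℝ) : Prop :=
  jumpSet φ univ = {ξs} ∧
  Tendsto φ (nhdsWithin ξs (Iio ξs)) (nhds φr) ∧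
  Tendsto φ (nhdsWithin ξs (Ioi ξs)) (nhds φl)

/-- (Locally) absolutely continuous on `I`: an indefinite integral of a locally
integrable function. -/
def AbsContOn (F : ℝ → ℝ) (I : Set ℝ) : Prop :=
  ∃ h : ℝ → ℝ, LocallyIntegrableOn h I volume ∧
    ∀ a ∈ I, ∀ b ∈ I, F b - F a = ∫ t in a..b, h t

/-- The real interval `(−∞, a)`, `a ∈ ℝ ∪ {±∞}`. -/
def leftRay (a : EReal) : Set ℝ := {ξ : ℝ | (ξ : EReal) < a}

/-- The real interval `(a, +∞)`, `a ∈ ℝ ∪ {±∞}`. -/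
def rightRay (a : EReal) : Set ℝ := {ξ : ℝ | a < (ξ : EReal)}

/-- `φ(ξ) → L` as `ξ` tends to the right endpoint `a` of its domain. -/
def TendstoRightEnd (φ : ℝ → ℝ) (a : EReal) (L : ℝ) : Prop :=
  (a = ⊤ → Tendsto φ atTop (nhds L)) ∧
  ∀ x : ℝ, a = (x : EReal) → Tendsto φ (nhdsWithin x (Iio x)) (nhds L)

/-- `φ(ξ) → L` as `ξ` tends to the left endpoint `a` of its domain. -/
def TendstoLeftEnd (φ : ℝ → ℝ) (a : EReal) (L : ℝ) : Prop :=
  (a = ⊥ → Tendsto φ atBot (nhds L)) ∧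
  ∀ x : ℝ, a = (x : EReal) → Tendsto φ (nhdsWithin x (Ioi x)) (nhds L)

/-- A regular semi-wavefront from `1`: a regular traveling wave on `I = (−∞, a)`
with monotone non-constant profile tending to `1` at `−∞`. -/
def IsSemiWFfrom1 (P g : ℝ → ℝ) (a : EReal) (c : ℝ) (φ : ℝ → ℝ) : Prop :=
  IsTW P g (leftRay a) c φ ∧ ContinuousOn φ (leftRay a) ∧
  (MonotoneOn φ (leftRay a) ∨ AntitoneOn φ (leftRay a)) ∧
  (¬ ∃ k, ∀ ξ ∈ leftRay a, φ ξ = k) ∧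
  Tendsto φ atBot (nhds 1)

/-- A regular semi-wavefront to `0`: a regular traveling wave on `I = (a, +∞)`
with monotone non-constant profile tending to `0` at `+∞`. -/
def IsSemiWFto0 (P g : ℝ → ℝ) (a : EReal) (c : ℝ) (φ : ℝ → ℝ) : Prop :=
  IsTW P g (rightRay a) c φ ∧ ContinuousOn φ (rightRay a) ∧
  (MonotoneOn φ (rightRay a) ∨ AntitoneOn φ (rightRay a)) ∧
  (¬ ∃ k, ∀ ξ ∈ rightRay a, φ ξ = k) ∧
  Tendsto φ atTop (nhds 0)

open Topology
open scoped ContDiff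

lemma smooth_primitive' {χ : ℝ → ℝ} (hχ : ContDiff ℝ (⊤:ℕ∞) χ) (a : ℝ) :
    ContDiff ℝ (⊤:ℕ∞) (fun x => ∫ t in a..x, χ t) ∧
    ∀ x, HasDerivAt (fun x => ∫ t in a..x, χ t) (χ x) x := by
  have hc : Continuous χ := hχ.continuous
  have hd : ∀ x, HasDerivAt (fun x => ∫ t in a..x, χ t) (χ x) x := fun x =>
    intervalIntegral.integral_hasDerivAt_right (hc.intervalIntegrable a x)
      (hc.stronglyMeasurable.stronglyMeasurableAtFilter) hc.continuousAt
  refine ⟨?_, hd⟩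
  have h2 : ContDiff ℝ ∞ (fun x => ∫ t in a..x, χ t) := by
    rw [contDiff_infty_iff_deriv]
    have hde : deriv (fun x => ∫ t in a..x, χ t) = χ := funext fun x => (hd x).deriv
    refine ⟨fun x => (hd x).differentiableAt, ?_⟩
    rw [hde]; exact hχ
  exact h2

lemma pairing_zero_of_moments {a b : ℝ} (hab : a < b) {H : ℝ → ℝ}
    (h0 : ∀ ψ : ℝ → ℝ, ContDiff ℝ (⊤:ℕ∞) ψ → HasCompactSupport ψ → tsupport ψ ⊆ Ioo a b →
      ∫ x in a..b, H x * deriv (deriv ψ) x = 0)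
    {χ : ℝ → ℝ} (hχ : ContDiff ℝ (⊤:ℕ∞) χ) (hsupp : tsupport χ ⊆ Ioo a b)
    (hm0 : ∫ x in a..b, χ x = 0) (hm1 : ∫ x in a..b, x * χ x = 0) :
    ∫ x in a..b, H x * χ x = 0 := by
  have hcχ : Continuous χ := hχ.continuous
  rcases eq_empty_or_nonempty (tsupport χ) with hK | hK
  · have hz : ∀ x, χ x = 0 := fun x =>
      image_eq_zero_of_notMem_tsupport (by rw [hK]; exact notMem_empty x)
    have : (fun x => H x * χ x) = fun _ => (0:ℝ) := funext fun x => by rw [hz x, mul_zero]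
    rw [this]; simp
  · -- bounds of the support
    have hKcl : IsClosed (tsupport χ) := isClosed_tsupport χ
    have hKb : Bornology.IsBounded (tsupport χ) :=
      (Metric.isBounded_Ioo a b).subset hsupp
    have hKc : IsCompact (tsupport χ) := Metric.isCompact_of_isClosed_isBounded hKcl hKb
    set a' := sInf (tsupport χ) with ha'
    set b' := sSup (tsupport χ) with hb'
    have ha'K : a' ∈ tsupport χ := hKc.sInf_mem hK
    have hb'K : b' ∈ tsupport χ := hKc.sSup_mem hK
    have haa' : a < a' := (hsupp ha'K).1
    have hb'b : b' < b := (hsupp hb'K).2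
    have hKsub : tsupport χ ⊆ Icc a' b' := fun x hx =>
      ⟨csInf_le hKb.bddBelow hx, le_csSup hKb.bddAbove hx⟩
    set a₁ := (a + a')/2 with ha₁
    set b₁ := (b' + b)/2 with hb₁
    have haa₁ : a < a₁ := by rw [ha₁]; linarith
    have ha₁a' : a₁ < a' := by rw [ha₁]; linarith
    have hb'b₁ : b' < b₁ := by rw [hb₁]; linarith
    have hb₁b : b₁ < b := by rw [hb₁]; linarith
    have hχ0 : ∀ x, x < a' ∨ b' < x → χ x = 0 := by
      intro x hx
      apply image_eq_zero_of_notMem_tsupport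
      intro hmem
      rcases hx with h | h
      · exact absurd (hKsub hmem).1 (not_le.2 h)
      · exact absurd (hKsub hmem).2 (not_le.2 h)
    -- primitives
    set χ₂ : ℝ → ℝ := fun t => t * χ t with hχ₂
    have hχ₂sm : ContDiff ℝ (⊤:ℕ∞) χ₂ := contDiff_id.mul hχ
    obtain ⟨hCsm, hCd⟩ := smooth_primitive' hχ a
    obtain ⟨hTsm, hTd⟩ := smooth_primitive' hχ₂sm a
    set C : ℝ → ℝ := fun x => ∫ t in a..x, χ t with hC
    set T : ℝ → ℝ := fun x => ∫ t in a..x, χ₂ t with hT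
    have hint : ∀ (f : ℝ → ℝ), Continuous f → ∀ u v : ℝ, IntervalIntegrable f volume u v :=
      fun f hf u v => hf.intervalIntegrable u v
    have hCleft : ∀ x, x ≤ a₁ → C x = 0 := by
      intro x hx
      have : EqOn χ 0 (Set.uIcc a x) := by
        intro t ht
        have ht2 := ht.2
        have : t ≤ a₁ := le_trans ht.2 (max_le haa₁.le hx)
        exact hχ0 t (Or.inl (lt_of_le_of_lt this ha₁a'))
      rw [hC]; simp only
      rw [intervalIntegral.integral_congr this]; simp
    have hTleft : ∀ x, x ≤ a₁ → T x = 0 := by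
      intro x hx
      have : EqOn χ₂ 0 (Set.uIcc a x) := by
        intro t ht
        have : t ≤ a₁ := le_trans ht.2 (max_le haa₁.le hx)
        have := hχ0 t (Or.inl (lt_of_le_of_lt this ha₁a'))
        rw [hχ₂]; simp only [this, mul_zero]; rfl
      rw [hT]; simp only
      rw [intervalIntegral.integral_congr this]; simp
    have hCright : ∀ x, b₁ ≤ x → C x = 0 := by
      intro x hx
      have hsplit : (∫ t in a..b, χ t) + ∫ t in b..x, χ t = ∫ t in a..x, χ t :=
        intervalIntegral.integral_add_adjacent_intervals (hint χ hcχ a b) (hint χ hcχ b x)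
      have hz : (∫ t in b..x, χ t) = 0 := by
        have : EqOn χ 0 (Set.uIcc b x) := by
          intro t ht
          have : b₁ ≤ t := le_trans (le_min hb₁b.le hx) ht.1
          exact hχ0 t (Or.inr (lt_of_lt_of_le hb'b₁ this))
        rw [intervalIntegral.integral_congr this]; simp
      show (∫ t in a..x, χ t) = 0
      rw [← hsplit, hm0, hz, add_zero]
    have hTright : ∀ x, b₁ ≤ x → T x = 0 := by
      intro x hx
      have hsplit : (∫ t in a..b, χ₂ t) + ∫ t in b..x, χ₂ t = ∫ t in a..x, χ₂ t :=
        intervalIntegral.integral_add_adjacent_intervals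
          (hint χ₂ hχ₂sm.continuous a b) (hint χ₂ hχ₂sm.continuous b x)
      have hz : (∫ t in b..x, χ₂ t) = 0 := by
        have : EqOn χ₂ 0 (Set.uIcc b x) := by
          intro t ht
          have : b₁ ≤ t := le_trans (le_min hb₁b.le hx) ht.1
          have := hχ0 t (Or.inr (lt_of_lt_of_le hb'b₁ this))
          rw [hχ₂]; simp only [this, mul_zero]; rfl
        rw [intervalIntegral.integral_congr this]; simp
      show (∫ t in a..x, χ₂ t) = 0
      rw [← hsplit, hz, add_zero]
      exact hm1
    -- the test function
    set ψ : ℝ → ℝ := fun x => x * C x - T x with hψ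
    have hψd : ∀ x, HasDerivAt ψ (C x) x := by
      intro x
      have h1 : HasDerivAt (fun x => x * C x) (1 * C x + x * χ x) x :=
        (hasDerivAt_id x).mul (hCd x)
      have h2 : HasDerivAt (fun x => x * C x - T x) _ x := h1.sub (hTd x)
      convert h2 using 1
      rw [hχ₂]; ring
    have hdψ : deriv ψ = C := funext fun x => (hψd x).deriv
    have hψ'' : deriv (deriv ψ) = χ := by
      rw [hdψ]; exact funext fun x => (hCd x).deriv
    have hψsm : ContDiff ℝ (⊤:ℕ∞) ψ := contDiff_id.mul hCsm |>.sub hTsm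
    have hψz : ∀ x ∉ Icc a₁ b₁, ψ x = 0 := by
      intro x hx
      rw [mem_Icc, not_and_or, not_le, not_le] at hx
      rcases hx with h | h
      · rw [hψ]; simp only [hCleft x h.le, hTleft x h.le, mul_zero, sub_zero]
      · rw [hψ]; simp only [hCright x h.le, hTright x h.le, mul_zero, sub_zero]
    have hψcs : HasCompactSupport ψ := HasCompactSupport.intro isCompact_Icc hψz
    have hψsupp : tsupport ψ ⊆ Ioo a b := by
      have h1 : tsupport ψ ⊆ Icc a₁ b₁ :=
        closure_minimal (fun x hx => by
          by_contra hmem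
          exact hx (hψz x hmem)) isClosed_Icc
      exact h1.trans (Icc_subset_Ioo haa₁ hb₁b)
    have := h0 ψ hψsm hψcs hψsupp
    rw [hψ''] at this
    exact this

/-- slope-based: derivative at a point of a monotone function on an open set is `≥ 0`. -/
lemma deriv_nonneg_of_monotoneOn {F : ℝ → ℝ} {s : Set ℝ} (hs : IsOpen s) {x : ℝ} (hx : x ∈ s)
    (hm : MonotoneOn F s) {d : ℝ} (hd : HasDerivAt F d x) : 0 ≤ d := by
  rw [hasDerivAt_iff_tendsto_slope] at hd
  have h1 : Tendsto (slope F x) (𝓝[>] x) (𝓝 d) :=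
    hd.mono_left (nhdsWithin_mono _ (fun y hy => ne_of_gt hy))
  refine ge_of_tendsto h1 ?_
  have hsm : s ∈ 𝓝[>] x := nhdsWithin_le_nhds (hs.mem_nhds hx)
  filter_upwards [hsm, self_mem_nhdsWithin] with y hys (hyx : x < y)
  rw [slope_def_field]
  have := hm hx hys hyx.le
  have h2 : (0:ℝ) < y - x := by linarith
  apply div_nonneg (by linarith) h2.le

lemma integral_eq_intervalIntegral_of_support {a b : ℝ} (hab : a ≤ b) {f : ℝ → ℝ}
    (hz : ∀ x ∉ Ioo a b, f x = 0) :
    ∫ x in a..b, f x = ∫ x, f x := by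
  rw [intervalIntegral.integral_of_le hab, integral_Ioc_eq_integral_Ioo]
  exact setIntegral_eq_integral_of_forall_compl_eq_zero hz

lemma affine_of_pairing_zero {a b : ℝ} (hab : a < b) {H : ℝ → ℝ} (hH : ContinuousOn H (Icc a b))
    (h0 : ∀ ψ : ℝ → ℝ, ContDiff ℝ (⊤:ℕ∞) ψ → HasCompactSupport ψ → tsupport ψ ⊆ Ioo a b →
      ∫ x in a..b, H x * deriv (deriv ψ) x = 0) :
    ∃ A B : ℝ, ∀ x ∈ Ioo a b, H x = A + B * x := by
  have hci : ∀ f : ℝ → ℝ, ContinuousOn f (Icc a b) → IntervalIntegrable f volume a b := by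
    intro f hf
    rw [show Icc a b = uIcc a b from (uIcc_of_le hab.le).symm] at hf
    exact hf.intervalIntegrable
  have hcic : ∀ f : ℝ → ℝ, Continuous f → IntervalIntegrable f volume a b :=
    fun f hf => hf.intervalIntegrable a b
  -- the bump function
  set m₀ : ℝ := (a + b)/2 with hm₀
  have hr : (0:ℝ) < (b - a)/2 := by linarith
  set bump : ContDiffBump m₀ := ⟨(b-a)/8, (b-a)/4, by linarith, by linarith⟩ with hbump
  set η : ℝ → ℝ := bump.normed volume with hη
  have hball : Metric.closedBall m₀ ((b-a)/4) ⊆ Ioo a b := by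
    intro x hx
    rw [Metric.mem_closedBall, Real.dist_eq, abs_le] at hx
    obtain ⟨h1, h2⟩ := hx
    constructor <;> linarith [hm₀]
  have hηsm : ContDiff ℝ (⊤:ℕ∞) η := bump.contDiff_normed
  have hηc : Continuous η := hηsm.continuous
  have hηsupp : tsupport η ⊆ Ioo a b := by
    rw [hη, bump.tsupport_normed_eq]
    exact hball
  have hηz : ∀ x ∉ Ioo a b, η x = 0 := fun x hx =>
    image_eq_zero_of_notMem_tsupport (fun hmem => hx (hηsupp hmem))
  have hηint : ∫ x in a..b, η x = 1 := by
    rw [integral_eq_intervalIntegral_of_support hab.le hηz]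
    exact bump.integral_normed
  have hηcs : HasCompactSupport η := bump.hasCompactSupport_normed
  have hη'c : Continuous (deriv η) := hηsm.continuous_deriv (by exact_mod_cast le_top)
  have hη'sm : ContDiff ℝ (⊤:ℕ∞) (deriv η) := by
    have := (contDiff_infty_iff_deriv.mp (by exact_mod_cast hηsm)).2
    exact_mod_cast this
  have hη'supp : tsupport (deriv η) ⊆ Ioo a b :=
    (closure_minimal (support_deriv_subset) (isClosed_tsupport η)).trans hηsupp
  have hη'z : ∀ x ∉ Ioo a b, deriv η x = 0 := fun x hx =>
    image_eq_zero_of_notMem_tsupport (fun hmem => hx (hη'supp hmem))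
  have hηab : η a = 0 := hηz a (fun h => lt_irrefl a h.1)
  have hηbb : η b = 0 := hηz b (fun h => lt_irrefl b h.2)
  have hηdiff : ∀ x, HasDerivAt η (deriv η x) x := fun x =>
    (hηsm.differentiable (by simp) x).hasDerivAt
  have hη'int0 : ∫ x in a..b, deriv η x = 0 := by
    rw [intervalIntegral.integral_deriv_eq_sub (fun x _ => (hηdiff x).differentiableAt)
      (hcic _ hη'c), hηab, hηbb, sub_zero]
  have hη'int1 : ∫ x in a..b, x * deriv η x = -1 := by
    have hibp := intervalIntegral.integral_mul_deriv_eq_deriv_mul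
      (u := fun x => x) (u' := fun _ => (1:ℝ)) (v := η) (v' := deriv η)
      (fun x _ => hasDerivAt_id x) (fun x _ => hηdiff x)
      (hcic _ continuous_const) (hcic _ hη'c)
    rw [hηab, hηbb, mul_zero, mul_zero, sub_zero, zero_sub] at hibp
    simp only [one_mul] at hibp
    rw [hibp, hηint]
  -- pairing with arbitrary test functions against an affine correction
  set mm : ℝ := ∫ x in a..b, x * η x with hmm
  set IHη : ℝ := ∫ x in a..b, H x * η x with hIHη
  set IHη' : ℝ := ∫ x in a..b, H x * deriv η x with hIHη'
  set B₀ : ℝ := -IHη' with hB₀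
  set A₀ : ℝ := IHη + mm * IHη' with hA₀
  have hHμ : ∀ f : ℝ → ℝ, Continuous f → IntervalIntegrable (fun x => H x * f x) volume a b :=
    fun f hf => hci _ (hH.mul hf.continuousOn)
  have hid : ∀ f : ℝ → ℝ, Continuous f → IntervalIntegrable (fun x => x * f x) volume a b :=
    fun f hf => hcic _ (continuous_id'.mul hf)
  refine ⟨A₀, B₀, ?_⟩
  have key : ∀ χ : ℝ → ℝ, ContDiff ℝ (⊤:ℕ∞) χ → tsupport χ ⊆ Ioo a b →
      ∫ x in a..b, (H x - A₀ - B₀ * x) * χ x = 0 := by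
    intro χ hχsm hχsupp
    have hχc : Continuous χ := hχsm.continuous
    have hχz : ∀ x ∉ Ioo a b, χ x = 0 := fun x hx =>
      image_eq_zero_of_notMem_tsupport (fun hmem => hx (hχsupp hmem))
    set α : ℝ := ∫ x in a..b, χ x with hα
    set Mχ : ℝ := ∫ x in a..b, x * χ x with hMχ
    set β : ℝ := α * mm - Mχ with hβ
    set χt : ℝ → ℝ := fun x => χ x - α * η x - β * deriv η x with hχt
    have hχtsm : ContDiff ℝ (⊤:ℕ∞) χt :=
      (hχsm.sub (contDiff_const.mul hηsm)).sub (contDiff_const.mul hη'sm)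
    have hχtc : Continuous χt := hχtsm.continuous
    have hχtsupp : tsupport χt ⊆ Ioo a b := by
      have hU : IsClosed (tsupport χ ∪ tsupport η ∪ tsupport (deriv η)) :=
        ((isClosed_tsupport χ).union (isClosed_tsupport η)).union (isClosed_tsupport (deriv η))
      have hsub : Function.support χt ⊆ tsupport χ ∪ tsupport η ∪ tsupport (deriv η) := by
        intro x hx
        by_contra hmem
        simp only [mem_union, not_or] at hmem
        have h1 : χ x = 0 := image_eq_zero_of_notMem_tsupport hmem.1.1
        have h2 : η x = 0 := image_eq_zero_of_notMem_tsupport hmem.1.2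
        have h3 : deriv η x = 0 := image_eq_zero_of_notMem_tsupport hmem.2
        apply hx
        rw [hχt]; simp only [h1, h2, h3, mul_zero, sub_zero, zero_sub, neg_zero]
      exact (closure_minimal hsub hU).trans
        (union_subset (union_subset hχsupp hηsupp) hη'supp)
    have hm0 : ∫ x in a..b, χt x = 0 := by
      have e : (fun x => χt x) = fun x => χ x - α * η x - β * deriv η x := rfl
      rw [e, intervalIntegral.integral_sub
            ((hcic _ hχc).sub ((hcic _ hηc).const_mul α)) ((hcic _ hη'c).const_mul β),
          intervalIntegral.integral_sub (hcic _ hχc) ((hcic _ hηc).const_mul α),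
          intervalIntegral.integral_const_mul, intervalIntegral.integral_const_mul,
          hηint, hη'int0]
      simp [hα]
    have hm1 : ∫ x in a..b, x * χt x = 0 := by
      have e : (fun x => x * χt x)
          = fun x => x * χ x - α * (x * η x) - β * (x * deriv η x) := by
        funext x; rw [hχt]; ring
      rw [e, intervalIntegral.integral_sub
            ((hid _ hχc).sub ((hid _ hηc).const_mul α)) ((hid _ hη'c).const_mul β),
          intervalIntegral.integral_sub (hid _ hχc) ((hid _ hηc).const_mul α),
          intervalIntegral.integral_const_mul, intervalIntegral.integral_const_mul,
          hη'int1, ← hmm, ← hMχ, hβ]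
      ring
    have hpair := pairing_zero_of_moments hab h0 hχtsm hχtsupp hm0 hm1
    have e2 : (fun x => H x * χt x)
        = fun x => H x * χ x - α * (H x * η x) - β * (H x * deriv η x) := by
      funext x; rw [hχt]; ring
    rw [e2, intervalIntegral.integral_sub
          ((hHμ _ hχc).sub ((hHμ _ hηc).const_mul α)) ((hHμ _ hη'c).const_mul β),
        intervalIntegral.integral_sub (hHμ _ hχc) ((hHμ _ hηc).const_mul α),
        intervalIntegral.integral_const_mul, intervalIntegral.integral_const_mul,
        ← hIHη, ← hIHη'] at hpair
    have e3 : (fun x => (H x - A₀ - B₀ * x) * χ x)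
        = fun x => H x * χ x - A₀ * χ x - B₀ * (x * χ x) := by
      funext x; ring
    rw [e3, intervalIntegral.integral_sub
          ((hHμ _ hχc).sub ((hcic _ hχc).const_mul A₀))
          ((hid _ hχc).const_mul B₀),
        intervalIntegral.integral_sub (hHμ _ hχc) ((hcic _ hχc).const_mul A₀),
        intervalIntegral.integral_const_mul, intervalIntegral.integral_const_mul,
        ← hα, ← hMχ]
    have hHχ : ∫ x in a..b, H x * χ x = α * IHη + β * IHη' := by linarith [hpair]
    rw [hHχ, hA₀, hB₀, hβ]
    ring
  -- pointwise conclusion via bump concentration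
  intro x₀ hx₀
  by_contra hne
  set h : ℝ → ℝ := fun x => H x - A₀ - B₀ * x with hh
  have hne' : h x₀ ≠ 0 := fun hz => hne (by rw [hh] at hz; simp only at hz; linarith)
  have hhc : ContinuousOn h (Icc a b) :=
    (hH.sub continuousOn_const).sub (continuousOn_const.mul (continuous_id.continuousOn))
  have hhca : ContinuousAt h x₀ :=
    (hhc.continuousAt (Icc_mem_nhds hx₀.1 hx₀.2))
  have hsq : (0:ℝ) < h x₀ ^ 2 / 2 := by positivity
  have hev : ∀ᶠ y in 𝓝 x₀, h x₀ * h y > h x₀ ^ 2 / 2 ∧ y ∈ Ioo a b := by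
    have h1 : ContinuousAt (fun y => h x₀ * h y) x₀ := continuousAt_const.mul hhca
    have h2 : (fun y => h x₀ * h y) x₀ > h x₀ ^ 2 / 2 := by
      simp only; rw [← sq]; linarith
    filter_upwards [continuousAt_const.eventually_lt h1 (by simpa using h2),
      isOpen_Ioo.mem_nhds hx₀] with y hy hy2
    exact ⟨hy, hy2⟩
  obtain ⟨r, hrpos, hrball⟩ := Metric.eventually_nhds_iff_ball.mp hev
  set bq : ContDiffBump x₀ := ⟨r/4, r/2, by linarith, by linarith⟩ with hbq
  set θ : ℝ → ℝ := bq.normed volume with hθ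
  have hθball : Metric.closedBall x₀ (r/2) ⊆ Metric.ball x₀ r := by
    intro y hy
    rw [Metric.mem_closedBall] at hy
    rw [Metric.mem_ball]
    linarith
  have hθsupp : tsupport θ ⊆ Metric.ball x₀ r := by
    rw [hθ, bq.tsupport_normed_eq]; exact hθball
  have hθIoo : tsupport θ ⊆ Ioo a b := fun y hy => (hrball _ (hθsupp hy)).2
  have hθz : ∀ x ∉ Ioo a b, θ x = 0 := fun x hx =>
    image_eq_zero_of_notMem_tsupport (fun hmem => hx (hθIoo hmem))
  have hθint : ∫ x in a..b, θ x = 1 := by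
    rw [integral_eq_intervalIntegral_of_support hab.le hθz]
    exact bq.integral_normed
  have hθc : Continuous θ := bq.continuous_normed
  have hθpair := key θ bq.contDiff_normed hθIoo
  -- pointwise inequality
  have hptwise : ∀ x ∈ Icc a b, h x₀ ^ 2 / 2 * θ x ≤ h x₀ * (h x * θ x) := by
    intro x hx
    by_cases hxs : θ x = 0
    · rw [hxs]; simp
    · have hθpos : 0 < θ x := lt_of_le_of_ne (bq.nonneg_normed x) (Ne.symm hxs)
      have hxball : x ∈ Metric.ball x₀ r := by
        apply hθsupp
        exact subset_tsupport _ hxs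
      have := (hrball x hxball).1
      have h4 : h x₀ ^ 2 / 2 ≤ h x₀ * h x := this.le
      calc h x₀ ^ 2 / 2 * θ x ≤ (h x₀ * h x) * θ x :=
            mul_le_mul_of_nonneg_right h4 (bq.nonneg_normed x)
        _ = h x₀ * (h x * θ x) := by ring
  have hint1 : IntervalIntegrable (fun x => h x₀ ^ 2 / 2 * θ x) volume a b :=
    (hcic _ hθc).const_mul _
  have hint2 : IntervalIntegrable (fun x => h x₀ * (h x * θ x)) volume a b :=
    ((hci _ (hhc.mul hθc.continuousOn)).const_mul _)
  have hmono := intervalIntegral.integral_mono_on hab.le hint1 hint2 hptwise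
  rw [intervalIntegral.integral_const_mul, intervalIntegral.integral_const_mul,
      hθint, mul_one] at hmono
  have : (∫ x in a..b, h x * θ x) = 0 := by
    rw [← hθpair]
  rw [this, mul_zero] at hmono
  linarith

/-- **Lemma 3.2**: under (R), a monotone traveling-wave profile has nonzero
derivative at every point of `I_±` where `g(φ(ξ)) ≠ 0`. -/
theorem deriv_ne_zero_of_monotone_profile
    (P g : ℝ → ℝ) (hR : CondR P g)
    (I : Set ℝ) (c : ℝ) (φ : ℝ → ℝ) (hTW : IsTW P g I c φ)
    (hmono : MonotoneOn φ I ∨ AntitoneOn φ I)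
    (ξ : ℝ) (hξ : ξ ∈ I \ jumpSet φ I) (hD : deriv P (φ ξ) ≠ 0)
    (hg : g (φ ξ) ≠ 0) :
    DifferentiableAt ℝ φ ξ ∧ deriv φ ξ ≠ 0 := by
  classical
  obtain ⟨hξI, hξn⟩ := hξ
  have hIopen : IsOpen I := hTW.isOpen
  have hIm : MeasurableSet I := hIopen.measurableSet
  have hjcl : IsClosed (jumpSet φ I) := hTW.jumps_finite.isClosed
  have hopen : IsOpen (I \ jumpSet φ I) := hIopen.sdiff hjcl
  obtain ⟨ε, hεpos, hball⟩ := Metric.isOpen_iff.mp hopen ξ ⟨hξI, hξn⟩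
  rw [Real.ball_eq_Ioo] at hball
  set J : Set ℝ := Ioo (ξ - ε) (ξ + ε) with hJ
  have hJsub : J ⊆ I \ jumpSet φ I := hball
  have hJI : J ⊆ I := fun x hx => (hJsub hx).1
  have hJopen : IsOpen J := isOpen_Ioo
  set a : ℝ := ξ - ε/2 with ha
  set b : ℝ := ξ + ε/2 with hb
  have hab : a < b := by rw [ha, hb]; linarith
  have hξab : ξ ∈ Ioo a b := by rw [ha, hb]; constructor <;> [skip; skip] <;> simp <;> linarith
  have hIccJ : Icc a b ⊆ J := by
    intro x hx
    rw [hJ]; rw [ha, hb] at hx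
    obtain ⟨h1, h2⟩ := hx
    constructor <;> simp at * <;> linarith
  have hIooJ : Ioo a b ⊆ J := Ioo_subset_Icc_self.trans hIccJ
  have hIooI : Ioo a b ⊆ I := fun x hx => hJI (hIooJ hx)
  -- continuity facts
  have hφJ : ContinuousOn φ J := hTW.cont.mono hJsub
  have hφ01 : ∀ x ∈ J, φ x ∈ Icc (0:ℝ) 1 := fun x hx => hTW.mapsTo x (hJI hx)
  set q : ℝ → ℝ := fun t => g (φ t) with hq
  have hqJ : ContinuousOn q J := hR.2.1.comp hφJ hφ01
  set F : ℝ → ℝ := fun x => P (φ x) with hF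
  have hFJ : ContinuousOn F J := hR.1.continuousOn.comp hφJ hφ01
  set Q : ℝ → ℝ := fun x => ∫ t in ξ..x, q t with hQ
  have hJconn : OrdConnected J := ordConnected_Ioo
  have hξJ : ξ ∈ J := by rw [hJ]; constructor <;> simp <;> linarith
  have hQd : ∀ x ∈ J, HasDerivAt Q (q x) x := by
    intro x hx
    apply intervalIntegral.integral_hasDerivAt_right
    · apply ContinuousOn.intervalIntegrable
      exact hqJ.mono (hJconn.uIcc_subset hξJ hx)
    · exact ContinuousOn.stronglyMeasurableAtFilter hJopen hqJ x hx
    · exact hqJ.continuousAt (hJopen.mem_nhds hx)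
  have hQJ : ContinuousOn Q J := fun x hx => ((hQd x hx).continuousAt).continuousWithinAt
  set R : ℝ → ℝ := fun x => ∫ t in ξ..x, (c * φ t + Q t) with hR'
  have hcQJ : ContinuousOn (fun t => c * φ t + Q t) J :=
    (continuousOn_const.mul hφJ).add hQJ
  have hRd : ∀ x ∈ J, HasDerivAt R (c * φ x + Q x) x := by
    intro x hx
    apply intervalIntegral.integral_hasDerivAt_right
    · apply ContinuousOn.intervalIntegrable
      exact hcQJ.mono (hJconn.uIcc_subset hξJ hx)
    · exact ContinuousOn.stronglyMeasurableAtFilter hJopen hcQJ x hx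
    · exact hcQJ.continuousAt (hJopen.mem_nhds hx)
  have hRJ : ContinuousOn R J := fun x hx => ((hRd x hx).continuousAt).continuousWithinAt
  -- localization of the weak equation
  have hloc : ∀ u v : ℝ → ℝ, (∀ x ∉ Ioo a b, v x = 0) →
      ∫ x in I, u x * v x = ∫ x in a..b, u x * v x := by
    intro u v hv
    have h1 : ∫ x in I, u x * v x = ∫ x in Ioo a b, u x * v x := by
      apply setIntegral_eq_of_subset_of_forall_diff_eq_zero hIm hIooI
      intro x hx
      rw [hv x hx.2, mul_zero]
    rw [h1, intervalIntegral.integral_of_le hab.le, integral_Ioc_eq_integral_Ioo]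
  have hzero_out : ∀ ψ : ℝ → ℝ, tsupport ψ ⊆ Ioo a b → ∀ x ∉ Ioo a b, ψ x = 0 :=
    fun ψ hsupp x hx => image_eq_zero_of_notMem_tsupport (fun hmem => hx (hsupp hmem))
  have hkey : ∀ ψ : ℝ → ℝ, ContDiff ℝ (⊤:ℕ∞) ψ → HasCompactSupport ψ → tsupport ψ ⊆ Ioo a b →
      ∫ x in a..b, (F x + R x) * deriv (deriv ψ) x = 0 := by
    intro ψ hψsm hψcs hψsupp
    have hψd : ∀ x, HasDerivAt ψ (deriv ψ x) x := fun x =>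
      (hψsm.differentiable (by simp) x).hasDerivAt
    have hψ'sm : ContDiff ℝ (⊤:ℕ∞) (deriv ψ) := by
      have := (contDiff_infty_iff_deriv.mp (by exact_mod_cast hψsm)).2
      exact_mod_cast this
    have hψ'c : Continuous (deriv ψ) := hψ'sm.continuous
    have hψ'd : ∀ x, HasDerivAt (deriv ψ) (deriv (deriv ψ) x) x := fun x =>
      (hψ'sm.differentiable (by simp) x).hasDerivAt
    have hψ''c : Continuous (deriv (deriv ψ)) := hψ'sm.continuous_deriv (by exact_mod_cast le_top)
    have hsψ : ∀ x ∉ Ioo a b, ψ x = 0 := hzero_out ψ hψsupp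
    have hts' : tsupport (deriv ψ) ⊆ Ioo a b :=
      (closure_minimal support_deriv_subset (isClosed_tsupport ψ)).trans hψsupp
    have hsψ' : ∀ x ∉ Ioo a b, deriv ψ x = 0 := hzero_out _ hts'
    have hsψ'' : ∀ x ∉ Ioo a b, deriv (deriv ψ) x = 0 :=
      hzero_out _ ((closure_minimal support_deriv_subset (isClosed_tsupport (deriv ψ))).trans hts')
    have hain : a ∉ Ioo a b := fun h => lt_irrefl a h.1
    have hbin : b ∉ Ioo a b := fun h => lt_irrefl b h.2
    -- localized weak equation
    have hw0 := hTW.weak_eq ψ ⟨hψsm, hψcs, hψsupp.trans hIooI⟩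
    have hit : iteratedDeriv 2 ψ = deriv (deriv ψ) := by
      rw [iteratedDeriv_succ, iteratedDeriv_one]
    rw [hit] at hw0
    rw [hloc (fun x => P (φ x)) (fun x => deriv (deriv ψ) x) hsψ'',
        hloc φ (fun x => deriv ψ x) hsψ',
        hloc (fun x => g (φ x)) ψ hsψ] at hw0
    have hw : (∫ x in a..b, F x * deriv (deriv ψ) x)
        = c * (∫ x in a..b, φ x * deriv ψ x) - ∫ x in a..b, q x * ψ x := hw0
    -- integrability helpers
    have hci : ∀ f : ℝ → ℝ, ContinuousOn f (Icc a b) → IntervalIntegrable f volume a b := by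
      intro f hf
      rw [show Icc a b = uIcc a b from (uIcc_of_le hab.le).symm] at hf
      exact hf.intervalIntegrable
    have huIcc : Set.uIcc a b = Icc a b := uIcc_of_le hab.le
    -- integration by parts for R against ψ''
    have hibp1 := intervalIntegral.integral_mul_deriv_eq_deriv_mul
      (u := R) (u' := fun x => c * φ x + Q x) (v := deriv ψ) (v' := fun x => deriv (deriv ψ) x)
      (fun x hx => hRd x (hIccJ (huIcc ▸ hx))) (fun x _ => hψ'd x)
      (hci _ (hcQJ.mono hIccJ)) (hψ''c.intervalIntegrable a b)
    rw [hsψ' a hain, hsψ' b hbin, mul_zero, mul_zero, sub_zero, zero_sub] at hibp1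
    -- integration by parts for Q against ψ'
    have hibp2 := intervalIntegral.integral_mul_deriv_eq_deriv_mul
      (u := Q) (u' := q) (v := ψ) (v' := fun x => deriv ψ x)
      (fun x hx => hQd x (hIccJ (huIcc ▸ hx))) (fun x _ => hψd x)
      (hci _ (hqJ.mono hIccJ)) (hψ'c.intervalIntegrable a b)
    rw [hsψ a hain, hsψ b hbin, mul_zero, mul_zero, sub_zero, zero_sub] at hibp2
    -- split the integral of (cφ + Q)ψ'
    have hsplit : ∫ x in a..b, (c * φ x + Q x) * deriv ψ x
        = c * (∫ x in a..b, φ x * deriv ψ x) + ∫ x in a..b, Q x * deriv ψ x := by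
      have e : (fun x => (c * φ x + Q x) * deriv ψ x)
          = fun x => c * (φ x * deriv ψ x) + Q x * deriv ψ x := by funext x; ring
      rw [e, intervalIntegral.integral_add (f := fun x => c * (φ x * deriv ψ x)) (g := fun x => Q x * deriv ψ x)
            ((hci _ ((hφJ.mono hIccJ).mul hψ'c.continuousOn)).const_mul c)
            (hci _ ((hQJ.mono hIccJ).mul hψ'c.continuousOn)),
          intervalIntegral.integral_const_mul]
    have hFR : (fun x => (F x + R x) * deriv (deriv ψ) x)
        = fun x => F x * deriv (deriv ψ) x + R x * deriv (deriv ψ) x := by funext x; ring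
    rw [hFR, intervalIntegral.integral_add (f := fun x => F x * deriv (deriv ψ) x) (g := fun x => R x * deriv (deriv ψ) x)
          (hci _ ((hFJ.mono hIccJ).mul hψ''c.continuousOn))
          (hci _ ((hRJ.mono hIccJ).mul hψ''c.continuousOn))]
    rw [hw, hibp1, hsplit, hibp2]
    ring
  -- affine representation
  have hHcont : ContinuousOn (fun x => F x + R x) (Icc a b) :=
    (hFJ.mono hIccJ).add (hRJ.mono hIccJ)
  obtain ⟨A, B, hAB⟩ := affine_of_pairing_zero hab hHcont hkey
  set G : ℝ → ℝ := fun x => B - (c * φ x + Q x) with hG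
  have hFd : ∀ x ∈ Ioo a b, HasDerivAt F (G x) x := by
    intro x hx
    have he : F =ᶠ[𝓝 x] fun y => A + B * y - R y := by
      filter_upwards [isOpen_Ioo.mem_nhds hx] with y hy
      have := hAB y hy
      rw [hF]; simp only; linarith [hAB y hy]
    have hd : HasDerivAt (fun y => A + B * y - R y) (G x) x := by
      have h1 : HasDerivAt (fun y => A + B * y) B x := by
        simpa using ((hasDerivAt_id x).const_mul B).const_add A
      have : HasDerivAt (fun y => A + B * y - R y) (B - (c * φ x + Q x)) x := h1.sub (hRd x (hIooJ hx))
      rw [hG]; simpa using this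
    exact hd.congr_of_eventuallyEq he
  -- no interval of constancy around a side of ξ
  have hconst : ∀ s : Set ℝ, IsOpen s → s ⊆ Ioo a b → s.Nonempty →
      (∀ x ∈ s, φ x = φ ξ) → False := by
    intro s hsopen hssub ⟨x, hx⟩ hcφ
    have hGzero : ∀ y ∈ s, G y = 0 := by
      intro y hy
      have he : F =ᶠ[𝓝 y] fun _ => P (φ ξ) := by
        filter_upwards [hsopen.mem_nhds hy] with z hz
        rw [hF]; simp only [hcφ z hz]
      have h0 : HasDerivAt F 0 y := (hasDerivAt_const y (P (φ ξ))).congr_of_eventuallyEq he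
      exact (hFd y (hssub hy)).unique h0
    have hQconst : ∀ y ∈ s, Q y = B - c * φ ξ := by
      intro y hy
      have := hGzero y hy
      rw [hG] at this; simp only at this
      rw [hcφ y hy] at this; linarith
    have heQ : Q =ᶠ[𝓝 x] fun _ => B - c * φ ξ := by
      filter_upwards [hsopen.mem_nhds hx] with z hz
      exact hQconst z hz
    have h0 : HasDerivAt Q 0 x := (hasDerivAt_const x _).congr_of_eventuallyEq heQ
    have hqx : q x = 0 := (hQd x (hIooJ (hssub hx))).unique h0
    rw [hq] at hqx; simp only at hqx
    rw [hcφ x hx] at hqx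
    exact hg hqx
  -- φ ξ is interior
  have h01 : φ ξ ∈ Ioo (0:ℝ) 1 := by
    have hm := hTW.mapsTo ξ hξI
    rcases eq_or_lt_of_le hm.1 with h0 | h0
    · exfalso
      rcases hmono with hmono | hmono
      · refine hconst (Ioo a ξ) isOpen_Ioo (Ioo_subset_Ioo le_rfl hξab.2.le)
          ⟨(a+ξ)/2, ⟨by linarith [hξab.1], by linarith [hξab.1]⟩⟩ ?_
        intro x hx
        have hxI : x ∈ I := hIooI (Ioo_subset_Ioo le_rfl hξab.2.le hx)
        have h1 := hmono hxI hξI hx.2.le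
        have h2 := (hTW.mapsTo x hxI).1
        rw [← h0] at *; linarith
      · refine hconst (Ioo ξ b) isOpen_Ioo (Ioo_subset_Ioo hξab.1.le le_rfl)
          ⟨(ξ+b)/2, ⟨by linarith [hξab.2], by linarith [hξab.2]⟩⟩ ?_
        intro x hx
        have hxI : x ∈ I := hIooI (Ioo_subset_Ioo hξab.1.le le_rfl hx)
        have h1 := hmono hξI hxI hx.1.le
        have h2 := (hTW.mapsTo x hxI).1
        rw [← h0] at *; linarith
    rcases eq_or_lt_of_le hm.2 with h1 | h1
    · exfalso
      rcases hmono with hmono | hmono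
      · refine hconst (Ioo ξ b) isOpen_Ioo (Ioo_subset_Ioo hξab.1.le le_rfl)
          ⟨(ξ+b)/2, ⟨by linarith [hξab.2], by linarith [hξab.2]⟩⟩ ?_
        intro x hx
        have hxI : x ∈ I := hIooI (Ioo_subset_Ioo hξab.1.le le_rfl hx)
        have h2 := hmono hξI hxI hx.1.le
        have h3 := (hTW.mapsTo x hxI).2
        rw [h1] at *; linarith
      · refine hconst (Ioo a ξ) isOpen_Ioo (Ioo_subset_Ioo le_rfl hξab.2.le)
          ⟨(a+ξ)/2, ⟨by linarith [hξab.1], by linarith [hξab.1]⟩⟩ ?_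
        intro x hx
        have hxI : x ∈ I := hIooI (Ioo_subset_Ioo le_rfl hξab.2.le hx)
        have h2 := hmono hxI hξI hx.2.le
        have h3 := (hTW.mapsTo x hxI).2
        rw [h1] at *; linarith
    exact ⟨h0, h1⟩
  -- local inverse of P
  have hPC2 : ContDiffAt ℝ 2 P (φ ξ) := hR.1.contDiffAt (Icc_mem_nhds h01.1 h01.2)
  have hPd : HasStrictDerivAt P (deriv P (φ ξ)) (φ ξ) := hPC2.hasStrictDerivAt (by norm_num)
  have hφca : ContinuousAt φ ξ := hTW.cont.continuousAt (hopen.mem_nhds ⟨hξI, hξn⟩)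
  have hPinvd : HasStrictDerivAt (hPd.localInverse P (deriv P (φ ξ)) (φ ξ) hD)
      (deriv P (φ ξ))⁻¹ (P (φ ξ)) := hPd.to_localInverse hD
  have hlinv : ∀ᶠ y in 𝓝 (φ ξ), hPd.localInverse P (deriv P (φ ξ)) (φ ξ) hD (P y) = y :=
    (hPd.hasStrictFDerivAt_equiv hD).eventually_left_inverse
  have hev : ∀ᶠ x in 𝓝 ξ, hPd.localInverse P (deriv P (φ ξ)) (φ ξ) hD (F x) = φ x :=
    hφca.eventually hlinv
  have hFdiffξ : HasDerivAt F (G ξ) ξ := hFd ξ hξab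
  have hdiffφ : DifferentiableAt ℝ φ ξ := by
    have h1 : DifferentiableAt ℝ (fun x => hPd.localInverse P (deriv P (φ ξ)) (φ ξ) hD (F x)) ξ :=
      (hPinvd.hasDerivAt.differentiableAt).comp ξ hFdiffξ.differentiableAt
    exact h1.congr_of_eventuallyEq (Filter.EventuallyEq.symm hev)
  refine ⟨hdiffφ, ?_⟩
  intro hzero
  have hφd : HasDerivAt φ 0 ξ := by
    have := hdiffφ.hasDerivAt
    rwa [hzero] at this
  have hcomp : HasDerivAt F (deriv P (φ ξ) * 0) ξ := by
    rw [hF]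
    exact HasDerivAt.comp ξ hPd.hasDerivAt hφd
  have hGξ : G ξ = 0 := by
    have := hFdiffξ.unique hcomp
    rw [this, mul_zero]
  -- derivative of G at ξ
  set e : ℝ := -(g (φ ξ)) with he
  have hene : e ≠ 0 := by rw [he]; simpa using hg
  have hGd : HasDerivAt G e ξ := by
    have h1 : HasDerivAt (fun x => c * φ x + Q x) (c * 0 + q ξ) ξ :=
      (hφd.const_mul c).add (hQd ξ hξJ)
    have h2 : HasDerivAt (fun x => B - (c * φ x + Q x)) _ ξ := (hasDerivAt_const ξ B).sub h1
    rw [hG]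
    convert h2 using 1
    rw [he, hq]; simp
  -- continuity of deriv P near φ ξ, and monotone window
  obtain ⟨u, hu_nhds, hu⟩ := hPC2.contDiffOn le_rfl (by norm_num)
  obtain ⟨V, hVu, hVopen, hVmem⟩ := mem_nhds_iff.mp hu_nhds
  have hPV : ContDiffOn ℝ 2 P V := hu.mono hVu
  have hDcont : ContinuousOn (deriv P) V :=
    hPV.continuousOn_deriv_of_isOpen hVopen (by norm_num)
  have hDca : ContinuousAt (deriv P) (φ ξ) := hDcont.continuousAt (hVopen.mem_nhds hVmem)
  have hPContV : ContinuousOn P V := hPV.continuousOn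
  -- get a window W around φ ξ on which P is strictly monotone or strictly antitone
  have hwindow : ∃ r > 0, Metric.ball (φ ξ) r ⊆ V ∧
      (StrictMonoOn P (Metric.ball (φ ξ) r) ∨ StrictAntiOn P (Metric.ball (φ ξ) r)) := by
    rcases hD.lt_or_gt with hDneg | hDpos
    · have hevs : ∀ᶠ y in 𝓝 (φ ξ), deriv P y < 0 ∧ y ∈ V :=
        (hDca.eventually_lt continuousAt_const hDneg).and (hVopen.eventually_mem hVmem)
      obtain ⟨r, hrpos, hr⟩ := Metric.eventually_nhds_iff_ball.mp hevs
      refine ⟨r, hrpos, fun y hy => (hr y hy).2, Or.inr ?_⟩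
      apply strictAntiOn_of_deriv_neg (convex_ball _ _)
      · intro y hy
        exact ((hPV.continuousOn).continuousAt (hVopen.mem_nhds (hr y hy).2)).continuousWithinAt
      · intro y hy
        rw [Metric.isOpen_ball.interior_eq] at hy
        exact (hr y hy).1
    · have hevs : ∀ᶠ y in 𝓝 (φ ξ), 0 < deriv P y ∧ y ∈ V :=
        (continuousAt_const.eventually_lt hDca hDpos).and (hVopen.eventually_mem hVmem)
      obtain ⟨r, hrpos, hr⟩ := Metric.eventually_nhds_iff_ball.mp hevs
      refine ⟨r, hrpos, fun y hy => (hr y hy).2, Or.inl ?_⟩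
      apply strictMonoOn_of_deriv_pos (convex_ball _ _)
      · intro y hy
        exact ((hPV.continuousOn).continuousAt (hVopen.mem_nhds (hr y hy).2)).continuousWithinAt
      · intro y hy
        rw [Metric.isOpen_ball.interior_eq] at hy
        exact (hr y hy).1
  obtain ⟨r, hrpos, hrV, hPmon⟩ := hwindow
  -- window in ξ
  have hblW : Metric.ball (φ ξ) r ∈ 𝓝 (φ ξ) := Metric.ball_mem_nhds _ hrpos
  have hevM : ∀ᶠ x in 𝓝 ξ, φ x ∈ Metric.ball (φ ξ) r ∧ x ∈ Ioo a b :=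
    (hφca.eventually_mem hblW).and (isOpen_Ioo.eventually_mem hξab)
  obtain ⟨κ, hκpos, hκ⟩ := Metric.eventually_nhds_iff_ball.mp hevM
  set M : Set ℝ := Metric.ball ξ κ with hM
  have hMopen : IsOpen M := Metric.isOpen_ball
  have hMξ : ξ ∈ M := Metric.mem_ball_self hκpos
  have hMsub : M ⊆ Ioo a b := fun x hx => (hκ x hx).2
  have hMW : ∀ x ∈ M, φ x ∈ Metric.ball (φ ξ) r := fun x hx => (hκ x hx).1
  -- F is monotone or antitone on M
  have hFG : ∀ x ∈ M, HasDerivAt F (G x) x := fun x hx => hFd x (hMsub hx)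
  have hFmono : MonotoneOn F M ∨ AntitoneOn F M := by
    have hcase : ∀ x ∈ M, ∀ y ∈ M, φ x ≤ φ y →
        (StrictMonoOn P (Metric.ball (φ ξ) r) → F x ≤ F y) ∧
        (StrictAntiOn P (Metric.ball (φ ξ) r) → F y ≤ F x) := by
      intro x hx y hy hxy
      constructor <;> intro hP
      · rcases eq_or_lt_of_le hxy with hE | hL
        · rw [hF]; simp only [hE]; exact le_refl _
        · exact (hP (hMW x hx) (hMW y hy) hL).le
      · rcases eq_or_lt_of_le hxy with hE | hL
        · rw [hF]; simp only [hE]; exact le_refl _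
        · exact (hP (hMW x hx) (hMW y hy) hL).le
    rcases hmono with hm | hm
    · rcases hPmon with hP | hP
      · left; intro x hx y hy hxy
        exact (hcase x hx y hy (hm (hIooI (hMsub hx)) (hIooI (hMsub hy)) hxy)).1 hP
      · right; intro x hx y hy hxy
        exact (hcase x hx y hy (hm (hIooI (hMsub hx)) (hIooI (hMsub hy)) hxy)).2 hP
    · rcases hPmon with hP | hP
      · right; intro x hx y hy hxy
        exact (hcase y hy x hx (hm (hIooI (hMsub hx)) (hIooI (hMsub hy)) hxy)).1 hP
      · left; intro x hx y hy hxy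
        exact (hcase y hy x hx (hm (hIooI (hMsub hx)) (hIooI (hMsub hy)) hxy)).2 hP
  -- slope of G near ξ has the sign of e
  have hGslope : Tendsto (slope G ξ) (𝓝[≠] ξ) (𝓝 e) := hasDerivAt_iff_tendsto_slope.mp hGd
  have heps : ∀ᶠ x in 𝓝[≠] ξ, |slope G ξ x - e| < |e| / 2 := by
    have hball2 : Metric.ball e (|e|/2) ∈ 𝓝 e := Metric.ball_mem_nhds _ (by positivity)
    have := hGslope hball2
    filter_upwards [Filter.mem_map.mp this] with x hx
    rw [mem_preimage, Metric.mem_ball, Real.dist_eq] at hx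
    exact hx
  have hMev : ∀ᶠ x in 𝓝[≠] ξ, x ∈ M := nhdsWithin_le_nhds (hMopen.mem_nhds hMξ)
  -- a point on the right of ξ
  obtain ⟨x₂, hx₂s, hx₂M, hx₂gt⟩ :
      ∃ x, |slope G ξ x - e| < |e| / 2 ∧ x ∈ M ∧ ξ < x := by
    have h1 : ∀ᶠ x in 𝓝[>] ξ, |slope G ξ x - e| < |e| / 2 ∧ x ∈ M :=
      (heps.and hMev).filter_mono (nhdsWithin_mono _ (fun y hy => ne_of_gt hy))
    obtain ⟨x, hx, hx2⟩ := (h1.and self_mem_nhdsWithin).exists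
    exact ⟨x, hx.1, hx.2, hx2⟩
  obtain ⟨x₁, hx₁s, hx₁M, hx₁lt⟩ :
      ∃ x, |slope G ξ x - e| < |e| / 2 ∧ x ∈ M ∧ x < ξ := by
    have h1 : ∀ᶠ x in 𝓝[<] ξ, |slope G ξ x - e| < |e| / 2 ∧ x ∈ M :=
      (heps.and hMev).filter_mono (nhdsWithin_mono _ (fun y hy => ne_of_lt hy))
    obtain ⟨x, hx, hx2⟩ := (h1.and self_mem_nhdsWithin).exists
    exact ⟨x, hx.1, hx.2, hx2⟩
  -- values of G at these points
  have hslope_eval : ∀ x, x ≠ ξ → G x = slope G ξ x * (x - ξ) := by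
    intro x hxne
    rw [slope_def_field, hGξ, sub_zero, div_mul_cancel₀]
    exact sub_ne_zero.mpr hxne
  have hGx₂ : G x₂ = slope G ξ x₂ * (x₂ - ξ) := hslope_eval x₂ (ne_of_gt hx₂gt)
  have hGx₁ : G x₁ = slope G ξ x₁ * (x₁ - ξ) := hslope_eval x₁ (ne_of_lt hx₁lt)
  rw [abs_sub_lt_iff] at hx₂s hx₁s
  -- contradiction with monotonicity
  have habs := abs_pos.mpr hene
  rcases hFmono with hFm | hFm
  · have hnn : ∀ x ∈ M, 0 ≤ G x := fun x hx =>
      deriv_nonneg_of_monotoneOn hMopen hx hFm (hFG x hx)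
    rcases hene.lt_or_gt with heneg | hepos
    · have h2 : G x₂ < 0 := by
        have hs : slope G ξ x₂ < e + |e|/2 := by linarith [hx₂s.2]
        have : e + |e|/2 < 0 := by rw [abs_of_neg heneg]; linarith
        have hsneg : slope G ξ x₂ < 0 := lt_trans hs this
        rw [hGx₂]
        exact mul_neg_of_neg_of_pos hsneg (by linarith)
      linarith [hnn x₂ hx₂M]
    · have h2 : G x₁ < 0 := by
        have hs : e - |e|/2 < slope G ξ x₁ := by linarith [hx₁s.1]
        have : 0 < e - |e|/2 := by rw [abs_of_pos hepos]; linarith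
        have hspos : 0 < slope G ξ x₁ := lt_trans this hs
        rw [hGx₁]
        exact mul_neg_of_pos_of_neg hspos (by linarith)
      linarith [hnn x₁ hx₁M]
  · have hnp : ∀ x ∈ M, G x ≤ 0 := by
      intro x hx
      have hmono' : MonotoneOn (fun y => -F y) M := fun u hu v hv huv => by
        simp only [neg_le_neg_iff]
        exact hFm hu hv huv
      have hd' : HasDerivAt (fun y => -F y) (-(G x)) x := (hFG x hx).neg
      have := deriv_nonneg_of_monotoneOn hMopen hx hmono' hd'
      linarith
    rcases hene.lt_or_gt with heneg | hepos
    · have h2 : 0 < G x₁ := by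
        have hs : slope G ξ x₁ < e + |e|/2 := by linarith [hx₁s.2]
        have : e + |e|/2 < 0 := by rw [abs_of_neg heneg]; linarith
        have hsneg : slope G ξ x₁ < 0 := lt_trans hs this
        rw [hGx₁]
        exact mul_pos_of_neg_of_neg hsneg (by linarith)
      linarith [hnp x₁ hx₁M]
    · have h2 : 0 < G x₂ := by
        have hs : e - |e|/2 < slope G ξ x₂ := by linarith [hx₂s.1]
        have : 0 < e - |e|/2 := by rw [abs_of_pos hepos]; linarith
        have hspos : 0 < slope G ξ x₂ := lt_trans this hs
        rw [hGx₂]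
        exact mul_pos hspos (by linarith)
      linarith [hnp x₂ hx₂M]
end
end

section
/- Assume (R), (P), (g) and let σ ∈ (α, β). (1) If u_t = P(u)_{xx} + g(u) admits a regular semi-wavefront from 1 with speed c connecting 1 to σ, then c > 0. (2) If it admits a regular semi-wavefront to 0 with speed c connecting σ to 0, then c < 0. -/
open Set Filter MeasureTheory

noncomputable section

open scoped Convolution


/-- Convert a set integral to an interval integral when the integrand vanishes
outside `Icc l r ⊆ s`. -/
lemma setint_eq_intervalint {f : ℝ → ℝ} {s : Set ℝ} (hs : MeasurableSet s)
    {l r : ℝ} (hlr : l ≤ r) (hsub : Icc l r ⊆ s)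
    (hv : ∀ x ∉ Icc l r, f x = 0) :
    ∫ x in s, f x = ∫ x in l..r, f x := by
  have h1 : s.indicator f = (Icc l r).indicator f := by
    funext x
    by_cases hx : x ∈ Icc l r
    · rw [indicator_of_mem hx, indicator_of_mem (hsub hx)]
    · rw [indicator_of_notMem hx]
      by_cases hx2 : x ∈ s
      · rw [indicator_of_mem hx2]; exact hv x hx
      · rw [indicator_of_notMem hx2]
  rw [← integral_indicator hs, h1, integral_indicator measurableSet_Icc,
    intervalIntegral.integral_of_le hlr, ← integral_Icc_eq_integral_Ioc]

/-- A function vanishing outside a compact interval and integrable there is integrable. -/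
lemma integrable_of_vanishing {f : ℝ → ℝ} {l r : ℝ}
    (hv : ∀ x ∉ Icc l r, f x = 0) (hi : IntegrableOn f (Icc l r)) :
    Integrable f := by
  have h1 : f = (Icc l r).indicator f := by
    funext x
    by_cases hx : x ∈ Icc l r
    · rw [indicator_of_mem hx]
    · rw [indicator_of_notMem hx]; exact hv x hx
  rw [h1]
  exact (integrable_indicator_iff measurableSet_Icc).2 hi

/-- Find a compact interval inside an open order-connected set containing a
given compact set and point. -/
lemma exists_interval_subset {I : Set ℝ} (hI : IsOpen I) (hconn : I.OrdConnected)
    {C : Set ℝ} (hC : IsCompact C) (hCI : C ⊆ I) {ξ₀ : ℝ} (hξ₀ : ξ₀ ∈ I) :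
    ∃ l r : ℝ, l < r ∧ Icc l r ⊆ I ∧ C ⊆ Ioo l r ∧ ξ₀ ∈ Ioo l r := by
  set C' : Set ℝ := C ∪ {ξ₀} with hC'
  have hC'c : IsCompact C' := hC.union isCompact_singleton
  have hC'I : C' ⊆ I := union_subset hCI (by simpa using hξ₀)
  have hne : C'.Nonempty := ⟨ξ₀, by simp [hC']⟩
  have hbdd : BddBelow C' := hC'c.bddBelow
  have hbdd' : BddAbove C' := hC'c.bddAbove
  have hinf : sInf C' ∈ C' := hC'c.isClosed.csInf_mem hne hbdd
  have hsup : sSup C' ∈ C' := hC'c.isClosed.csSup_mem hne hbdd'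
  obtain ⟨δ₁, hδ₁, hball₁⟩ := Metric.isOpen_iff.1 hI _ (hC'I hinf)
  obtain ⟨δ₂, hδ₂, hball₂⟩ := Metric.isOpen_iff.1 hI _ (hC'I hsup)
  set δ := min δ₁ δ₂ / 2 with hδdef
  have hδ : 0 < δ := by positivity
  refine ⟨sInf C' - δ, sSup C' + δ, ?_, ?_, ?_, ?_⟩
  · have := csInf_le_csSup hne hbdd hbdd'; linarith
  · intro x hx
    have hl : sInf C' - δ ∈ I := by
      apply hball₁
      simp only [Metric.mem_ball, Real.dist_eq]
      rw [abs_of_nonpos (by linarith)]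
      have : δ ≤ δ₁ / 2 := by rw [hδdef]; gcongr; exact min_le_left _ _
      linarith
    have hr : sSup C' + δ ∈ I := by
      apply hball₂
      simp only [Metric.mem_ball, Real.dist_eq]
      rw [abs_of_nonneg (by linarith)]
      have : δ ≤ δ₂ / 2 := by rw [hδdef]; gcongr; exact min_le_right _ _
      linarith
    exact hconn.out hl hr hx
  · intro x hx
    have h1 := csInf_le hbdd (mem_union_left _ hx)
    have h2 := le_csSup hbdd' (mem_union_left _ hx)
    exact ⟨by linarith, by linarith⟩
  · have h1 := csInf_le hbdd (mem_union_right _ rfl)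
    have h2 := le_csSup hbdd' (mem_union_right _ rfl)
    exact ⟨by linarith, by linarith⟩



lemma deriv_comp_sub (F : ℝ → ℝ) (hF : Differentiable ℝ F) (z : ℝ) :
    deriv (fun t => F (z - t)) = fun t => -(deriv F (z - t)) := by
  funext t
  have h1 : HasDerivAt (fun t : ℝ => z - t) (-1) t := by
    simpa using (hasDerivAt_id t).const_sub z
  have h2 : HasDerivAt (fun t => F (z - t)) (deriv F (z - t) * (-1)) t :=
    (hF (z - t)).hasDerivAt.comp t h1
  rw [h2.deriv]; ring

lemma deriv2_comp_sub (F : ℝ → ℝ) (hF : ContDiff ℝ (⊤ : ℕ∞) F) (z : ℝ) :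
    deriv (deriv (fun t => F (z - t))) = fun t => deriv (deriv F) (z - t) := by
  have hF1 : Differentiable ℝ F := hF.differentiable (by norm_num)
  have hF' : ContDiff ℝ (⊤ : ℕ∞) (deriv F) := (contDiff_infty_iff_deriv.mp hF).2
  have hF'1 : Differentiable ℝ (deriv F) := hF'.differentiable (by norm_num)
  rw [deriv_comp_sub F hF1 z]
  funext t
  have : deriv (fun t => -(deriv F (z - t))) t = -(deriv (fun t => deriv F (z - t)) t) := by
    rw [deriv.fun_neg]
  rw [this, deriv_comp_sub (deriv F) hF'1 z]; ring

lemma lsmul_flip : (ContinuousLinearMap.lsmul ℝ ℝ).flip = ContinuousLinearMap.lsmul ℝ ℝ := by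
  ext a b
  simp [mul_comm]

/-- Pairing step: equal slopes for a continuous function with vanishing weak
second derivative on an open order-connected set. -/
lemma slope_eq_of_weak {I : Set ℝ} (hI : IsOpen I) (hconn : I.OrdConnected)
    {h : ℝ → ℝ} (hloc : LocallyIntegrable h volume) (hcont : ContinuousOn h I)
    (hz : ∀ ψ : ℝ → ℝ, ContDiff ℝ (⊤:ℕ∞) ψ → HasCompactSupport ψ → tsupport ψ ⊆ I →
      ∫ t, h t * deriv (deriv ψ) t = 0)
    {x y x' y' : ℝ} (hx : x ∈ I) (hy : y ∈ I) (hx' : x' ∈ I) (hy' : y' ∈ I)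
    (hxy : x < y) (hxy' : x' < y') :
    (h y - h x) * (y' - x') = (h y' - h x') * (y - x) := by
  set m : ℝ := min x x' with hm
  set M : ℝ := max y y' with hM
  have hmI : m ∈ I := by rcases min_cases x x' with ⟨h1, _⟩ | ⟨h1, _⟩ <;> rw [hm, h1] <;> assumption
  have hMI : M ∈ I := by rcases max_cases y y' with ⟨h1, _⟩ | ⟨h1, _⟩ <;> rw [hM, h1] <;> assumption
  have hmM : Icc m M ⊆ I := fun z hz => hconn.out hmI hMI hz
  obtain ⟨ε, hε, hthick⟩ := isCompact_Icc.exists_thickening_subset_open hI hmM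
  have hball : ∀ z ∈ Icc m M, Metric.closedBall z (ε / 2) ⊆ I := by
    intro z hzmem t ht
    apply hthick
    rw [Metric.mem_thickening_iff]
    exact ⟨z, hzmem, lt_of_le_of_lt (by simpa [Metric.mem_closedBall] using ht) (by linarith)⟩
  -- bumps
  set ρ : ℕ → ContDiffBump (0:ℝ) := fun n =>
    ⟨ε / 2 / (n + 1) / 2, ε / 2 / (n + 1), by positivity, by
      have : (0:ℝ) < ε / 2 / (n + 1) := by positivity
      linarith⟩ with hρ
  set κ : ℕ → ℝ → ℝ := fun n => (ρ n).normed volume with hκ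
  have hκc : ∀ n, ContDiff ℝ (⊤:ℕ∞) (κ n) := fun n => (ρ n).contDiff_normed
  have hκs : ∀ n, HasCompactSupport (κ n) := fun n => (ρ n).hasCompactSupport_normed
  have hκ' : ∀ n, ContDiff ℝ (⊤:ℕ∞) (deriv (κ n)) := fun n => (contDiff_infty_iff_deriv.mp (hκc n)).2
  have hκ's : ∀ n, HasCompactSupport (deriv (κ n)) := fun n => (hκs n).deriv
  have hκ'' : ∀ n, Continuous (deriv (deriv (κ n))) :=
    fun n => ((contDiff_infty_iff_deriv.mp (hκ' n)).2).continuous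
  have hκ''s : ∀ n, HasCompactSupport (deriv (deriv (κ n))) := fun n => (hκ's n).deriv
  set L : ℝ →L[ℝ] ℝ →L[ℝ] ℝ := ContinuousLinearMap.lsmul ℝ ℝ with hL
  set c0 : ℕ → ℝ → ℝ := fun n => convolution h (κ n) L volume with hc0
  set c1 : ℕ → ℝ → ℝ := fun n => convolution h (deriv (κ n)) L volume with hc1
  set c2 : ℕ → ℝ → ℝ := fun n => convolution h (deriv (deriv (κ n))) L volume with hc2
  have d0 : ∀ n z, HasDerivAt (c0 n) (c1 n z) z := fun n z =>
    HasCompactSupport.hasDerivAt_convolution_right L hloc (hκs n) ((hκc n).of_le (by norm_num)) z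
  have d1 : ∀ n z, HasDerivAt (c1 n) (c2 n z) z := fun n z =>
    HasCompactSupport.hasDerivAt_convolution_right L hloc (hκ's n) ((hκ' n).of_le (by norm_num)) z
  have c1cont : ∀ n, Continuous (c1 n) := fun n =>
    (hκ's n).continuous_convolution_right L hloc (hκ' n).continuous
  have c2cont : ∀ n, Continuous (c2 n) := fun n =>
    (hκ''s n).continuous_convolution_right L hloc (hκ'' n)
  -- second derivative of mollification vanishes on [m, M]
  have zero2 : ∀ n, ∀ z ∈ Icc m M, c2 n z = 0 := by
    intro n z hzmem
    set ψ : ℝ → ℝ := fun t => κ n (z - t) with hψ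
    have hψc : ContDiff ℝ (⊤:ℕ∞) ψ := (hκc n).comp (contDiff_const.sub contDiff_id)
    have hψsub : tsupport ψ ⊆ Metric.closedBall z (ε / 2) := by
      apply closure_minimal
      · intro t ht
        have h1 : z - t ∈ Function.support (κ n) := ht
        have h2 : z - t ∈ tsupport (κ n) := subset_closure h1
        rw [(ρ n).tsupport_normed_eq] at h2
        simp only [Metric.mem_closedBall, Real.dist_eq] at h2 ⊢
        rw [abs_sub_comm]
        have hn1 : ε / 2 / (↑n + 1) ≤ ε / 2 := by
          rw [div_le_iff₀ (by positivity)]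
          nlinarith [Nat.cast_nonneg (α := ℝ) n]
        have h3 : |z - t| ≤ ε / 2 / (↑n + 1) := by
          have := h2; rw [sub_zero] at this; exact this
        linarith [abs_nonneg (z-t), h3, hn1]
      · exact Metric.isClosed_closedBall
    have hψs : HasCompactSupport ψ :=
      HasCompactSupport.of_support_subset_isCompact (isCompact_closedBall z (ε/2))
        (subset_trans subset_closure hψsub)
    have hψI : tsupport ψ ⊆ I := hψsub.trans (hball z hzmem)
    have key := hz ψ hψc hψs hψI
    have e2 : deriv (deriv ψ) = fun t => deriv (deriv (κ n)) (z - t) := deriv2_comp_sub (κ n) (hκc n) z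
    rw [e2] at key
    have : c2 n z = ∫ t, h t * deriv (deriv (κ n)) (z - t) := by
      simp only [hc2, convolution_def, hL, ContinuousLinearMap.lsmul_apply, smul_eq_mul]
    rw [this, ← key]
  -- c1 is constant on [m, M]
  have const1 : ∀ n, ∀ z ∈ Icc m M, c1 n z = c1 n m := by
    intro n z hzmem
    have hmz : m ≤ z := hzmem.1
    have hsub : Icc m z ⊆ Icc m M := Icc_subset_Icc le_rfl hzmem.2
    have e1 : ∫ t in m..z, c2 n t = c1 n z - c1 n m := by
      apply intervalIntegral.integral_eq_sub_of_hasDerivAt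
      · intro t ht
        exact d1 n t
      · exact (c2cont n).intervalIntegrable m z
    have e2 : ∫ t in m..z, c2 n t = 0 := by
      rw [intervalIntegral.integral_congr (g := fun _ => (0:ℝ))]
      · simp
      · intro t ht
        rw [uIcc_of_le hmz] at ht
        exact zero2 n t (hsub ht)
    linarith [e1 ▸ e2.symm, e1, e2]
  -- slope identity for mollifications
  have slope : ∀ n, ∀ u v, u ∈ Icc m M → v ∈ Icc m M → u ≤ v →
      c0 n v - c0 n u = c1 n m * (v - u) := by
    intro n u v hu hv huv
    have e1 : ∫ t in u..v, c1 n t = c0 n v - c0 n u := by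
      apply intervalIntegral.integral_eq_sub_of_hasDerivAt
      · intro t ht; exact d0 n t
      · exact (c1cont n).intervalIntegrable u v
    have e2 : ∫ t in u..v, c1 n t = c1 n m * (v - u) := by
      rw [intervalIntegral.integral_congr (g := fun _ => c1 n m)]
      · simp [mul_comm]
      · intro t ht
        rw [uIcc_of_le huv] at ht
        exact const1 n t ⟨le_trans hu.1 ht.1, le_trans ht.2 hv.2⟩
    rw [← e1, e2]
  -- limits
  have hlim : ∀ z ∈ Icc m M, Tendsto (fun n => c0 n z) atTop (nhds (h z)) := by
    intro z hzmem
    have hzI : z ∈ I := hmM hzmem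
    have hca : ContinuousAt h z := hcont.continuousAt (hI.mem_nhds hzI)
    have hφ : Tendsto (fun n : ℕ => (ρ n).rOut) atTop (nhds 0) := by
      have h1 : (fun n : ℕ => (ρ n).rOut) = fun n : ℕ => (ε / 2) * (1 / (↑n + 1)) := by
        funext n; simp [hρ]; ring
      rw [h1]
      simpa using tendsto_one_div_add_atTop_nhds_zero_nat.const_mul (ε / 2)
    have hgm : ∀ᶠ (_ : ℕ) in atTop, AEStronglyMeasurable h (volume : Measure ℝ) :=
      Eventually.of_forall fun _ => hloc.aestronglyMeasurable
    have hcg : Tendsto (Function.uncurry fun (_ : ℕ) (t : ℝ) => h t) (atTop ×ˢ nhds z)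
        (nhds (h z)) := hca.tendsto.comp tendsto_snd
    have hk : Tendsto (fun _ : ℕ => z) atTop (nhds z) := tendsto_const_nhds
    have hmain := ContDiffBump.convolution_tendsto_right (φ := ρ) (μ := volume) hφ hgm hcg hk
    have hflip : (fun n => c0 n z) = fun n =>
        convolution ((ρ n).normed volume) h (ContinuousLinearMap.lsmul ℝ ℝ) volume z := by
      funext n
      rw [hc0, ← convolution_flip, lsmul_flip]
    rw [hflip]
    exact hmain
  -- combine
  have hxm : x ∈ Icc m M := ⟨min_le_left _ _, le_trans hxy.le (le_max_left _ _)⟩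
  have hym : y ∈ Icc m M := ⟨le_trans (min_le_left _ _) hxy.le, le_max_left _ _⟩
  have hxm' : x' ∈ Icc m M := ⟨min_le_right _ _, le_trans hxy'.le (le_max_right _ _)⟩
  have hym' : y' ∈ Icc m M := ⟨le_trans (min_le_right _ _) hxy'.le, le_max_right _ _⟩
  have hid : ∀ n, (c0 n y - c0 n x) * (y' - x') = (c0 n y' - c0 n x') * (y - x) := by
    intro n
    rw [slope n x y hxm hym hxy.le, slope n x' y' hxm' hym' hxy'.le]
    ring
  have t1 : Tendsto (fun n => (c0 n y - c0 n x) * (y' - x')) atTop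
      (nhds ((h y - h x) * (y' - x'))) :=
    (((hlim y hym).sub (hlim x hxm)).mul_const _)
  have t2 : Tendsto (fun n => (c0 n y' - c0 n x') * (y - x)) atTop
      (nhds ((h y' - h x') * (y - x))) :=
    (((hlim y' hym').sub (hlim x' hxm')).mul_const _)
  have : (fun n => (c0 n y - c0 n x) * (y' - x')) = fun n => (c0 n y' - c0 n x') * (y - x) :=
    funext hid
  rw [this] at t1
  exact tendsto_nhds_unique t1 t2

/-- A continuous function with vanishing weak second derivative on an open
order-connected set is affine there. -/
lemma affine_of_weak {I : Set ℝ} (hI : IsOpen I) (hconn : I.OrdConnected)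
    {h : ℝ → ℝ} (hloc : LocallyIntegrable h volume) (hcont : ContinuousOn h I)
    (hz : ∀ ψ : ℝ → ℝ, ContDiff ℝ (⊤:ℕ∞) ψ → HasCompactSupport ψ → tsupport ψ ⊆ I →
      ∫ t, h t * deriv (deriv ψ) t = 0) :
    ∃ A B : ℝ, ∀ ξ ∈ I, h ξ = A + B * ξ := by
  rcases I.eq_empty_or_nonempty with hIe | ⟨x0, hx0⟩
  · exact ⟨0, 0, fun ξ hξ => absurd (hIe ▸ hξ) (notMem_empty ξ)⟩
  obtain ⟨r, hr, hball⟩ := Metric.isOpen_iff.1 hI x0 hx0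
  set y0 := x0 + r / 2 with hy0
  have hy0I : y0 ∈ I := by
    apply hball
    simp only [Metric.mem_ball, Real.dist_eq, hy0]
    rw [show x0 + r / 2 - x0 = r / 2 by ring, abs_of_nonneg (by linarith : (0:ℝ) ≤ r/2)]
    linarith
  have hx0y0 : x0 < y0 := by rw [hy0]; linarith
  have hd0 : y0 - x0 ≠ 0 := by rw [hy0]; intro hc; simp at hc; linarith
  set B := (h y0 - h x0) / (y0 - x0) with hB
  have hBd : B * (y0 - x0) = h y0 - h x0 := div_mul_cancel₀ _ hd0
  refine ⟨h x0 - B * x0, B, fun ξ hξ => ?_⟩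
  have key : h ξ - h x0 = B * (ξ - x0) := by
    rcases lt_trichotomy ξ x0 with hlt | heq | hgt
    · have := slope_eq_of_weak hI hconn hloc hcont hz hξ hx0 hx0 hy0I hlt hx0y0
      have hd1 : x0 - ξ ≠ 0 := by intro hc; linarith
      field_simp at this ⊢
      nlinarith [this, hBd]
    · rw [heq]; ring
    · have := slope_eq_of_weak hI hconn hloc hcont hz hx0 hξ hx0 hy0I hgt hx0y0
      have hd1 : ξ - x0 ≠ 0 := by intro hc; linarith
      nlinarith [this, hBd]
  linarith [key]

lemma integrableOn_Icc_of_bounded {f : ℝ → ℝ} {M l r : ℝ}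
    (hm : AEStronglyMeasurable f (volume : Measure ℝ)) (hb : ∀ t, |f t| ≤ M) :
    IntegrableOn f (Icc l r) := by
  apply Measure.integrableOn_of_bounded (M := M)
  · exact ((measure_Icc_lt_top).ne)
  · exact hm
  · exact Eventually.of_forall fun t => by simpa [Real.norm_eq_abs] using hb t

lemma locallyIntegrable_of_bounded {f : ℝ → ℝ} {M : ℝ}
    (hm : AEStronglyMeasurable f (volume : Measure ℝ)) (hb : ∀ t, |f t| ≤ M) :
    LocallyIntegrable f (volume : Measure ℝ) := by
  rw [locallyIntegrable_iff]
  intro K hK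
  apply Measure.integrableOn_of_bounded (M := M) hK.measure_lt_top.ne hm
  exact Eventually.of_forall fun t => by simpa [Real.norm_eq_abs] using hb t

lemma intervalIntegrable_of_bounded {f : ℝ → ℝ} {M : ℝ}
    (hm : AEStronglyMeasurable f (volume : Measure ℝ)) (hb : ∀ t, |f t| ≤ M)
    (u v : ℝ) : IntervalIntegrable f volume u v := by
  constructor <;>
  · apply Measure.integrableOn_of_bounded (M := M) measure_Ioc_lt_top.ne hm
    exact Eventually.of_forall fun t => by simpa [Real.norm_eq_abs] using hb t


/-- From the weak formulation, the composite `P ∘ φ` is differentiable with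
derivative `B - (c φ + ∫ g(φ))`. -/
lemma key_regularity {P g : ℝ → ℝ} {I : Set ℝ} {c : ℝ} {φ : ℝ → ℝ}
    (hI : IsOpen I) (hconn : I.OrdConnected)
    (hmap : ∀ ξ ∈ I, φ ξ ∈ Icc (0:ℝ) 1)
    (hweak : ∀ ψ : ℝ → ℝ, IsTestFun I ψ →
      ∫ ξ in I, P (φ ξ) * iteratedDeriv 2 ψ ξ =
        c * (∫ ξ in I, φ ξ * deriv ψ ξ) - ∫ ξ in I, g (φ ξ) * ψ ξ)
    (hφc : ContinuousOn φ I)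
    (hPc : ContinuousOn P (Icc 0 1)) (hgc : ContinuousOn g (Icc 0 1))
    {ξ₀ : ℝ} (hξ₀ : ξ₀ ∈ I) :
    ∃ B : ℝ, ∀ ξ ∈ I, HasDerivAt (fun t => P (φ t))
      (B - (c * φ ξ + ∫ s in ξ₀..ξ, g (φ s))) ξ := by
  have hIm : MeasurableSet I := hI.measurableSet
  have hmap' : MapsTo φ I (Icc 0 1) := fun ξ hξ => hmap ξ hξ
  have cgφ : ContinuousOn (fun t => g (φ t)) I := hgc.comp hφc hmap'
  have cPφ : ContinuousOn (fun t => P (φ t)) I := hPc.comp hφc hmap'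
  obtain ⟨Mg, hMg⟩ := isCompact_Icc.exists_bound_of_continuousOn hgc
  obtain ⟨MP, hMP⟩ := isCompact_Icc.exists_bound_of_continuousOn hPc
  -- the indicator of g ∘ φ
  set q : ℝ → ℝ := I.indicator (fun t => g (φ t)) with hq
  have qm : AEStronglyMeasurable q (volume : Measure ℝ) :=
    (aestronglyMeasurable_indicator_iff hIm).2 (cgφ.aestronglyMeasurable hIm)
  have qb : ∀ t, |q t| ≤ max Mg 0 := by
    intro t
    rw [hq]
    by_cases ht : t ∈ I
    · rw [indicator_of_mem ht]
      exact le_trans (by simpa [Real.norm_eq_abs] using hMg (φ t) (hmap t ht)) (le_max_left _ _)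
    · rw [indicator_of_notMem ht]; simp
  have qii : ∀ u v : ℝ, IntervalIntegrable q volume u v :=
    intervalIntegrable_of_bounded qm qb
  have qC : ContinuousOn q I := cgφ.congr fun t ht => indicator_of_mem ht _
  have qeq : ∀ t ∈ I, q t = g (φ t) := fun t ht => indicator_of_mem ht _
  set G : ℝ → ℝ := fun ξ => ∫ s in ξ₀..ξ, q s with hG
  have Gcont : Continuous G := intervalIntegral.continuous_primitive qii ξ₀
  have Gderiv : ∀ ξ ∈ I, HasDerivAt G (g (φ ξ)) ξ := by
    intro ξ hξ
    have h1 : HasDerivAt G (q ξ) ξ :=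
      intervalIntegral.integral_hasDerivAt_right (qii ξ₀ ξ)
        (qC.stronglyMeasurableAtFilter hI ξ hξ)
        (qC.continuousAt (hI.mem_nhds hξ))
    rwa [qeq ξ hξ] at h1
  -- the indicator of φ
  set φi : ℝ → ℝ := I.indicator φ with hφi
  have φim : AEStronglyMeasurable φi (volume : Measure ℝ) :=
    (aestronglyMeasurable_indicator_iff hIm).2 (hφc.aestronglyMeasurable hIm)
  have φib : ∀ t, |φi t| ≤ 1 := by
    intro t
    rw [hφi]
    by_cases ht : t ∈ I
    · rw [indicator_of_mem ht]
      have := hmap t ht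
      rw [abs_le]; constructor <;> [linarith [this.1]; linarith [this.2]]
    · rw [indicator_of_notMem ht]; simp
  have φiC : ContinuousOn φi I := hφc.congr fun t ht => indicator_of_mem ht _
  set K : ℝ → ℝ := fun t => c * φi t + G t with hK
  have Kii : ∀ u v : ℝ, IntervalIntegrable K volume u v := by
    intro u v
    exact ((intervalIntegrable_of_bounded φim φib u v).const_mul c).add
      (Gcont.intervalIntegrable u v)
  have KC : ContinuousOn K I := ((continuousOn_const.mul φiC).add Gcont.continuousOn)
  set W : ℝ → ℝ := fun ξ => ∫ s in ξ₀..ξ, K s with hW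
  have Wcont : Continuous W := intervalIntegral.continuous_primitive Kii ξ₀
  have Wderiv : ∀ ξ ∈ I, HasDerivAt W (c * φ ξ + G ξ) ξ := by
    intro ξ hξ
    have h1 : HasDerivAt W (K ξ) ξ :=
      intervalIntegral.integral_hasDerivAt_right (Kii ξ₀ ξ)
        (KC.stronglyMeasurableAtFilter hI ξ hξ)
        (KC.continuousAt (hI.mem_nhds hξ))
    have : K ξ = c * φ ξ + G ξ := by rw [hK]; simp only [hφi, indicator_of_mem hξ]
    rwa [this] at h1
  set h : ℝ → ℝ := fun t => I.indicator (fun s => P (φ s)) t + W t with hh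
  have Pim : AEStronglyMeasurable (I.indicator (fun s => P (φ s))) (volume : Measure ℝ) :=
    (aestronglyMeasurable_indicator_iff hIm).2 (cPφ.aestronglyMeasurable hIm)
  have Pib : ∀ t, |I.indicator (fun s => P (φ s)) t| ≤ max MP 0 := by
    intro t
    by_cases ht : t ∈ I
    · rw [indicator_of_mem ht]
      exact le_trans (by simpa [Real.norm_eq_abs] using hMP (φ t) (hmap t ht)) (le_max_left _ _)
    · rw [indicator_of_notMem ht]; simp
  have hloc : LocallyIntegrable h (volume : Measure ℝ) :=
    (locallyIntegrable_of_bounded Pim Pib).add Wcont.locallyIntegrable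
  have hcont : ContinuousOn h I := by
    apply ContinuousOn.add _ Wcont.continuousOn
    exact cPφ.congr fun t ht => indicator_of_mem ht _
  -- weak second derivative of h vanishes
  have claimA : ∀ ψ : ℝ → ℝ, ContDiff ℝ (⊤:ℕ∞) ψ → HasCompactSupport ψ → tsupport ψ ⊆ I →
      ∫ t, h t * deriv (deriv ψ) t = 0 := by
    intro ψ hψc hψs hψI
    obtain ⟨l, r, hlr, hIcc, hsupp, hξ₀'⟩ := exists_interval_subset hI hconn hψs hψI hξ₀
    have hψ1 : Differentiable ℝ ψ := hψc.differentiable (by norm_num)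
    have hψ'c : ContDiff ℝ (⊤:ℕ∞) (deriv ψ) := (contDiff_infty_iff_deriv.mp hψc).2
    have hψ'1 : Differentiable ℝ (deriv ψ) := hψ'c.differentiable (by norm_num)
    have hψ''cont : Continuous (deriv (deriv ψ)) := (contDiff_infty_iff_deriv.mp hψ'c).2.continuous
    have hψ'cont : Continuous (deriv ψ) := hψ'1.continuous
    have hψcont : Continuous ψ := hψ1.continuous
    have hts' : tsupport (deriv ψ) ⊆ tsupport ψ := by
      apply closure_minimal _ (isClosed_tsupport ψ)
      exact support_deriv_subset
    have hts'' : tsupport (deriv (deriv ψ)) ⊆ tsupport ψ := by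
      apply closure_minimal _ (isClosed_tsupport ψ)
      exact support_deriv_subset.trans hts'
    have hv0 : ∀ x ∉ Icc l r, ψ x = 0 := by
      intro x hx
      apply image_eq_zero_of_notMem_tsupport
      intro hc; exact hx (Ioo_subset_Icc_self (hsupp hc))
    have hv1 : ∀ x ∉ Icc l r, deriv ψ x = 0 := by
      intro x hx
      apply image_eq_zero_of_notMem_tsupport
      intro hc; exact hx (Ioo_subset_Icc_self (hsupp (hts' hc)))
    have hv2 : ∀ x ∉ Icc l r, deriv (deriv ψ) x = 0 := by
      intro x hx
      apply image_eq_zero_of_notMem_tsupport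
      intro hc; exact hx (Ioo_subset_Icc_self (hsupp (hts'' hc)))
    have hψl : ψ l = 0 := image_eq_zero_of_notMem_tsupport (fun hc => lt_irrefl l (hsupp hc).1)
    have hψr : ψ r = 0 := image_eq_zero_of_notMem_tsupport (fun hc => lt_irrefl r (hsupp hc).2)
    have hψ'l : deriv ψ l = 0 :=
      image_eq_zero_of_notMem_tsupport (fun hc => lt_irrefl l (hsupp (hts' hc)).1)
    have hψ'r : deriv ψ r = 0 :=
      image_eq_zero_of_notMem_tsupport (fun hc => lt_irrefl r (hsupp (hts' hc)).2)
    have huIcc : uIcc l r = Icc l r := uIcc_of_le hlr.le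
    obtain ⟨Cψ, hCψ⟩ := (hψs.deriv.deriv).exists_bound_of_continuous hψ''cont
    have hCψ0 : 0 ≤ Cψ := le_trans (norm_nonneg _) (hCψ 0)
    have hsplit : ∀ t, h t * deriv (deriv ψ) t =
        I.indicator (fun s => P (φ s) * deriv (deriv ψ) s) t + W t * deriv (deriv ψ) t := by
      intro t
      simp only [hh]
      by_cases ht : t ∈ I
      · rw [indicator_of_mem ht, indicator_of_mem ht]; ring
      · rw [indicator_of_notMem ht, indicator_of_notMem ht]; ring
    have hindid : ∀ t, I.indicator (fun s => P (φ s) * deriv (deriv ψ) s) t =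
        I.indicator (fun s => P (φ s)) t * deriv (deriv ψ) t := by
      intro t
      by_cases ht : t ∈ I
      · rw [indicator_of_mem ht, indicator_of_mem ht]
      · rw [indicator_of_notMem ht, indicator_of_notMem ht, zero_mul]
    have hint1 : Integrable (I.indicator (fun s => P (φ s) * deriv (deriv ψ) s))
        (volume : Measure ℝ) := by
      apply integrable_of_vanishing (l := l) (r := r)
      · intro x hx
        rw [hindid, hv2 x hx, mul_zero]
      · apply integrableOn_Icc_of_bounded (M := max MP 0 * Cψ)
        · exact (aestronglyMeasurable_indicator_iff hIm).2
            ((cPφ.mul hψ''cont.continuousOn).aestronglyMeasurable hIm)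
        · intro t
          rw [hindid, abs_mul]
          exact mul_le_mul (Pib t) (by simpa [Real.norm_eq_abs] using hCψ t) (abs_nonneg _)
            (le_max_right MP 0)
    have hint2 : Integrable (fun t => W t * deriv (deriv ψ) t) (volume : Measure ℝ) := by
      apply integrable_of_vanishing (l := l) (r := r)
      · intro x hx; rw [hv2 x hx, mul_zero]
      · exact (Wcont.mul hψ''cont).continuousOn.integrableOn_compact isCompact_Icc
    have hE2 : ∫ t in I, φ t * deriv ψ t = ∫ t in l..r, φ t * deriv ψ t := by
      apply setint_eq_intervalint hIm hlr.le hIcc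
      intro x hx; rw [hv1 x hx, mul_zero]
    have hE3 : ∫ t in I, g (φ t) * ψ t = ∫ t in l..r, g (φ t) * ψ t := by
      apply setint_eq_intervalint hIm hlr.le hIcc
      intro x hx; rw [hv0 x hx, mul_zero]
    have hE4 : ∫ t, W t * deriv (deriv ψ) t = ∫ t in l..r, W t * deriv (deriv ψ) t := by
      rw [← setIntegral_univ]
      apply setint_eq_intervalint MeasurableSet.univ hlr.le (subset_univ _)
      intro x hx; rw [hv2 x hx, mul_zero]
    have hweak' := hweak ψ ⟨hψc, hψs, hψI⟩
    have hiter : iteratedDeriv 2 ψ = deriv (deriv ψ) := by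
      rw [iteratedDeriv_succ, iteratedDeriv_one]
    rw [hiter] at hweak'
    have hparts1 : ∫ t in l..r, W t * deriv (deriv ψ) t = - ∫ t in l..r, K t * deriv ψ t := by
      have hp := intervalIntegral.integral_mul_deriv_eq_deriv_mul
        (u := W) (u' := K) (v := deriv ψ) (v' := deriv (deriv ψ))
        (fun x hx => by
          have hxI : x ∈ I := hIcc (huIcc ▸ hx)
          have h1 := Wderiv x hxI
          have h2 : K x = c * φ x + G x := by
            rw [hK]; simp only [hφi, indicator_of_mem hxI]
          rw [h2]; exact h1)
        (fun x _ => hψ'1.differentiableAt.hasDerivAt)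
        (Kii l r) (hψ''cont.intervalIntegrable l r)
      rw [hp, hψ'l, hψ'r]
      ring
    have hparts2 : ∫ t in l..r, G t * deriv ψ t = - ∫ t in l..r, g (φ t) * ψ t := by
      have hp := intervalIntegral.integral_mul_deriv_eq_deriv_mul
        (u := G) (u' := fun t => g (φ t)) (v := ψ) (v' := deriv ψ)
        (fun x hx => Gderiv x (hIcc (huIcc ▸ hx)))
        (fun x _ => hψ1.differentiableAt.hasDerivAt)
        ((show ContinuousOn (fun t => g (φ t)) (uIcc l r) by rw [huIcc]; exact cgφ.mono hIcc).intervalIntegrable)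
        (hψ'cont.intervalIntegrable l r)
      rw [hp, hψl, hψr]
      ring
    have hKsplit : ∫ t in l..r, K t * deriv ψ t =
        c * (∫ t in l..r, φ t * deriv ψ t) + ∫ t in l..r, G t * deriv ψ t := by
      have h1 : ∫ t in l..r, K t * deriv ψ t =
          ∫ t in l..r, (c * (φ t * deriv ψ t) + G t * deriv ψ t) := by
        apply intervalIntegral.integral_congr
        intro x hx
        have hxI : x ∈ I := hIcc (huIcc ▸ hx)
        rw [hK]; simp only [hφi, indicator_of_mem hxI]; ring
      rw [h1, intervalIntegral.integral_add, intervalIntegral.integral_const_mul]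
      · exact ((show ContinuousOn (fun x => φ x * deriv ψ x) (uIcc l r) by
          rw [huIcc]; exact (hφc.mono hIcc).mul hψ'cont.continuousOn).intervalIntegrable).const_mul c
      · exact (Gcont.mul hψ'cont).intervalIntegrable l r
    calc ∫ t, h t * deriv (deriv ψ) t
        = ∫ t, (I.indicator (fun s => P (φ s) * deriv (deriv ψ) s) t
            + W t * deriv (deriv ψ) t) := by
          congr 1; funext t; exact hsplit t
      _ = (∫ t in I, P (φ t) * deriv (deriv ψ) t) + ∫ t, W t * deriv (deriv ψ) t := by
          rw [integral_add hint1 hint2, integral_indicator hIm]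
      _ = (c * (∫ t in l..r, φ t * deriv ψ t) - ∫ t in l..r, g (φ t) * ψ t)
            + (- ∫ t in l..r, K t * deriv ψ t) := by
          rw [hweak', hE2, hE3, hE4, hparts1]
      _ = 0 := by
          rw [hKsplit, hparts2]; ring
  obtain ⟨A, B, hAB⟩ := affine_of_weak hI hconn hloc hcont claimA
  refine ⟨B, fun ξ hξ => ?_⟩
  have heq : ∀ t ∈ I, P (φ t) = A + B * t - W t := by
    intro t ht
    have h1 := hAB t ht
    simp only [hh, indicator_of_mem ht] at h1
    linarith
  have hWd := Wderiv ξ hξ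
  have hder : HasDerivAt (fun t => A + B * t - W t) (B - (c * φ ξ + G ξ)) ξ := by
    have h1 : HasDerivAt (fun t => A + B * t) B ξ := by
      simpa using ((hasDerivAt_id ξ).const_mul B).const_add A
    exact h1.sub hWd
  have hfinal : HasDerivAt (fun t => P (φ t)) (B - (c * φ ξ + G ξ)) ξ := by
    apply hder.congr_of_eventuallyEq
    filter_upwards [hI.mem_nhds hξ] with t ht
    exact heq t ht
  have hGeq : G ξ = ∫ s in ξ₀..ξ, g (φ s) := by
    rw [hG]
    apply intervalIntegral.integral_congr
    intro x hx
    exact qeq x (hconn.uIcc_subset hξ₀ hξ hx)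
  rwa [hGeq] at hfinal

lemma deriv_nonneg_right {f : ℝ → ℝ} {d x b : ℝ} (hxb : x < b)
    (hf : HasDerivAt f d x) (hmono : ∀ y, x < y → y < b → f x ≤ f y) : 0 ≤ d := by
  have h1 : Tendsto (slope f x) (nhdsWithin x (Ioi x)) (nhds d) :=
    (hasDerivAt_iff_tendsto_slope.mp hf).mono_left
      (nhdsWithin_mono x fun y hy => ne_of_gt hy)
  apply ge_of_tendsto h1
  filter_upwards [Ioo_mem_nhdsGT_of_mem ⟨le_refl x, hxb⟩] with y hy
  rw [slope_def_field]
  exact div_nonneg (by linarith [hmono y hy.1 hy.2]) (by linarith [hy.1])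

lemma deriv_nonpos_right {f : ℝ → ℝ} {d x b : ℝ} (hxb : x < b)
    (hf : HasDerivAt f d x) (hmono : ∀ y, x < y → y < b → f y ≤ f x) : d ≤ 0 := by
  have h1 : Tendsto (slope f x) (nhdsWithin x (Ioi x)) (nhds d) :=
    (hasDerivAt_iff_tendsto_slope.mp hf).mono_left
      (nhdsWithin_mono x fun y hy => ne_of_gt hy)
  apply le_of_tendsto h1
  filter_upwards [Ioo_mem_nhdsGT_of_mem ⟨le_refl x, hxb⟩] with y hy
  rw [slope_def_field]
  exact div_nonpos_of_nonpos_of_nonneg (by linarith [hmono y hy.1 hy.2]) (by linarith [hy.1])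

lemma deriv_nonneg_left {f : ℝ → ℝ} {d x b : ℝ} (hbx : b < x)
    (hf : HasDerivAt f d x) (hmono : ∀ y, b < y → y < x → f y ≤ f x) : 0 ≤ d := by
  have h1 : Tendsto (slope f x) (nhdsWithin x (Iio x)) (nhds d) :=
    (hasDerivAt_iff_tendsto_slope.mp hf).mono_left
      (nhdsWithin_mono x fun y hy => ne_of_lt hy)
  apply ge_of_tendsto h1
  filter_upwards [Ioo_mem_nhdsLT_of_mem ⟨hbx, le_refl x⟩] with y hy
  rw [slope_def_field]
  rw [div_nonneg_iff]
  right
  constructor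
  · linarith [hmono y hy.1 hy.2]
  · linarith [hy.2]

lemma deriv_nonpos_left {f : ℝ → ℝ} {d x b : ℝ} (hbx : b < x)
    (hf : HasDerivAt f d x) (hmono : ∀ y, b < y → y < x → f x ≤ f y) : d ≤ 0 := by
  have h1 : Tendsto (slope f x) (nhdsWithin x (Iio x)) (nhds d) :=
    (hasDerivAt_iff_tendsto_slope.mp hf).mono_left
      (nhdsWithin_mono x fun y hy => ne_of_lt hy)
  apply le_of_tendsto h1
  filter_upwards [Ioo_mem_nhdsLT_of_mem ⟨hbx, le_refl x⟩] with y hy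
  rw [slope_def_field]
  rw [div_nonpos_iff]
  left
  constructor
  · linarith [hmono y hy.1 hy.2]
  · linarith [hy.2]

/-- Core contradiction for part 1: a decreasing profile from above `β` down to
`σ ∈ (α,β)` with nonpositive speed is impossible. -/
lemma part1_core {P g φ : ℝ → ℝ} {I : Set ℝ} {α β γ σ c B ξ₀ : ℝ}
    (hI : IsOpen I) (hconn : I.OrdConnected)
    (h0α : 0 < α) (hαγ : α < γ) (hγβ : γ < β) (hβ1 : β < 1)
    (hασ : α < σ) (hσβ : σ < β)
    (hPanti : StrictAntiOn P (Icc α β)) (hPmono : StrictMonoOn P (Icc β 1))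
    (hgc : ContinuousOn g (Icc 0 1)) (hgpos : ∀ u, γ < u → u < 1 → 0 < g u)
    (hgβ : 0 < g β)
    (hφc : ContinuousOn φ I) (hanti : AntitoneOn φ I)
    (hlo : ∀ ξ ∈ I, σ ≤ φ ξ) (hhi : ∀ ξ ∈ I, φ ξ ≤ 1)
    (hbig : ∃ b ∈ I, β < φ b) (hsmall : ∀ v, σ < v → ∃ b ∈ I, φ b < v)
    (hξ₀ : ξ₀ ∈ I)
    (hd : ∀ ξ ∈ I, HasDerivAt (fun t => P (φ t))
      (B - (c * φ ξ + ∫ s in ξ₀..ξ, g (φ s))) ξ)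
    (hc : c ≤ 0) : False := by
  set d : ℝ → ℝ := fun ξ => B - (c * φ ξ + ∫ s in ξ₀..ξ, g (φ s)) with hdd
  have hgφc : ContinuousOn (fun t => g (φ t)) I := by
    apply hgc.comp hφc
    intro t ht
    exact ⟨by linarith [hlo t ht], hhi t ht⟩
  have hgφii : ∀ u v, u ∈ I → v ∈ I → IntervalIntegrable (fun s => g (φ s)) volume u v := by
    intro u v hu hv
    exact (hgφc.mono (hconn.uIcc_subset hu hv)).intervalIntegrable
  -- difference formula for d
  have hdiff : ∀ u v, u ∈ I → v ∈ I →
      d v - d u = - c * (φ v - φ u) - ∫ s in u..v, g (φ s) := by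
    intro u v hu hv
    have hsplit : (∫ s in ξ₀..u, g (φ s)) + ∫ s in u..v, g (φ s) = ∫ s in ξ₀..v, g (φ s) :=
      intervalIntegral.integral_add_adjacent_intervals (hgφii ξ₀ u hξ₀ hu) (hgφii u v hu hv)
    simp only [hdd]
    linarith [hsplit]
  -- the set where φ = β
  set S : Set ℝ := {ξ ∈ I | φ ξ = β} with hS
  obtain ⟨s₀, hs₀I, hs₀⟩ := hbig
  obtain ⟨b₂, hb₂I, hb₂⟩ := hsmall ((σ + β) / 2) (by linarith)
  -- bounds for S within I
  have hSub : ∀ ξ ∈ S, ξ < b₂ := by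
    rintro ξ ⟨hξI, hξβ⟩
    by_contra hle
    push_neg at hle
    have := hanti hb₂I hξI hle
    rw [hξβ] at this
    linarith
  have hSlb : ∀ ξ ∈ S, s₀ < ξ := by
    rintro ξ ⟨hξI, hξβ⟩
    by_contra hle
    push_neg at hle
    have := hanti hξI hs₀I hle
    rw [hξβ] at this
    linarith
  -- β is attained
  have hs₀b₂ : s₀ ≤ b₂ := by
    by_contra hgt
    push_neg at hgt
    have := hanti hb₂I hs₀I hgt.le
    linarith
  have hIccI : Icc s₀ b₂ ⊆ I := fun z hz => hconn.out hs₀I hb₂I hz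
  have hmem : β ∈ Icc (φ b₂) (φ s₀) := ⟨by linarith, by linarith⟩
  obtain ⟨sβ, hsβmem, hsβ⟩ := intermediate_value_Icc' hs₀b₂ (hφc.mono hIccI) hmem
  have hSne : S.Nonempty := ⟨sβ, hIccI hsβmem, hsβ⟩
  -- S is closed
  have hSclosed : IsClosed S := by
    have hSeq : S = Icc s₀ b₂ ∩ φ ⁻¹' {β} := by
      ext ξ
      constructor
      · intro hξ
        exact ⟨⟨(hSlb ξ hξ).le, (hSub ξ hξ).le⟩, hξ.2⟩
      · rintro ⟨hξmem, hξβ⟩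
        exact ⟨hIccI hξmem, hξβ⟩
    rw [hSeq]
    exact (hφc.mono hIccI).preimage_isClosed_of_isClosed isClosed_Icc isClosed_singleton
  have hSbddA : BddAbove S := ⟨b₂, fun ξ hξ => (hSub ξ hξ).le⟩
  have hSbddB : BddBelow S := ⟨s₀, fun ξ hξ => (hSlb ξ hξ).le⟩
  set q : ℝ := sSup S with hq
  set p : ℝ := sInf S with hp
  have hqS : q ∈ S := hSclosed.csSup_mem hSne hSbddA
  have hpS : p ∈ S := hSclosed.csInf_mem hSne hSbddB
  have hqI : q ∈ I := hqS.1
  have hpI : p ∈ I := hpS.1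
  have hφq : φ q = β := hqS.2
  have hφp : φ p = β := hpS.2
  have hpq : p ≤ q := csInf_le_csSup hSne hSbddB hSbddA
  -- monotonicity of P∘φ to the right of q
  have hwmono : ∀ ξ₁ ξ₂, ξ₁ ∈ I → ξ₂ ∈ I → q ≤ ξ₁ → ξ₁ ≤ ξ₂ → P (φ ξ₁) ≤ P (φ ξ₂) := by
    intro ξ₁ ξ₂ h1I h2I hq1 h12
    have h1 : φ ξ₁ ≤ β := hφq ▸ hanti hqI h1I hq1
    have h2 : φ ξ₂ ≤ φ ξ₁ := hanti h1I h2I h12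
    have h1m : φ ξ₁ ∈ Icc α β := ⟨by linarith [hlo ξ₁ h1I], h1⟩
    have h2m : φ ξ₂ ∈ Icc α β := ⟨by linarith [hlo ξ₂ h2I], by linarith⟩
    rcases eq_or_lt_of_le h2 with heq | hlt
    · rw [heq]
    · exact (hPanti h2m h1m hlt).le
  -- monotonicity of P∘φ to the left of p
  have hwmono2 : ∀ ξ₁ ξ₂, ξ₁ ∈ I → ξ₂ ∈ I → ξ₁ ≤ ξ₂ → ξ₂ ≤ p → P (φ ξ₂) ≤ P (φ ξ₁) := by
    intro ξ₁ ξ₂ h1I h2I h12 h2p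
    have h1 : β ≤ φ ξ₂ := hφp ▸ hanti h2I hpI h2p
    have h2 : φ ξ₂ ≤ φ ξ₁ := hanti h1I h2I h12
    have h2m : φ ξ₂ ∈ Icc β 1 := ⟨h1, hhi ξ₂ h2I⟩
    have h1m : φ ξ₁ ∈ Icc β 1 := ⟨by linarith, hhi ξ₁ h1I⟩
    rcases eq_or_lt_of_le h2 with heq | hlt
    · rw [heq]
    · exact (hPmono h2m h1m hlt).le
  -- d q ≥ 0
  obtain ⟨δq, hδq, hballq⟩ := Metric.isOpen_iff.1 hI q hqI
  have hdq : 0 ≤ d q := by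
    apply deriv_nonneg_right (b := q + δq / 2) (by linarith) (hd q hqI)
    intro y hy1 hy2
    have hyI : y ∈ I := hballq (by
      simp only [Metric.mem_ball, Real.dist_eq]
      rw [abs_of_nonneg (by linarith)]
      linarith)
    exact hwmono q y hqI hyI le_rfl hy1.le
  -- d p ≤ 0
  obtain ⟨δp, hδp, hballp⟩ := Metric.isOpen_iff.1 hI p hpI
  have hdp : d p ≤ 0 := by
    apply deriv_nonpos_left (b := p - δp / 2) (by linarith) (hd p hpI)
    intro y hy1 hy2
    have hyI : y ∈ I := hballp (by
      simp only [Metric.mem_ball, Real.dist_eq]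
      rw [abs_of_nonpos (by linarith)]
      linarith)
    exact hwmono2 y p hyI hpI hy2.le le_rfl
  -- φ ≡ β on [p,q], so the integral there is g β (q - p)
  have hflat : ∀ s ∈ Icc p q, φ s = β := by
    intro s hs
    have hsI : s ∈ I := hconn.out hpI hqI hs
    have h1 : φ s ≤ β := hφp ▸ hanti hpI hsI hs.1
    have h2 : β ≤ φ s := hφq ▸ hanti hsI hqI hs.2
    linarith
  have hdqp : d q - d p = - g β * (q - p) := by
    rw [hdiff p q hpI hqI, hφq, hφp]
    have : ∫ s in p..q, g (φ s) = g β * (q - p) := by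
      rw [intervalIntegral.integral_congr (g := fun _ => g β)
        (fun s hs => by rw [hflat s (by rwa [uIcc_of_le hpq] at hs)])]
      simp [mul_comm]
    rw [this]
    ring
  have hdq0 : d q = 0 := by nlinarith [hpq, hgβ]
  -- the point ξ₁ with φ ξ₁ = μ
  set μ : ℝ := (max σ γ + β) / 2 with hμ
  have hμβ : μ < β := by
    rw [hμ]
    rcases max_cases σ γ with ⟨h1, _⟩ | ⟨h1, _⟩ <;> rw [h1] <;> linarith
  have hσμ : σ < μ := by
    rw [hμ]
    rcases max_cases σ γ with ⟨h1, h2⟩ | ⟨h1, h2⟩ <;> rw [h1] <;> linarith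
  have hγμ : γ < μ := by
    rw [hμ]
    rcases max_cases σ γ with ⟨h1, h2⟩ | ⟨h1, h2⟩ <;> rw [h1] <;> linarith
  obtain ⟨b₃, hb₃I, hb₃⟩ := hsmall μ hσμ
  have hqb₃ : q ≤ b₃ := by
    by_contra hgt
    push_neg at hgt
    have := hanti hb₃I hqI hgt.le
    rw [hφq] at this
    linarith
  have hIccq : Icc q b₃ ⊆ I := fun z hz => hconn.out hqI hb₃I hz
  have hmemμ : μ ∈ Icc (φ b₃) (φ q) := ⟨hb₃.le, by rw [hφq]; linarith⟩
  obtain ⟨ξ₁, hξ₁mem, hφξ₁⟩ := intermediate_value_Icc' hqb₃ (hφc.mono hIccq) hmemμ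
  have hξ₁I : ξ₁ ∈ I := hIccq hξ₁mem
  have hqξ₁ : q < ξ₁ := by
    rcases eq_or_lt_of_le hξ₁mem.1 with heq | hlt
    · exfalso; rw [← heq] at hφξ₁; rw [hφq] at hφξ₁; linarith
    · exact hlt
  -- d ξ₁ ≥ 0
  obtain ⟨δ₁, hδ₁, hball₁⟩ := Metric.isOpen_iff.1 hI ξ₁ hξ₁I
  have hdξ₁ : 0 ≤ d ξ₁ := by
    apply deriv_nonneg_right (b := ξ₁ + δ₁ / 2) (by linarith) (hd ξ₁ hξ₁I)
    intro y hy1 hy2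
    have hyI : y ∈ I := hball₁ (by
      simp only [Metric.mem_ball, Real.dist_eq]
      rw [abs_of_nonneg (by linarith)]
      linarith)
    exact hwmono ξ₁ y hξ₁I hyI (by linarith) hy1.le
  -- lower bound for the integral of g ∘ φ on [q, ξ₁]
  have hsubμβ : Icc μ β ⊆ Icc (0:ℝ) 1 := fun u hu => ⟨by linarith [hu.1], by linarith [hu.2]⟩
  obtain ⟨u₀, hu₀mem, hu₀min⟩ := isCompact_Icc.exists_isMinOn (nonempty_Icc.2 hμβ.le)
    (hgc.mono hsubμβ)
  have hε : 0 < g u₀ := hgpos u₀ (by linarith [hu₀mem.1]) (by linarith [hu₀mem.2])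
  have hφrange : ∀ s ∈ Icc q ξ₁, φ s ∈ Icc μ β := by
    intro s hs
    have hsI : s ∈ I := hconn.out hqI hξ₁I hs
    constructor
    · rw [← hφξ₁]; exact hanti hsI hξ₁I hs.2
    · rw [← hφq]; exact hanti hqI hsI hs.1
  have hintlb : g u₀ * (ξ₁ - q) ≤ ∫ s in q..ξ₁, g (φ s) := by
    have h1 : ∫ s in q..ξ₁, (g u₀ : ℝ) ≤ ∫ s in q..ξ₁, g (φ s) := by
      apply intervalIntegral.integral_mono_on hqξ₁.le intervalIntegrable_const
        (hgφii q ξ₁ hqI hξ₁I)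
      intro s hs
      exact hu₀min (hφrange s hs)
    simpa [smul_eq_mul, mul_comm] using h1
  -- final contradiction
  have hfinal := hdiff q ξ₁ hqI hξ₁I
  rw [hφξ₁, hφq] at hfinal
  have hcterm : - c * (μ - β) ≤ 0 := by nlinarith
  have hgpos' : 0 < g u₀ * (ξ₁ - q) := mul_pos hε (by linarith)
  linarith [hdξ₁, hdq0, hfinal, hintlb, hgpos', hcterm]

/-- Core contradiction for part 2: a decreasing profile from `σ ∈ (α,β)` down
below `α` with nonnegative speed is impossible. -/
lemma part2_core {P g φ : ℝ → ℝ} {I : Set ℝ} {α β γ σ c B ξ₀ : ℝ}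
    (hI : IsOpen I) (hconn : I.OrdConnected)
    (h0α : 0 < α) (hαγ : α < γ) (hγβ : γ < β) (hβ1 : β < 1)
    (hασ : α < σ) (hσβ : σ < β)
    (hPanti : StrictAntiOn P (Icc α β)) (hPmono : StrictMonoOn P (Icc 0 α))
    (hgc : ContinuousOn g (Icc 0 1)) (hgneg : ∀ u, 0 < u → u < γ → g u < 0)
    (hgα : g α < 0)
    (hφc : ContinuousOn φ I) (hanti : AntitoneOn φ I)
    (hlo : ∀ ξ ∈ I, 0 ≤ φ ξ) (hhi : ∀ ξ ∈ I, φ ξ ≤ σ)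
    (hbig : ∀ v, v < σ → ∃ b ∈ I, v < φ b) (hsmall : ∃ b ∈ I, φ b < α)
    (hξ₀ : ξ₀ ∈ I)
    (hd : ∀ ξ ∈ I, HasDerivAt (fun t => P (φ t))
      (B - (c * φ ξ + ∫ s in ξ₀..ξ, g (φ s))) ξ)
    (hc : 0 ≤ c) : False := by
  set d : ℝ → ℝ := fun ξ => B - (c * φ ξ + ∫ s in ξ₀..ξ, g (φ s)) with hdd
  have hσ1 : σ ≤ 1 := by linarith
  have hgφc : ContinuousOn (fun t => g (φ t)) I := by
    apply hgc.comp hφc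
    intro t ht
    exact ⟨hlo t ht, by linarith [hhi t ht]⟩
  have hgφii : ∀ u v, u ∈ I → v ∈ I → IntervalIntegrable (fun s => g (φ s)) volume u v := by
    intro u v hu hv
    exact (hgφc.mono (hconn.uIcc_subset hu hv)).intervalIntegrable
  have hdiff : ∀ u v, u ∈ I → v ∈ I →
      d v - d u = - c * (φ v - φ u) - ∫ s in u..v, g (φ s) := by
    intro u v hu hv
    have hsplit : (∫ s in ξ₀..u, g (φ s)) + ∫ s in u..v, g (φ s) = ∫ s in ξ₀..v, g (φ s) :=
      intervalIntegral.integral_add_adjacent_intervals (hgφii ξ₀ u hξ₀ hu) (hgφii u v hu hv)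
    simp only [hdd]
    linarith [hsplit]
  -- the set where φ = α
  set S : Set ℝ := {ξ ∈ I | φ ξ = α} with hS
  obtain ⟨s₀, hs₀I, hs₀⟩ := hsmall
  obtain ⟨b₂, hb₂I, hb₂⟩ := hbig ((α + σ) / 2) (by linarith)
  have hSub : ∀ ξ ∈ S, ξ < s₀ := by
    rintro ξ ⟨hξI, hξα⟩
    by_contra hle
    push_neg at hle
    have := hanti hs₀I hξI hle
    rw [hξα] at this
    linarith
  have hSlb : ∀ ξ ∈ S, b₂ < ξ := by
    rintro ξ ⟨hξI, hξα⟩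
    by_contra hle
    push_neg at hle
    have := hanti hξI hb₂I hle
    rw [hξα] at this
    linarith
  have hb₂s₀ : b₂ ≤ s₀ := by
    by_contra hgt
    push_neg at hgt
    have := hanti hs₀I hb₂I hgt.le
    linarith
  have hIccI : Icc b₂ s₀ ⊆ I := fun z hz => hconn.out hb₂I hs₀I hz
  have hmem : α ∈ Icc (φ s₀) (φ b₂) := ⟨hs₀.le, by linarith⟩
  obtain ⟨sα, hsαmem, hsα⟩ := intermediate_value_Icc' hb₂s₀ (hφc.mono hIccI) hmem
  have hSne : S.Nonempty := ⟨sα, hIccI hsαmem, hsα⟩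
  have hSclosed : IsClosed S := by
    have hSeq : S = Icc b₂ s₀ ∩ φ ⁻¹' {α} := by
      ext ξ
      constructor
      · intro hξ
        exact ⟨⟨(hSlb ξ hξ).le, (hSub ξ hξ).le⟩, hξ.2⟩
      · rintro ⟨hξmem, hξα⟩
        exact ⟨hIccI hξmem, hξα⟩
    rw [hSeq]
    exact (hφc.mono hIccI).preimage_isClosed_of_isClosed isClosed_Icc isClosed_singleton
  have hSbddA : BddAbove S := ⟨s₀, fun ξ hξ => (hSub ξ hξ).le⟩
  have hSbddB : BddBelow S := ⟨b₂, fun ξ hξ => (hSlb ξ hξ).le⟩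
  set q : ℝ := sSup S with hq
  set p : ℝ := sInf S with hp
  have hqS : q ∈ S := hSclosed.csSup_mem hSne hSbddA
  have hpS : p ∈ S := hSclosed.csInf_mem hSne hSbddB
  have hqI : q ∈ I := hqS.1
  have hpI : p ∈ I := hpS.1
  have hφq : φ q = α := hqS.2
  have hφp : φ p = α := hpS.2
  have hpq : p ≤ q := csInf_le_csSup hSne hSbddB hSbddA
  -- P∘φ is nonincreasing to the right of q (φ ∈ [0,α], P increasing)
  have hwmono : ∀ ξ₁ ξ₂, ξ₁ ∈ I → ξ₂ ∈ I → q ≤ ξ₁ → ξ₁ ≤ ξ₂ → P (φ ξ₂) ≤ P (φ ξ₁) := by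
    intro ξ₁ ξ₂ h1I h2I hq1 h12
    have h1 : φ ξ₁ ≤ α := hφq ▸ hanti hqI h1I hq1
    have h2 : φ ξ₂ ≤ φ ξ₁ := hanti h1I h2I h12
    have h1m : φ ξ₁ ∈ Icc (0:ℝ) α := ⟨hlo ξ₁ h1I, h1⟩
    have h2m : φ ξ₂ ∈ Icc (0:ℝ) α := ⟨hlo ξ₂ h2I, by linarith⟩
    rcases eq_or_lt_of_le h2 with heq | hlt
    · rw [heq]
    · exact (hPmono h2m h1m hlt).le
  -- P∘φ is nondecreasing to the left of p (φ ∈ [α,σ] ⊆ [α,β], P decreasing)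
  have hwmono2 : ∀ ξ₁ ξ₂, ξ₁ ∈ I → ξ₂ ∈ I → ξ₁ ≤ ξ₂ → ξ₂ ≤ p → P (φ ξ₁) ≤ P (φ ξ₂) := by
    intro ξ₁ ξ₂ h1I h2I h12 h2p
    have h1 : α ≤ φ ξ₂ := hφp ▸ hanti h2I hpI h2p
    have h2 : φ ξ₂ ≤ φ ξ₁ := hanti h1I h2I h12
    have h2m : φ ξ₂ ∈ Icc α β := ⟨h1, by linarith [hhi ξ₂ h2I]⟩
    have h1m : φ ξ₁ ∈ Icc α β := ⟨by linarith, by linarith [hhi ξ₁ h1I]⟩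
    rcases eq_or_lt_of_le h2 with heq | hlt
    · rw [heq]
    · exact (hPanti h2m h1m hlt).le
  -- d q ≤ 0
  obtain ⟨δq, hδq, hballq⟩ := Metric.isOpen_iff.1 hI q hqI
  have hdq : d q ≤ 0 := by
    apply deriv_nonpos_right (b := q + δq / 2) (by linarith) (hd q hqI)
    intro y hy1 hy2
    have hyI : y ∈ I := hballq (by
      simp only [Metric.mem_ball, Real.dist_eq]
      rw [abs_of_nonneg (by linarith)]
      linarith)
    exact hwmono q y hqI hyI le_rfl hy1.le
  -- d p ≥ 0
  obtain ⟨δp, hδp, hballp⟩ := Metric.isOpen_iff.1 hI p hpI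
  have hdp : 0 ≤ d p := by
    apply deriv_nonneg_left (b := p - δp / 2) (by linarith) (hd p hpI)
    intro y hy1 hy2
    have hyI : y ∈ I := hballp (by
      simp only [Metric.mem_ball, Real.dist_eq]
      rw [abs_of_nonpos (by linarith)]
      linarith)
    exact hwmono2 y p hyI hpI hy2.le le_rfl
  -- φ ≡ α on [p,q]
  have hflat : ∀ s ∈ Icc p q, φ s = α := by
    intro s hs
    have hsI : s ∈ I := hconn.out hpI hqI hs
    have h1 : φ s ≤ α := hφp ▸ hanti hpI hsI hs.1
    have h2 : α ≤ φ s := hφq ▸ hanti hsI hqI hs.2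
    linarith
  have hdqp : d q - d p = - g α * (q - p) := by
    rw [hdiff p q hpI hqI, hφq, hφp]
    have : ∫ s in p..q, g (φ s) = g α * (q - p) := by
      rw [intervalIntegral.integral_congr (g := fun _ => g α)
        (fun s hs => by rw [hflat s (by rwa [uIcc_of_le hpq] at hs)])]
      simp [mul_comm]
    rw [this]
    ring
  have hdp0 : d p = 0 := by nlinarith [hpq, hgα]
  -- the point ξ₁ with φ ξ₁ = μ
  set μ : ℝ := (α + min σ γ) / 2 with hμ
  have hαμ : α < μ := by
    rw [hμ]
    rcases min_cases σ γ with ⟨h1, _⟩ | ⟨h1, _⟩ <;> rw [h1] <;> linarith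
  have hμσ : μ < σ := by
    rw [hμ]
    rcases min_cases σ γ with ⟨h1, h2⟩ | ⟨h1, h2⟩ <;> rw [h1] <;> linarith
  have hμγ : μ < γ := by
    rw [hμ]
    rcases min_cases σ γ with ⟨h1, h2⟩ | ⟨h1, h2⟩ <;> rw [h1] <;> linarith
  obtain ⟨b₃, hb₃I, hb₃⟩ := hbig μ hμσ
  have hb₃p : b₃ ≤ p := by
    by_contra hgt
    push_neg at hgt
    have := hanti hpI hb₃I hgt.le
    rw [hφp] at this
    linarith
  have hIccp : Icc b₃ p ⊆ I := fun z hz => hconn.out hb₃I hpI hz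
  have hmemμ : μ ∈ Icc (φ p) (φ b₃) := ⟨by rw [hφp]; linarith, hb₃.le⟩
  obtain ⟨ξ₁, hξ₁mem, hφξ₁⟩ := intermediate_value_Icc' hb₃p (hφc.mono hIccp) hmemμ
  have hξ₁I : ξ₁ ∈ I := hIccp hξ₁mem
  have hξ₁p : ξ₁ < p := by
    rcases eq_or_lt_of_le hξ₁mem.2 with heq | hlt
    · exfalso; rw [heq, hφp] at hφξ₁; linarith
    · exact hlt
  -- d ξ₁ ≥ 0
  obtain ⟨δ₁, hδ₁, hball₁⟩ := Metric.isOpen_iff.1 hI ξ₁ hξ₁I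
  have hdξ₁ : 0 ≤ d ξ₁ := by
    apply deriv_nonneg_left (b := ξ₁ - δ₁ / 2) (by linarith) (hd ξ₁ hξ₁I)
    intro y hy1 hy2
    have hyI : y ∈ I := hball₁ (by
      simp only [Metric.mem_ball, Real.dist_eq]
      rw [abs_of_nonpos (by linarith)]
      linarith)
    exact hwmono2 y ξ₁ hyI hξ₁I hy2.le (by linarith)
  -- upper bound for the integral of g ∘ φ on [ξ₁, p]
  have hsubαμ : Icc α μ ⊆ Icc (0:ℝ) 1 := fun u hu =>
    ⟨by linarith [hu.1], by linarith [hu.2]⟩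
  obtain ⟨u₀, hu₀mem, hu₀max⟩ := isCompact_Icc.exists_isMaxOn (nonempty_Icc.2 hαμ.le)
    (hgc.mono hsubαμ)
  have hε : g u₀ < 0 := hgneg u₀ (by linarith [hu₀mem.1]) (by linarith [hu₀mem.2])
  have hφrange : ∀ s ∈ Icc ξ₁ p, φ s ∈ Icc α μ := by
    intro s hs
    have hsI : s ∈ I := hconn.out hξ₁I hpI hs
    constructor
    · rw [← hφp]; exact hanti hsI hpI hs.2
    · rw [← hφξ₁]; exact hanti hξ₁I hsI hs.1
  have hintub : (∫ s in ξ₁..p, g (φ s)) ≤ g u₀ * (p - ξ₁) := by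
    have h1 : ∫ s in ξ₁..p, g (φ s) ≤ ∫ s in ξ₁..p, (g u₀ : ℝ) := by
      apply intervalIntegral.integral_mono_on hξ₁p.le (hgφii ξ₁ p hξ₁I hpI)
        intervalIntegrable_const
      intro s hs
      exact hu₀max (hφrange s hs)
    simpa [smul_eq_mul, mul_comm] using h1
  -- final contradiction
  have hfinal := hdiff ξ₁ p hξ₁I hpI
  rw [hφξ₁, hφp] at hfinal
  have hcterm : 0 ≤ - c * (α - μ) := by nlinarith
  have hgneg' : g u₀ * (p - ξ₁) < 0 := mul_neg_of_neg_of_pos hε (by linarith)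
  linarith [hdξ₁, hdp0, hfinal, hintub, hgneg', hcterm]

lemma part1_bridge {P g φ : ℝ → ℝ} {I : Set ℝ} {α β γ σ c : ℝ} (L : Filter ℝ) [hLn : L.NeBot]
    (hI : IsOpen I) (hconn : I.OrdConnected) (hne : I.Nonempty)
    (hdown : ∀ ⦃x y : ℝ⦄, x ≤ y → y ∈ I → x ∈ I)
    (hLI : ∀ᶠ ξ in L, ξ ∈ I)
    (hLge : ∀ x ∈ I, ∀ᶠ ξ in L, x ≤ ξ)
    (hlimσ : Tendsto φ L (nhds σ))
    (h0α : 0 < α) (hαγ : α < γ) (hγβ : γ < β) (hβ1 : β < 1)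
    (hασ : α < σ) (hσβ : σ < β)
    (hPanti : StrictAntiOn P (Icc α β)) (hPmono : StrictMonoOn P (Icc β 1))
    (hPc : ContinuousOn P (Icc 0 1))
    (hgc : ContinuousOn g (Icc 0 1)) (hgpos : ∀ u, γ < u → u < 1 → 0 < g u)
    (hgβ : 0 < g β)
    (hmap : ∀ ξ ∈ I, φ ξ ∈ Icc (0:ℝ) 1)
    (hweak : ∀ ψ : ℝ → ℝ, IsTestFun I ψ →
      ∫ ξ in I, P (φ ξ) * iteratedDeriv 2 ψ ξ =
        c * (∫ ξ in I, φ ξ * deriv ψ ξ) - ∫ ξ in I, g (φ ξ) * ψ ξ)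
    (hφc : ContinuousOn φ I)
    (hmono : MonotoneOn φ I ∨ AntitoneOn φ I)
    (hnc : ¬ ∃ k, ∀ ξ ∈ I, φ ξ = k)
    (hlim1 : Tendsto φ atBot (nhds 1)) :
    0 < c := by
  obtain ⟨z, hz⟩ := hne
  have hIbot : ∀ᶠ η in atBot, η ∈ I := by
    filter_upwards [eventually_le_atBot z] with η hη
    exact hdown hη hz
  -- φ is antitone
  have hanti : AntitoneOn φ I := by
    rcases hmono with hmono | hanti
    · exfalso
      apply hnc
      refine ⟨1, fun ξ hξ => ?_⟩
      have h1 : φ ξ ≤ 1 := (hmap ξ hξ).2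
      have h2 : 1 ≤ φ ξ := by
        apply le_of_tendsto hlim1
        filter_upwards [eventually_le_atBot ξ, hIbot] with η hη hηI
        exact hmono hηI hξ hη
      linarith
    · exact hanti
  -- σ is a lower bound for φ on I
  have hlo : ∀ ξ ∈ I, σ ≤ φ ξ := by
    intro ξ hξ
    apply le_of_tendsto hlimσ
    filter_upwards [hLge ξ hξ, hLI] with η hη hηI
    exact hanti hξ hηI hη
  have hhi : ∀ ξ ∈ I, φ ξ ≤ 1 := fun ξ hξ => (hmap ξ hξ).2
  -- φ exceeds β somewhere
  have hbig : ∃ b ∈ I, β < φ b := by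
    have h1 : ∀ᶠ η in atBot, β < φ η := hlim1.eventually (eventually_gt_nhds hβ1)
    obtain ⟨b, hbI, hb⟩ := (hIbot.and h1).exists
    exact ⟨b, hbI, hb⟩
  -- φ gets below every v > σ
  have hsmall : ∀ v, σ < v → ∃ b ∈ I, φ b < v := by
    intro v hv
    have h1 : ∀ᶠ η in L, φ η < v := hlimσ.eventually (eventually_lt_nhds hv)
    obtain ⟨b, hbI, hb⟩ := (hLI.and h1).exists
    exact ⟨b, hbI, hb⟩
  -- regularity
  obtain ⟨B, hd⟩ := key_regularity hI hconn hmap hweak hφc hPc hgc hz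
  by_contra hcge
  push_neg at hcge
  exact part1_core hI hconn h0α hαγ hγβ hβ1 hασ hσβ hPanti hPmono hgc hgpos hgβ
    hφc hanti hlo hhi hbig hsmall hz hd hcge

lemma part2_bridge {P g φ : ℝ → ℝ} {I : Set ℝ} {α β γ σ c : ℝ} (L : Filter ℝ) [hLn : L.NeBot]
    (hI : IsOpen I) (hconn : I.OrdConnected) (hne : I.Nonempty)
    (hup : ∀ ⦃x y : ℝ⦄, y ≤ x → y ∈ I → x ∈ I)
    (hLI : ∀ᶠ ξ in L, ξ ∈ I)
    (hLle : ∀ x ∈ I, ∀ᶠ ξ in L, ξ ≤ x)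
    (hlimσ : Tendsto φ L (nhds σ))
    (h0α : 0 < α) (hαγ : α < γ) (hγβ : γ < β) (hβ1 : β < 1)
    (hασ : α < σ) (hσβ : σ < β)
    (hPanti : StrictAntiOn P (Icc α β)) (hPmono : StrictMonoOn P (Icc 0 α))
    (hPc : ContinuousOn P (Icc 0 1))
    (hgc : ContinuousOn g (Icc 0 1)) (hgneg : ∀ u, 0 < u → u < γ → g u < 0)
    (hgα : g α < 0)
    (hmap : ∀ ξ ∈ I, φ ξ ∈ Icc (0:ℝ) 1)
    (hweak : ∀ ψ : ℝ → ℝ, IsTestFun I ψ →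
      ∫ ξ in I, P (φ ξ) * iteratedDeriv 2 ψ ξ =
        c * (∫ ξ in I, φ ξ * deriv ψ ξ) - ∫ ξ in I, g (φ ξ) * ψ ξ)
    (hφc : ContinuousOn φ I)
    (hmono : MonotoneOn φ I ∨ AntitoneOn φ I)
    (hnc : ¬ ∃ k, ∀ ξ ∈ I, φ ξ = k)
    (hlim0 : Tendsto φ atTop (nhds 0)) :
    c < 0 := by
  obtain ⟨z, hz⟩ := hne
  have hItop : ∀ᶠ η in atTop, η ∈ I := by
    filter_upwards [eventually_ge_atTop z] with η hη
    exact hup hη hz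
  have hanti : AntitoneOn φ I := by
    rcases hmono with hmono | hanti
    · exfalso
      apply hnc
      refine ⟨0, fun ξ hξ => ?_⟩
      have h1 : 0 ≤ φ ξ := (hmap ξ hξ).1
      have h2 : φ ξ ≤ 0 := by
        apply ge_of_tendsto hlim0
        filter_upwards [eventually_ge_atTop ξ, hItop] with η hη hηI
        exact hmono hξ hηI hη
      linarith
    · exact hanti
  have hhi : ∀ ξ ∈ I, φ ξ ≤ σ := by
    intro ξ hξ
    apply ge_of_tendsto hlimσ
    filter_upwards [hLle ξ hξ, hLI] with η hη hηI
    exact hanti hηI hξ hη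
  have hlo : ∀ ξ ∈ I, 0 ≤ φ ξ := fun ξ hξ => (hmap ξ hξ).1
  have hsmall : ∃ b ∈ I, φ b < α := by
    have h1 : ∀ᶠ η in atTop, φ η < α := hlim0.eventually (eventually_lt_nhds h0α)
    obtain ⟨b, hbI, hb⟩ := (hItop.and h1).exists
    exact ⟨b, hbI, hb⟩
  have hbig : ∀ v, v < σ → ∃ b ∈ I, v < φ b := by
    intro v hv
    have h1 : ∀ᶠ η in L, v < φ η := hlimσ.eventually (eventually_gt_nhds hv)
    obtain ⟨b, hbI, hb⟩ := (hLI.and h1).exists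
    exact ⟨b, hbI, hb⟩
  obtain ⟨B, hd⟩ := key_regularity hI hconn hmap hweak hφc hPc hgc hz
  by_contra hcge
  push_neg at hcge
  exact part2_core hI hconn h0α hαγ hγβ hβ1 hασ hσβ hPanti hPmono hgc hgneg hgα
    hφc hanti hlo hhi hbig hsmall hz hd hcge

/-- **Proposition 4.6**: if `σ ∈ (α,β)` and there is a regular semi-wavefront
from `1` connecting `1` to `σ` with speed `c`, then `c > 0`; if there is a
regular semi-wavefront to `0` connecting `σ` to `0` with speed `c`, then
`c < 0`. -/
theorem speed_sign_of_semi_wavefronts_into_backward_region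
    (P g : ℝ → ℝ) (α β γ : ℝ)
    (h0α : 0 < α) (hαγ : α < γ) (hγβ : γ < β) (hβ1 : β < 1)
    (hR : CondR P g) (hP : CondP P α β) (hg : Condg g γ)
    (σ : ℝ) (hσ : σ ∈ Ioo α β) :
    (∀ (a : EReal) (c : ℝ) (φ : ℝ → ℝ),
      IsSemiWFfrom1 P g a c φ → TendstoRightEnd φ a σ → 0 < c) ∧
    (∀ (a : EReal) (c : ℝ) (φ : ℝ → ℝ),
      IsSemiWFto0 P g a c φ → TendstoLeftEnd φ a σ → c < 0) := by
  obtain ⟨hασ, hσβ⟩ := hσ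
  -- basic consequences of (R), (P), (g)
  have hPc : ContinuousOn P (Icc 0 1) := hR.1.continuousOn
  have hgc : ContinuousOn g (Icc 0 1) := hR.2.1
  have hPanti : StrictAntiOn P (Icc α β) := by
    apply strictAntiOn_of_deriv_neg (convex_Icc α β)
      (hPc.mono (Icc_subset_Icc (by linarith) (by linarith)))
    intro x hx
    rw [interior_Icc] at hx
    exact hP.2 x hx
  have hPmono1 : StrictMonoOn P (Icc β 1) := by
    apply strictMonoOn_of_deriv_pos (convex_Icc β 1)
      (hPc.mono (Icc_subset_Icc (by linarith) le_rfl))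
    intro x hx
    rw [interior_Icc] at hx
    exact hP.1 x (Or.inr hx)
  have hPmono0 : StrictMonoOn P (Icc 0 α) := by
    apply strictMonoOn_of_deriv_pos (convex_Icc 0 α)
      (hPc.mono (Icc_subset_Icc le_rfl (by linarith)))
    intro x hx
    rw [interior_Icc] at hx
    exact hP.1 x (Or.inl hx)
  have hgpos : ∀ u, γ < u → u < 1 → 0 < g u := fun u h1 h2 => hg.2.2.2 u ⟨h1, h2⟩
  have hgneg : ∀ u, 0 < u → u < γ → g u < 0 := fun u h1 h2 => hg.2.2.1 u ⟨h1, h2⟩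
  have hgβ : 0 < g β := hgpos β hγβ hβ1
  have hgα : g α < 0 := hgneg α h0α hαγ
  constructor
  · -- part 1
    intro a c φ hSWF hEnd
    obtain ⟨hTW, hφc, hmono, hnc, hlim1⟩ := hSWF
    induction a using EReal.rec with
    | bot =>
      exfalso
      apply hnc
      refine ⟨0, fun ξ hξ => ?_⟩
      exact absurd hξ (by simp [leftRay, not_lt_bot])
    | coe x =>
      have hIeq : leftRay (x : EReal) = Iio x := by
        ext ξ
        simp [leftRay, EReal.coe_lt_coe_iff]
      rw [hIeq] at hTW hφc hmono hnc
      have hlimσ : Tendsto φ (nhdsWithin x (Iio x)) (nhds σ) := hEnd.2 x rfl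
      exact part1_bridge (nhdsWithin x (Iio x)) isOpen_Iio (ordConnected_Iio)
        ⟨x - 1, by simp⟩ (fun u v huv hv => lt_of_le_of_lt huv hv)
        self_mem_nhdsWithin
        (fun ξ hξ => by
          filter_upwards [mem_nhdsWithin_of_mem_nhds (Ioi_mem_nhds hξ)] with η hη
          exact hη.le)
        hlimσ h0α hαγ hγβ hβ1 hασ hσβ hPanti hPmono1 hPc hgc hgpos hgβ
        hTW.mapsTo hTW.weak_eq hφc hmono hnc hlim1
    | top =>
      have hIeq : leftRay (⊤ : EReal) = univ := by
        ext ξ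
        simp [leftRay, EReal.coe_lt_top]
      rw [hIeq] at hTW hφc hmono hnc
      have hlimσ : Tendsto φ atTop (nhds σ) := hEnd.1 rfl
      exact part1_bridge atTop isOpen_univ ordConnected_univ
        ⟨0, mem_univ 0⟩ (fun u v _ _ => mem_univ u)
        (Eventually.of_forall fun _ => mem_univ _)
        (fun ξ _ => eventually_ge_atTop ξ)
        hlimσ h0α hαγ hγβ hβ1 hασ hσβ hPanti hPmono1 hPc hgc hgpos hgβ
        hTW.mapsTo hTW.weak_eq hφc hmono hnc hlim1
  · -- part 2
    intro a c φ hSWF hEnd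
    obtain ⟨hTW, hφc, hmono, hnc, hlim0⟩ := hSWF
    induction a using EReal.rec with
    | bot =>
      have hIeq : rightRay (⊥ : EReal) = univ := by
        ext ξ
        simp [rightRay, EReal.bot_lt_coe]
      rw [hIeq] at hTW hφc hmono hnc
      have hlimσ : Tendsto φ atBot (nhds σ) := hEnd.1 rfl
      exact part2_bridge atBot isOpen_univ ordConnected_univ
        ⟨0, mem_univ 0⟩ (fun u v _ _ => mem_univ u)
        (Eventually.of_forall fun _ => mem_univ _)
        (fun ξ _ => eventually_le_atBot ξ)
        hlimσ h0α hαγ hγβ hβ1 hασ hσβ hPanti hPmono0 hPc hgc hgneg hgα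
        hTW.mapsTo hTW.weak_eq hφc hmono hnc hlim0
    | coe x =>
      have hIeq : rightRay (x : EReal) = Ioi x := by
        ext ξ
        simp [rightRay, EReal.coe_lt_coe_iff]
      rw [hIeq] at hTW hφc hmono hnc
      have hlimσ : Tendsto φ (nhdsWithin x (Ioi x)) (nhds σ) := hEnd.2 x rfl
      exact part2_bridge (nhdsWithin x (Ioi x)) isOpen_Ioi (ordConnected_Ioi)
        ⟨x + 1, by simp⟩ (fun u v huv hv => lt_of_lt_of_le hv huv)
        self_mem_nhdsWithin
        (fun ξ hξ => by
          filter_upwards [mem_nhdsWithin_of_mem_nhds (Iio_mem_nhds hξ)] with η hη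
          exact hη.le)
        hlimσ h0α hαγ hγβ hβ1 hασ hσβ hPanti hPmono0 hPc hgc hgneg hgα
        hTW.mapsTo hTW.weak_eq hφc hmono hnc hlim0
    | top =>
      exfalso
      apply hnc
      refine ⟨0, fun ξ hξ => ?_⟩
      exact absurd hξ (by simp [rightRay])
end
end

section
/- Assume (R), (P), (g) and suppose u_t = P(u)_{xx} + g(u) admits a shock wavefront with speed c satisfying (WF). Let ξ_s be a jump point of its profile φ, with one-sided limits φ_ℓ = φ(ξ_s⁺) < φ_r = φ(ξ_s⁻). Then: (i) φ_ℓ ∈ [0, β), and if φ_ℓ ∈ (α, β) then c ≥ 0; (ii) φ_r ∈ (α, 1], and if φ_r ∈ (α, β) then c ≤ 0. -/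
open Set Filter MeasureTheory

noncomputable section

section AuxLemmas
open intervalIntegral

/-- bounded measurable functions are locally integrable -/
lemma locInt_of_bdd {f : ℝ → ℝ} (hm : Measurable f) (C : ℝ) (hb : ∀ x, |f x| ≤ C) :
    LocallyIntegrable f volume := by
  intro x
  refine ⟨Icc (x-1) (x+1), Icc_mem_nhds (by linarith) (by linarith), ?_⟩
  refine Integrable.mono' (integrableOn_const ?_) hm.aestronglyMeasurable.restrict
    (Eventually.of_forall fun y => by simpa using hb y)
  exact measure_Icc_lt_top.ne

lemma locInt_interval {f : ℝ → ℝ} (hf : LocallyIntegrable f volume) (a b : ℝ) :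
    IntervalIntegrable f volume a b := by
  rw [intervalIntegrable_iff]
  exact (hf.integrableOn_isCompact isCompact_uIcc).mono uIoc_subset_uIcc le_rfl

/-- integral of derivative of compactly supported C¹ function is 0 -/
lemma integral_deriv_zero {f : ℝ → ℝ} (hf : ContDiff ℝ 1 f) (hs : HasCompactSupport f) :
    ∫ x, deriv f x = 0 := by
  have hint : Integrable (deriv f) volume :=
    ((hf.continuous_deriv le_rfl).integrable_of_hasCompactSupport hs.deriv)
  have h1 := hs.integral_Iic_deriv_eq hf 0
  have h2 := hs.integral_Ioi_deriv_eq hf 0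
  rw [← integral_Iic_add_Ioi (hint.integrableOn) (hint.integrableOn), h1, h2]
  ring

lemma exists_moment_tests : ∃ ρ σ : ℝ → ℝ,
    ContDiff ℝ (⊤ : ℕ∞) ρ ∧ HasCompactSupport ρ ∧ ContDiff ℝ (⊤ : ℕ∞) σ ∧ HasCompactSupport σ ∧
    (∫ x, ρ x) = 1 ∧ (∫ x, σ x) = 0 ∧ (∫ x, x * σ x) = 1 := by
  obtain ⟨B⟩ : Nonempty (ContDiffBump (0:ℝ)) := ⟨⟨1, 2, one_pos, one_lt_two⟩⟩
  set ρ : ℝ → ℝ := B.normed volume with hρdef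
  have hρs : ContDiff ℝ (⊤ : ℕ∞) ρ := B.contDiff_normed
  have hρc : HasCompactSupport ρ := B.hasCompactSupport_normed
  have hρ1 : (∫ x, ρ x) = 1 := B.integral_normed
  refine ⟨ρ, fun x => - deriv ρ x, hρs, hρc, ?_, ?_, ?_, ?_, ?_⟩
  · exact (hρs.iterate_deriv 1).neg
  · exact (hρc.deriv (𝕜 := ℝ)).neg
  · exact hρ1
  · rw [MeasureTheory.integral_neg, integral_deriv_zero (hρs.of_le (by exact_mod_cast le_top)) hρc, neg_zero]
  · have hq : ContDiff ℝ 1 (fun x => x * ρ x) := (contDiff_id.mul (hρs.of_le (by exact_mod_cast le_top)))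
    have hqc : HasCompactSupport (fun x => x * ρ x) := by
      apply HasCompactSupport.mul_left hρc
    have hd : ∀ x, deriv (fun y => y * ρ y) x = ρ x + x * deriv ρ x := by
      intro x
      have := (hasDerivAt_id' x).mul ((hρs.differentiable (by simp)).differentiableAt.hasDerivAt)
      exact this.deriv.trans (by rw [one_mul])
    have h0 : (∫ x, (ρ x + x * deriv ρ x)) = 0 := by
      rw [← integral_congr_ae (Eventually.of_forall hd)]
      exact integral_deriv_zero hq hqc
    have hint1 : Integrable ρ volume := hρs.continuous.integrable_of_hasCompactSupport hρc
    have hint2 : Integrable (fun x => x * deriv ρ x) volume := by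
      exact (continuous_id.mul ((hρs.iterate_deriv 1).continuous)).integrable_of_hasCompactSupport
        (hρc.deriv.mul_left)
    rw [integral_add hint1 hint2, hρ1] at h0
    simp only [mul_neg, MeasureTheory.integral_neg]
    linarith

/-- the kernel: kk t x = 1 if 0 < t ≤ x, -1 if x < t ≤ 0, else 0 -/
def kk (t x : ℝ) : ℝ :=
  (Ioc (0:ℝ) x).indicator 1 t - (Ioc x (0:ℝ)).indicator 1 t

lemma kk_snd_pos {t : ℝ} (ht : 0 < t) (x : ℝ) : kk t x = (Ici t).indicator 1 x := by
  unfold kk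
  simp only [indicator_apply, mem_Ioc, mem_Ici, Pi.one_apply]
  by_cases h1 : t ≤ x
  · have : ¬ (x < t ∧ t ≤ 0) := fun h => absurd ht (not_lt.2 h.2)
    simp [h1, ht, this]
  · have : ¬ (x < t ∧ t ≤ 0) := fun h => absurd ht (not_lt.2 h.2)
    simp [h1, ht, this]

lemma kk_snd_nonpos {t : ℝ} (ht : t ≤ 0) (x : ℝ) : kk t x = - (Iio t).indicator 1 x := by
  unfold kk
  simp only [indicator_apply, mem_Ioc, mem_Iio, Pi.one_apply]
  have h0 : ¬ (0 < t ∧ t ≤ x) := fun h => absurd ht (not_le.2 h.1)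
  by_cases h1 : x < t
  · simp [h1, ht, h0]
  · simp [h1, ht, h0]

lemma kk_abs_le (t x : ℝ) : |kk t x| ≤ 1 := by
  unfold kk
  simp only [indicator_apply, Pi.one_apply]
  by_cases h1 : t ∈ Ioc (0:ℝ) x <;> by_cases h2 : t ∈ Ioc x (0:ℝ) <;> simp [h1, h2]

lemma kk_support {t x : ℝ} (h : kk t x ≠ 0) : |t| ≤ |x| := by
  unfold kk at h
  simp only [indicator_apply, Pi.one_apply] at h
  by_cases h1 : t ∈ Ioc (0:ℝ) x
  · rw [mem_Ioc] at h1
    rw [abs_of_pos h1.1, abs_of_pos (h1.1.trans_le h1.2)]; exact h1.2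
  · by_cases h2 : t ∈ Ioc x (0:ℝ)
    · rw [mem_Ioc] at h2
      rw [abs_of_nonpos h2.2, abs_of_neg (lt_of_lt_of_le h2.1 h2.2)]; linarith [h2.1]
    · exfalso; apply h; simp [h1, h2]

lemma kk_measurable : Measurable (fun p : ℝ × ℝ => kk p.1 p.2) := by
  have hS1 : MeasurableSet {p : ℝ × ℝ | 0 < p.1 ∧ p.1 ≤ p.2} :=
    (measurableSet_lt measurable_const measurable_fst).inter
      (measurableSet_le measurable_fst measurable_snd)
  have hS2 : MeasurableSet {p : ℝ × ℝ | p.2 < p.1 ∧ p.1 ≤ 0} :=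
    (measurableSet_lt measurable_snd measurable_fst).inter
      (measurableSet_le measurable_fst measurable_const)
  have : (fun p : ℝ × ℝ => kk p.1 p.2)
      = fun p => {q : ℝ × ℝ | 0 < q.1 ∧ q.1 ≤ q.2}.indicator 1 p
        - {q : ℝ × ℝ | q.2 < q.1 ∧ q.1 ≤ 0}.indicator 1 p := by
    funext p
    unfold kk
    simp only [indicator_apply, mem_Ioc, mem_setOf_eq, Pi.one_apply]
  rw [this]
  exact ((measurable_one.indicator hS1).sub (measurable_one.indicator hS2))

lemma kk_intervalIntegral {f : ℝ → ℝ} (hf : LocallyIntegrable f volume) (x : ℝ) :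
    (∫ t in (0:ℝ)..x, f t) = ∫ t, f t * kk t x := by
  have hpt : ∀ t, f t * kk t x
      = (Ioc (0:ℝ) x).indicator f t - (Ioc x (0:ℝ)).indicator f t := by
    intro t
    unfold kk
    simp only [indicator_apply, Pi.one_apply]
    by_cases h1 : t ∈ Ioc (0:ℝ) x <;> by_cases h2 : t ∈ Ioc x (0:ℝ) <;>
      simp [h1, h2] <;> ring
  have hi1 : Integrable ((Ioc (0:ℝ) x).indicator f) volume := by
    rw [integrable_indicator_iff measurableSet_Ioc]
    exact (hf.integrableOn_isCompact isCompact_Icc).mono Ioc_subset_Icc_self le_rfl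
  have hi2 : Integrable ((Ioc x (0:ℝ)).indicator f) volume := by
    rw [integrable_indicator_iff measurableSet_Ioc]
    exact (hf.integrableOn_isCompact isCompact_Icc).mono Ioc_subset_Icc_self le_rfl
  calc (∫ t in (0:ℝ)..x, f t)
      = (∫ t in Ioc (0:ℝ) x, f t) - ∫ t in Ioc x (0:ℝ), f t := by
        rcases le_total (0:ℝ) x with h | h
        · rw [integral_of_le h, Ioc_eq_empty (not_lt.2 h)]
          simp
        · rw [integral_symm, integral_of_le h, Ioc_eq_empty (not_lt.2 h)]
          simp
    _ = (∫ t, (Ioc (0:ℝ) x).indicator f t) - ∫ t, (Ioc x (0:ℝ)).indicator f t := by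
        rw [MeasureTheory.integral_indicator measurableSet_Ioc, MeasureTheory.integral_indicator measurableSet_Ioc]
    _ = ∫ t, ((Ioc (0:ℝ) x).indicator f t - (Ioc x (0:ℝ)).indicator f t) :=
        (integral_sub hi1 hi2).symm
    _ = ∫ t, f t * kk t x := by
        refine integral_congr_ae (Eventually.of_forall fun t => ?_)
        exact (hpt t).symm

/-- Integration by parts for the primitive of a locally integrable function against the
derivative of a test function. -/
lemma primitive_mul_deriv {f : ℝ → ℝ} (hm : Measurable f) (hf : LocallyIntegrable f volume)
    {ψ : ℝ → ℝ} (hψ : ContDiff ℝ (⊤:ℕ∞) ψ) (hψc : HasCompactSupport ψ) :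
    ∫ x, (∫ t in (0:ℝ)..x, f t) * deriv ψ x = - ∫ x, f x * ψ x := by
  have hψ1 : ContDiff ℝ 1 ψ := hψ.of_le (by exact_mod_cast le_top)
  have hdc : Continuous (deriv ψ) := hψ.iterate_deriv 1 |>.continuous
  -- support bound
  obtain ⟨R, hR0, hRsub⟩ : ∃ R : ℝ, 0 < R ∧ tsupport ψ ⊆ Icc (-R) R := by
    obtain ⟨R, hR⟩ := hψc.isBounded.subset_closedBall 0
    refine ⟨|R| + 1, by positivity, fun x hx => ?_⟩
    have := hR hx
    simp only [Metric.mem_closedBall, Real.dist_eq, sub_zero] at this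
    have := abs_le.1 ((this.trans (le_abs_self R)).trans (by linarith : |R| ≤ |R| + 1))
    exact mem_Icc.2 ⟨by linarith [this.1], this.2⟩
  have hderiv_zero : ∀ x, x ∉ Icc (-R) R → deriv ψ x = 0 := by
    intro x hx
    have : x ∉ tsupport ψ := fun h => hx (hRsub h)
    have : x ∉ Function.support (deriv ψ) := fun h => this (support_deriv_subset h)
    simpa [Function.mem_support, not_not] using this
  obtain ⟨C, hC⟩ : ∃ C, ∀ x, |deriv ψ x| ≤ C := by
    obtain ⟨C, hC⟩ := (hψc.deriv (𝕜 := ℝ)).exists_bound_of_continuous hdc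
    exact ⟨C, fun x => by simpa [Real.norm_eq_abs] using hC x⟩
  have hC0 : 0 ≤ C := le_trans (abs_nonneg _) (hC 0)
  -- the two-variable function
  set u : ℝ → ℝ → ℝ := fun x t => f t * kk t x * deriv ψ x with hu
  -- integrability of uncurry u
  have hmeas : AEStronglyMeasurable (Function.uncurry u) ((volume : Measure ℝ).prod volume) := by
    apply Measurable.aestronglyMeasurable
    apply Measurable.mul
    apply Measurable.mul
    · exact hm.comp measurable_snd
    · exact kk_measurable.comp (measurable_snd.prodMk measurable_fst)
    · exact hdc.measurable.comp measurable_fst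
  have hint : Integrable (Function.uncurry u) ((volume : Measure ℝ).prod volume) := by
    have h1 : Integrable ((Icc (-R) R).indicator (fun _ : ℝ => C)) volume := by
      rw [integrable_indicator_iff measurableSet_Icc]
      exact integrableOn_const measure_Icc_lt_top.ne
    have h2 : Integrable ((Icc (-R) R).indicator (fun t => |f t|)) volume := by
      rw [integrable_indicator_iff measurableSet_Icc]
      exact (hf.integrableOn_isCompact isCompact_Icc).norm
    refine Integrable.mono' (h1.mul_prod h2) hmeas (Eventually.of_forall fun p => ?_)
    rcases p with ⟨x, t⟩
    simp only [Function.uncurry_apply_pair]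
    by_cases hx : x ∈ Icc (-R) R
    · by_cases hk : kk t x = 0
      · simp only [hu, hk, mul_zero, zero_mul, norm_zero]
        apply mul_nonneg <;> apply indicator_nonneg <;> intro y _
        · exact hC0
        · exact abs_nonneg _
      · have htmem : t ∈ Icc (-R) R := by
          have := kk_support hk
          rw [mem_Icc] at hx ⊢
          rcases abs_le.1 (this.trans (abs_le.2 hx)) with ⟨a, b⟩
          exact ⟨a, b⟩
        rw [indicator_of_mem hx, indicator_of_mem htmem]
        simp only [hu, Real.norm_eq_abs, abs_mul]
        calc |f t| * |kk t x| * |deriv ψ x| ≤ |f t| * 1 * C := by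
              apply mul_le_mul (mul_le_mul le_rfl (kk_abs_le t x) (abs_nonneg _) (abs_nonneg _))
                (hC x) (abs_nonneg _)
              positivity
          _ = C * |f t| := by ring
    · rw [hu]
      simp only [hderiv_zero x hx, mul_zero, norm_zero]
      have : (0:ℝ) ≤ (Icc (-R) R).indicator (fun _ => C) x * (Icc (-R) R).indicator (fun t => |f t|) t := by
        apply mul_nonneg <;> apply indicator_nonneg <;> intro y _
        · exact hC0
        · exact abs_nonneg _
      exact this
  -- rewrite LHS as iterated integral and swap
  have step1 : ∫ x, (∫ t in (0:ℝ)..x, f t) * deriv ψ x = ∫ x, ∫ t, u x t := by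
    refine integral_congr_ae (Eventually.of_forall fun x => ?_)
    show (∫ t in (0:ℝ)..x, f t) * deriv ψ x = ∫ t, u x t
    rw [kk_intervalIntegral hf x]
    exact (MeasureTheory.integral_mul_const _ _).symm
  have step2 : ∫ x, ∫ t, u x t = ∫ t, ∫ x, u x t := integral_integral_swap hint
  -- inner integral
  have step3 : ∀ t, (∫ x, u x t) = f t * (- ψ t) := by
    intro t
    have : (∫ x, u x t) = f t * ∫ x, kk t x * deriv ψ x := by
      rw [hu]
      simp only
      simp_rw [mul_assoc]
      exact MeasureTheory.integral_const_mul _ _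
    rw [this]
    congr 1
    rcases le_or_gt t 0 with ht | ht
    · have : ∀ x, kk t x * deriv ψ x = - (Iio t).indicator (deriv ψ) x := by
        intro x
        rw [kk_snd_nonpos ht]
        simp only [indicator_apply, Pi.one_apply]
        by_cases h : x ∈ Iio t <;> simp [h]
      rw [integral_congr_ae (Eventually.of_forall this), MeasureTheory.integral_neg,
        MeasureTheory.integral_indicator measurableSet_Iio,
        ← MeasureTheory.integral_Iic_eq_integral_Iio,
        hψc.integral_Iic_deriv_eq hψ1 t]
    · have : ∀ x, kk t x * deriv ψ x = (Ici t).indicator (deriv ψ) x := by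
        intro x
        rw [kk_snd_pos ht]
        simp only [indicator_apply, Pi.one_apply]
        by_cases h : x ∈ Ici t <;> simp [h]
      rw [integral_congr_ae (Eventually.of_forall this),
        MeasureTheory.integral_indicator measurableSet_Ici,
        MeasureTheory.integral_Ici_eq_integral_Ioi,
        hψc.integral_Ioi_deriv_eq hψ1 t]
  rw [step1, step2, integral_congr_ae (Eventually.of_forall step3)]
  simp_rw [mul_neg]
  rw [MeasureTheory.integral_neg]

lemma supp_bound {ψ : ℝ → ℝ} (hψc : HasCompactSupport ψ) :
    ∃ R : ℝ, 0 < R ∧ tsupport ψ ⊆ Icc (-R) R := by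
  obtain ⟨R, hR⟩ := hψc.isBounded.subset_closedBall 0
  refine ⟨|R| + 1, by positivity, fun x hx => ?_⟩
  have := hR hx
  simp only [Metric.mem_closedBall, Real.dist_eq, sub_zero] at this
  have := abs_le.1 ((this.trans (le_abs_self R)).trans (by linarith : |R| ≤ |R| + 1))
  exact mem_Icc.2 ⟨by linarith [this.1], this.2⟩

lemma exists_double_primitive {χ : ℝ → ℝ} (hχ : ContDiff ℝ (⊤:ℕ∞) χ) (hχc : HasCompactSupport χ)
    (h0 : (∫ x, χ x) = 0) (h1 : (∫ x, x * χ x) = 0) :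
    ∃ ψ : ℝ → ℝ, ContDiff ℝ (⊤:ℕ∞) ψ ∧ HasCompactSupport ψ ∧ deriv (deriv ψ) = χ := by
  obtain ⟨S, hS0, hSsub⟩ := supp_bound hχc
  have hχcont : Continuous χ := hχ.continuous
  have hzero : ∀ t, t < -S ∨ S < t → χ t = 0 := by
    intro t ht
    apply image_eq_zero_of_notMem_tsupport
    intro hmem
    have := hSsub hmem
    rw [mem_Icc] at this
    rcases ht with h | h <;> linarith [this.1, this.2]
  set a0 : ℝ := -S - 1 with ha0
  set Ψ₁ : ℝ → ℝ := fun x => ∫ t in a0..x, χ t with hΨ₁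
  have hd1 : ∀ x, HasDerivAt Ψ₁ (χ x) x := fun x =>
    (hχcont.integral_hasStrictDerivAt a0 x).hasDerivAt
  have hderiv1 : deriv Ψ₁ = χ := funext fun x => (hd1 x).deriv
  have hsm1 : ContDiff ℝ (⊤:ℕ∞) Ψ₁ := by
    exact contDiff_infty_iff_deriv.2 ⟨fun x => (hd1 x).differentiableAt, by rw [hderiv1]; exact hχ⟩
  have h1zero_left : ∀ x, x < -S → Ψ₁ x = 0 := by
    intro x hx
    rw [hΨ₁]
    simp only
    rw [show (0:ℝ) = ∫ t in a0..x, (0:ℝ) by simp]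
    apply intervalIntegral.integral_congr
    intro t ht
    rw [uIcc_eq_union] at ht
    apply hzero
    left
    rcases ht with h | h
    · rcases mem_Icc.1 h with ⟨_, h2⟩; linarith
    · rcases mem_Icc.1 h with ⟨_, h2⟩; rw [ha0] at h2; linarith
  have h1whole : ∀ x, S < x → Ψ₁ x = ∫ t, χ t := by
    intro x hx
    rw [hΨ₁]
    simp only
    have hcompl : ∀ t ∉ Ioc a0 x, χ t = 0 := by
      intro t ht
      rw [mem_Ioc, not_and_or] at ht
      apply hzero
      rcases ht with h | h
      · left; push_neg at h; rw [ha0] at h; linarith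
      · right; push_neg at h; linarith
    rw [integral_of_le (by rw [ha0]; linarith)]
    exact setIntegral_eq_integral_of_forall_compl_eq_zero hcompl
  have h1zero_right : ∀ x, S < x → Ψ₁ x = 0 := fun x hx => by rw [h1whole x hx, h0]
  have h1supp : HasCompactSupport Ψ₁ := by
    apply HasCompactSupport.intro (isCompact_Icc (a := -S) (b := S))
    intro x hx
    rw [mem_Icc, not_and_or] at hx
    rcases hx with h | h <;> push_neg at h
    · exact h1zero_left x (by linarith)
    · exact h1zero_right x (by linarith)
  -- integral of Ψ₁ is zero
  have hintΨ₁ : (∫ t, Ψ₁ t) = 0 := by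
    set b0 : ℝ := S + 1 with hb0
    have hab : a0 ≤ b0 := by rw [ha0, hb0]; linarith
    have e1 : (∫ t, Ψ₁ t) = ∫ t in a0..b0, Ψ₁ t := by
      rw [integral_of_le hab, setIntegral_eq_integral_of_forall_compl_eq_zero (fun t ht => ?_)]
      rw [mem_Ioc, not_and_or] at ht
      rcases ht with h | h <;> push_neg at h
      · exact h1zero_left t (by rw [ha0] at h; linarith)
      · exact h1zero_right t (by rw [hb0] at h; linarith)
    have e2 : ∫ t in a0..b0, Ψ₁ t * 1 = Ψ₁ b0 * b0 - Ψ₁ a0 * a0 - ∫ t in a0..b0, χ t * t := by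
      apply integral_mul_deriv_eq_deriv_mul_of_hasDerivAt (u := Ψ₁) (v := fun x => x)
        (u' := χ) (v' := fun _ => (1:ℝ))
      · exact fun x _ => ((hd1 x).continuousAt).continuousWithinAt
      · exact continuous_id.continuousOn
      · exact fun x _ => hd1 x
      · exact fun x _ => hasDerivAt_id x
      · exact hχcont.intervalIntegrable _ _
      · exact intervalIntegrable_const
    have e3 : (∫ t in a0..b0, χ t * t) = ∫ t, t * χ t := by
      have hcomm : (∫ t in a0..b0, χ t * t) = ∫ t in a0..b0, t * χ t :=
        intervalIntegral.integral_congr (fun t _ => mul_comm _ _)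
      have hcompl : ∀ t ∉ Ioc a0 b0, t * χ t = 0 := by
        intro t ht
        rw [mem_Ioc, not_and_or] at ht
        have : χ t = 0 := by
          apply hzero
          rcases ht with h | h <;> push_neg at h
          · left; rw [ha0] at h; linarith
          · right; rw [hb0] at h; linarith
        rw [this, mul_zero]
      rw [hcomm, integral_of_le hab]
      exact setIntegral_eq_integral_of_forall_compl_eq_zero hcompl
    have hb0z : Ψ₁ b0 = 0 := h1zero_right b0 (by rw [hb0]; linarith)
    have ha0z : Ψ₁ a0 = 0 := h1zero_left a0 (by rw [ha0]; linarith)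
    simp only [mul_one] at e2
    rw [e1, e2, e3, h1, hb0z, ha0z]
    ring
  -- second primitive
  set Ψ₂ : ℝ → ℝ := fun x => ∫ t in a0..x, Ψ₁ t with hΨ₂
  have hΨ₁cont : Continuous Ψ₁ := hsm1.continuous
  have hd2 : ∀ x, HasDerivAt Ψ₂ (Ψ₁ x) x := fun x =>
    (hΨ₁cont.integral_hasStrictDerivAt a0 x).hasDerivAt
  have hderiv2 : deriv Ψ₂ = Ψ₁ := funext fun x => (hd2 x).deriv
  have hsm2 : ContDiff ℝ (⊤:ℕ∞) Ψ₂ := by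
    exact contDiff_infty_iff_deriv.2 ⟨fun x => (hd2 x).differentiableAt, by rw [hderiv2]; exact hsm1⟩
  have h2zero_left : ∀ x, x < -S → Ψ₂ x = 0 := by
    intro x hx
    rw [hΨ₂]
    simp only
    rw [show (0:ℝ) = ∫ t in a0..x, (0:ℝ) by simp]
    apply intervalIntegral.integral_congr
    intro t ht
    rw [uIcc_eq_union] at ht
    apply h1zero_left
    rcases ht with h | h
    · rcases mem_Icc.1 h with ⟨_, h2⟩; linarith
    · rcases mem_Icc.1 h with ⟨_, h2⟩; rw [ha0] at h2; linarith
  have h2zero_right : ∀ x, S < x → Ψ₂ x = 0 := by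
    intro x hx
    rw [hΨ₂]
    simp only
    have hcompl : ∀ t ∉ Ioc a0 x, Ψ₁ t = 0 := by
      intro t ht
      rw [mem_Ioc, not_and_or] at ht
      rcases ht with h | h <;> push_neg at h
      · exact h1zero_left t (by rw [ha0] at h; linarith)
      · exact h1zero_right t (by linarith)
    rw [integral_of_le (by rw [ha0]; linarith),
      setIntegral_eq_integral_of_forall_compl_eq_zero hcompl, hintΨ₁]
  have h2supp : HasCompactSupport Ψ₂ := by
    apply HasCompactSupport.intro (isCompact_Icc (a := -S) (b := S))
    intro x hx
    rw [mem_Icc, not_and_or] at hx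
    rcases hx with h | h <;> push_neg at h
    · exact h2zero_left x (by linarith)
    · exact h2zero_right x (by linarith)
  exact ⟨Ψ₂, hsm2, h2supp, by rw [hderiv2, hderiv1]⟩

lemma hcs_sub {f g : ℝ → ℝ} (hf : HasCompactSupport f) (hg : HasCompactSupport g) :
    HasCompactSupport (fun x => f x - g x) := by
  rw [hasCompactSupport_iff_eventuallyEq] at hf hg ⊢
  filter_upwards [hf, hg] with x h1 h2
  simp [h1, h2]

lemma integrable_mul_test {F ψ : ℝ → ℝ} (hF : LocallyIntegrable F volume)
    (hψ : Continuous ψ) (hψc : HasCompactSupport ψ) :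
    Integrable (fun x => F x * ψ x) volume := by
  have := hF.integrable_smul_left_of_hasCompactSupport hψ hψc
  simpa [smul_eq_mul, mul_comm] using this

/-- If the second distributional derivative of a locally integrable function vanishes,
the function is a.e. affine. -/
lemma ae_affine_of_deriv2_zero {F : ℝ → ℝ} (hF : LocallyIntegrable F volume)
    (h : ∀ ψ : ℝ → ℝ, ContDiff ℝ (⊤:ℕ∞) ψ → HasCompactSupport ψ →
      (∫ x, F x * deriv (deriv ψ) x) = 0) :
    ∃ a b : ℝ, ∀ᵐ x : ℝ, F x = a + b * x := by
  obtain ⟨ρ₀, σ, hρ₀s, hρ₀c, hσs, hσc, hρ₀1, hσ0, hσ1⟩ := exists_moment_tests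
  set Mρ : ℝ := ∫ x, x * ρ₀ x with hMρ
  have hσs' : Continuous σ := hσs.continuous
  set ρ : ℝ → ℝ := fun x => ρ₀ x - Mρ * σ x with hρdef
  have hρs : ContDiff ℝ (⊤:ℕ∞) ρ := hρ₀s.sub (hσs.const_smul Mρ)
  have hρc : HasCompactSupport ρ := hcs_sub hρ₀c hσc.mul_left
  have hρint : Integrable ρ volume := hρs.continuous.integrable_of_hasCompactSupport hρc
  have hρ₀int : Integrable ρ₀ volume := hρ₀s.continuous.integrable_of_hasCompactSupport hρ₀c
  have hσint : Integrable σ volume := hσs'.integrable_of_hasCompactSupport hσc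
  have hxρ₀int : Integrable (fun x => x * ρ₀ x) volume :=
    (continuous_id.mul hρ₀s.continuous).integrable_of_hasCompactSupport hρ₀c.mul_left
  have hxσint : Integrable (fun x => x * σ x) volume :=
    (continuous_id.mul hσs').integrable_of_hasCompactSupport hσc.mul_left
  have hρ1 : (∫ x, ρ x) = 1 := by
    have i2 : Integrable (fun x => Mρ * σ x) volume := hσint.const_mul Mρ
    have : (∫ x, ρ x) = (∫ x, ρ₀ x) - ∫ x, Mρ * σ x := integral_sub hρ₀int i2
    rw [this, MeasureTheory.integral_const_mul, hρ₀1, hσ0]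
    ring
  have hxρ : (∫ x, x * ρ x) = 0 := by
    have e : (fun x => x * ρ x) = fun x => x * ρ₀ x - Mρ * (x * σ x) := by
      funext x; rw [hρdef]; ring
    have i2 : Integrable (fun x => Mρ * (x * σ x)) volume := hxσint.const_mul Mρ
    rw [e, integral_sub hxρ₀int i2, MeasureTheory.integral_const_mul, hσ1, ← hMρ]
    ring
  set a : ℝ := ∫ x, F x * ρ x with hadef
  set b : ℝ := ∫ x, F x * σ x with hbdef
  refine ⟨a, b, ?_⟩
  set E : ℝ → ℝ := fun x => F x - (a + b * x) with hEdef
  have hEloc : LocallyIntegrable E volume :=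
    hF.sub ((continuous_const.add (continuous_const.mul continuous_id)).locallyIntegrable)
  have key : ∀ χ : ℝ → ℝ, ContDiff ℝ (⊤:ℕ∞) χ → HasCompactSupport χ →
      (∫ x, χ x • E x) = 0 := by
    intro χ hχs hχc
    have hχint : Integrable χ volume := hχs.continuous.integrable_of_hasCompactSupport hχc
    have hxχint : Integrable (fun x => x * χ x) volume :=
      (continuous_id.mul hχs.continuous).integrable_of_hasCompactSupport hχc.mul_left
    set m0 : ℝ := ∫ x, χ x with hm0
    set m1 : ℝ := ∫ x, x * χ x with hm1
    set χ' : ℝ → ℝ := fun x => χ x - m0 * ρ x - m1 * σ x with hχ'def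
    have hχ's : ContDiff ℝ (⊤:ℕ∞) χ' := (hχs.sub (hρs.const_smul m0)).sub (hσs.const_smul m1)
    have hχ'c : HasCompactSupport χ' := hcs_sub (hcs_sub hχc hρc.mul_left) hσc.mul_left
    have hχ'0 : (∫ x, χ' x) = 0 := by
      have i1 : Integrable (fun x => χ x - m0 * ρ x) volume := hχint.sub (hρint.const_mul m0)
      have i2 : Integrable (fun x => m1 * σ x) volume := hσint.const_mul m1
      have e1 : (∫ x, χ' x) = (∫ x, (χ x - m0 * ρ x)) - ∫ x, m1 * σ x := integral_sub i1 i2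
      rw [e1, integral_sub hχint (hρint.const_mul m0), MeasureTheory.integral_const_mul,
        MeasureTheory.integral_const_mul, hρ1, hσ0, ← hm0]
      ring
    have hχ'1 : (∫ x, x * χ' x) = 0 := by
      have hxρint : Integrable (fun x => x * ρ x) volume :=
        (continuous_id.mul hρs.continuous).integrable_of_hasCompactSupport hρc.mul_left
      have e : (fun x => x * χ' x)
          = fun x => (x * χ x - m0 * (x * ρ x)) - m1 * (x * σ x) := by
        funext x; rw [hχ'def]; ring
      have i1 : Integrable (fun x => x * χ x - m0 * (x * ρ x)) volume :=
        hxχint.sub (hxρint.const_mul m0)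
      have i2 : Integrable (fun x => m1 * (x * σ x)) volume := hxσint.const_mul m1
      rw [e, integral_sub i1 i2, integral_sub hxχint (hxρint.const_mul m0),
        MeasureTheory.integral_const_mul, MeasureTheory.integral_const_mul, hxρ, hσ1, ← hm1]
      ring
    obtain ⟨ψ, hψs, hψc, hψd2⟩ := exists_double_primitive hχ's hχ'c hχ'0 hχ'1
    have hFχ' : (∫ x, F x * χ' x) = 0 := by
      rw [← hψd2]; exact h ψ hψs hψc
    have i1 : Integrable (fun x => F x * χ x) volume :=
      integrable_mul_test hF hχs.continuous hχc
    have i2 : Integrable (fun x => F x * ρ x) volume :=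
      integrable_mul_test hF hρs.continuous hρc
    have i3 : Integrable (fun x => F x * σ x) volume :=
      integrable_mul_test hF hσs' hσc
    have hsplit : (∫ x, F x * χ' x) = (∫ x, F x * χ x) - m0 * a - m1 * b := by
      have e : (fun x => F x * χ' x)
          = fun x => (F x * χ x - m0 * (F x * ρ x)) - m1 * (F x * σ x) := by
        funext x; rw [hχ'def]; ring
      have i12 : Integrable (fun x => F x * χ x - m0 * (F x * ρ x)) volume :=
        i1.sub (i2.const_mul m0)
      have i3' : Integrable (fun x => m1 * (F x * σ x)) volume := i3.const_mul m1
      rw [e, integral_sub i12 i3', integral_sub i1 (i2.const_mul m0),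
        MeasureTheory.integral_const_mul, MeasureTheory.integral_const_mul, ← hadef, ← hbdef]
    have hFχ : (∫ x, F x * χ x) = m0 * a + m1 * b := by
      rw [hsplit] at hFχ'; linarith
    have esplit : (fun x => χ x • E x)
        = fun x => F x * χ x - (a * χ x + b * (x * χ x)) := by
      funext x; rw [hEdef]; simp only [smul_eq_mul]; ring
    have i4 : Integrable (fun x => a * χ x + b * (x * χ x)) volume :=
      (hχint.const_mul a).add (hxχint.const_mul b)
    rw [esplit, integral_sub i1 i4, integral_add (hχint.const_mul a) (hxχint.const_mul b),
      MeasureTheory.integral_const_mul, MeasureTheory.integral_const_mul, hFχ, ← hm0, ← hm1]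
    ring
  have := ae_eq_zero_of_integral_contDiff_smul_eq_zero hEloc (fun g hg hgc => key g hg hgc)
  filter_upwards [this] with x hx
  rw [hEdef] at hx
  simp only at hx
  linarith

lemma avg_tendsto_right {f : ℝ → ℝ} (hf : ∀ a b : ℝ, IntervalIntegrable f volume a b) {p L : ℝ}
    (hlim : Tendsto f (nhdsWithin p (Ioi p)) (nhds L)) :
    Tendsto (fun s => (∫ t in p..(p+s), f t) / s) (nhdsWithin 0 (Ioi 0)) (nhds L) := by
  rw [Metric.tendsto_nhdsWithin_nhds]
  intro ε hε
  rw [Metric.tendsto_nhdsWithin_nhds] at hlim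
  obtain ⟨δ, hδ0, hδ⟩ := hlim (ε/2) (by linarith)
  refine ⟨δ, hδ0, fun {s} hs hsd => ?_⟩
  rw [mem_Ioi] at hs
  rw [Real.dist_eq, sub_zero, abs_of_pos hs] at hsd
  have hps : p ≤ p + s := by linarith
  have key : |(∫ t in p..(p+s), f t) - L * s| ≤ (ε/2) * s := by
    have e1 : (∫ t in p..(p+s), f t) - L * s = ∫ t in p..(p+s), (f t - L) := by
      rw [intervalIntegral.integral_sub (hf _ _) intervalIntegrable_const,
        intervalIntegral.integral_const, smul_eq_mul]
      ring
    rw [e1]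
    have := intervalIntegral.norm_integral_le_of_norm_le_const
      (a := p) (b := p+s) (C := ε/2) (f := fun t => f t - L) ?_
    · rwa [Real.norm_eq_abs, abs_of_nonneg (by linarith : (0:ℝ) ≤ p + s - p),
        show p + s - p = s by ring] at this
    · intro x hx
      rw [uIoc_of_le hps, mem_Ioc] at hx
      have : dist x p < δ := by
        rw [Real.dist_eq, abs_of_pos (by linarith : 0 < x - p)]
        linarith
      have := hδ (mem_Ioi.2 hx.1) this
      rw [Real.dist_eq] at this
      rw [Real.norm_eq_abs]
      linarith
  rw [Real.dist_eq]
  have : (∫ t in p..(p+s), f t) / s - L = ((∫ t in p..(p+s), f t) - L * s) / s := by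
    field_simp
  rw [this, abs_div, abs_of_pos hs]
  rw [div_lt_iff₀ hs]
  calc |(∫ t in p..(p+s), f t) - L * s| ≤ (ε/2) * s := key
    _ < ε * s := by nlinarith

lemma avg_tendsto_left {f : ℝ → ℝ} (hf : ∀ a b : ℝ, IntervalIntegrable f volume a b) {p L : ℝ}
    (hlim : Tendsto f (nhdsWithin p (Iio p)) (nhds L)) :
    Tendsto (fun s => (∫ t in (p-s)..p, f t) / s) (nhdsWithin 0 (Ioi 0)) (nhds L) := by
  rw [Metric.tendsto_nhdsWithin_nhds]
  intro ε hε
  rw [Metric.tendsto_nhdsWithin_nhds] at hlim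
  obtain ⟨δ, hδ0, hδ⟩ := hlim (ε/2) (by linarith)
  refine ⟨δ, hδ0, fun {s} hs hsd => ?_⟩
  rw [mem_Ioi] at hs
  rw [Real.dist_eq, sub_zero, abs_of_pos hs] at hsd
  have hps : p - s ≤ p := by linarith
  have key : |(∫ t in (p-s)..p, f t) - L * s| ≤ (ε/2) * s := by
    have e1 : (∫ t in (p-s)..p, f t) - L * s = ∫ t in (p-s)..p, (f t - L) := by
      rw [intervalIntegral.integral_sub (hf _ _) intervalIntegrable_const,
        intervalIntegral.integral_const, smul_eq_mul]
      ring
    rw [e1]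
    have hae : ∀ᵐ t ∂(volume : Measure ℝ), t ∈ Set.uIoc (p-s) p → ‖f t - L‖ ≤ ε/2 := by
      have hsing : (volume : Measure ℝ) {p} = 0 := measure_singleton p
      filter_upwards [compl_mem_ae_iff.2 hsing] with t ht hmem
      have htne : t ≠ p := by simpa using ht
      rw [uIoc_of_le hps, mem_Ioc] at hmem
      have htlt : t < p := lt_of_le_of_ne hmem.2 htne
      have : dist t p < δ := by
        rw [Real.dist_eq, abs_of_neg (by linarith : t - p < 0)]
        linarith [hmem.1]
      have := hδ (mem_Iio.2 htlt) this
      rw [Real.dist_eq] at this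
      rw [Real.norm_eq_abs]
      linarith
    have := intervalIntegral.norm_integral_le_of_norm_le_const_ae
      (a := p-s) (b := p) (C := ε/2) (f := fun t => f t - L) hae
    rwa [Real.norm_eq_abs, abs_of_nonneg (by linarith : (0:ℝ) ≤ p - (p - s)),
      show p - (p - s) = s by ring] at this
  rw [Real.dist_eq]
  have : (∫ t in (p-s)..p, f t) / s - L = ((∫ t in (p-s)..p, f t) - L * s) / s := by
    field_simp
  rw [this, abs_div, abs_of_pos hs]
  rw [div_lt_iff₀ hs]
  calc |(∫ t in (p-s)..p, f t) - L * s| ≤ (ε/2) * s := key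
    _ < ε * s := by nlinarith

lemma cont_mono_right {W : ℝ → ℝ} (hW : Continuous W) {p q : ℝ}
    (hmono : ∀ x ∈ Ioo p q, ∀ y ∈ Ioo p q, x ≤ y → W x ≤ W y) :
    ∀ x ∈ Ioo p q, W p ≤ W x := by
  intro x hx
  have ht : Tendsto W (nhdsWithin p (Ioi p)) (nhds (W p)) :=
    (hW.tendsto p).mono_left nhdsWithin_le_nhds
  refine le_of_tendsto ht ?_
  filter_upwards [Ioo_mem_nhdsGT_of_mem (left_mem_Ico.2 hx.1)] with t htm
  exact hmono t ⟨htm.1, htm.2.trans hx.2⟩ x hx htm.2.le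

lemma cont_mono_left {W : ℝ → ℝ} (hW : Continuous W) {q p : ℝ}
    (hmono : ∀ x ∈ Ioo q p, ∀ y ∈ Ioo q p, x ≤ y → W x ≤ W y) :
    ∀ x ∈ Ioo q p, W x ≤ W p := by
  intro x hx
  have ht : Tendsto W (nhdsWithin p (Iio p)) (nhds (W p)) :=
    (hW.tendsto p).mono_left nhdsWithin_le_nhds
  refine ge_of_tendsto ht ?_
  filter_upwards [Ioo_mem_nhdsLT_of_mem (right_mem_Ioc.2 hx.2)] with t htm
  exact hmono x hx t ⟨hx.1.trans htm.1, htm.2⟩ htm.1.le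


end AuxLemmas

/-- **Lemma 5.3**: location of the jump states of a shock wavefront satisfying
(WF), and the induced sign of the speed. -/
theorem jump_states_location_and_speed_sign
    (P g : ℝ → ℝ) (α β γ : ℝ)
    (h0α : 0 < α) (hαγ : α < γ) (hγβ : γ < β) (hβ1 : β < 1)
    (hR : CondR P g) (hP : CondP P α β) (hg : Condg g γ)
    (c : ℝ) (φ : ℝ → ℝ)
    (hwf : IsShockWavefront P g c φ) (hWF : CondWF φ)
    (ξs φl φr : ℝ) (hjump : ξs ∈ jumpSet φ univ)
    (hl : Tendsto φ (nhdsWithin ξs (Ioi ξs)) (nhds φl))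
    (hr : Tendsto φ (nhdsWithin ξs (Iio ξs)) (nhds φr))
    (hlr : φl < φr) :
    (φl ∈ Ico 0 β ∧ (φl ∈ Ioo α β → 0 ≤ c)) ∧
    (φr ∈ Ioc α 1 ∧ (φr ∈ Ioo α β → c ≤ 0)) := by
  obtain ⟨⟨htw, hmono, hnc, _⟩, _⟩ := hwf
  have hmapsTo : ∀ ξ, φ ξ ∈ Icc (0:ℝ) 1 := fun ξ => htw.mapsTo ξ (mem_univ ξ)
  have h0φ : ∀ ξ, 0 ≤ φ ξ := fun ξ => (hmapsTo ξ).1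
  have hφ1 : ∀ ξ, φ ξ ≤ 1 := fun ξ => (hmapsTo ξ).2
  -- φ is antitone
  have hant : Antitone φ := by
    rcases hmono with hm | ha
    · exfalso
      have h1 : (1:ℝ) ≤ φ 0 := by
        refine le_of_tendsto hWF.1 ?_
        filter_upwards [eventually_le_atBot (0:ℝ)] with y hy
        exact hm hy
      have h2 : φ 0 ≤ 0 := by
        refine ge_of_tendsto hWF.2 ?_
        filter_upwards [eventually_ge_atTop (0:ℝ)] with y hy
        exact hm hy
      linarith
    · exact ha
  -- comparison with one-sided limits
  have hle_l : ∀ x, ξs < x → φ x ≤ φl := by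
    intro x hx
    refine ge_of_tendsto hl ?_
    filter_upwards [Ioo_mem_nhdsGT_of_mem (left_mem_Ico.2 hx)] with t htm
    exact hant htm.2.le
  have hge_r : ∀ x, x < ξs → φr ≤ φ x := by
    intro x hx
    refine le_of_tendsto hr ?_
    filter_upwards [Ioo_mem_nhdsLT_of_mem (right_mem_Ioc.2 hx)] with t htm
    exact hant htm.1.le
  have hφl0 : 0 ≤ φl := ge_of_tendsto hl (Eventually.of_forall fun ξ => h0φ ξ)
  have hφl1 : φl ≤ 1 := le_of_tendsto hl (Eventually.of_forall fun ξ => hφ1 ξ)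
  have hφr0 : 0 ≤ φr := ge_of_tendsto hr (Eventually.of_forall fun ξ => h0φ ξ)
  have hφr1 : φr ≤ 1 := le_of_tendsto hr (Eventually.of_forall fun ξ => hφ1 ξ)
  -- truncated continuous versions of P and g
  set proj : ℝ → ℝ := fun u => max 0 (min 1 u) with hprojdef
  have hprojcont : Continuous proj := continuous_const.max (continuous_const.min continuous_id)
  have hprojmem : ∀ u, proj u ∈ Icc (0:ℝ) 1 :=
    fun u => ⟨le_max_left _ _, max_le (by norm_num) (min_le_left _ _)⟩
  have hprojeq : ∀ u ∈ Icc (0:ℝ) 1, proj u = u := by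
    intro u hu
    rw [hprojdef]
    simp only
    rw [min_eq_right hu.2, max_eq_right hu.1]
  set P₀ : ℝ → ℝ := fun u => P (proj u) with hP₀def
  set g₀ : ℝ → ℝ := fun u => g (proj u) with hg₀def
  have hP₀cont : Continuous P₀ :=
    (hR.1.continuousOn).comp_continuous hprojcont hprojmem
  have hg₀cont : Continuous g₀ := hR.2.1.comp_continuous hprojcont hprojmem
  have hP₀eq : ∀ u ∈ Icc (0:ℝ) 1, P₀ u = P u := fun u hu => by
    rw [hP₀def]; simp only; rw [hprojeq u hu]
  have hg₀eq : ∀ u ∈ Icc (0:ℝ) 1, g₀ u = g u := fun u hu => by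
    rw [hg₀def]; simp only; rw [hprojeq u hu]
  -- measurability and boundedness
  have hφm : Measurable φ := hant.measurable
  obtain ⟨CP, hCP⟩ : ∃ C, ∀ u, |P₀ u| ≤ C := by
    obtain ⟨C, hC⟩ := (isCompact_Icc (a := (0:ℝ)) (b := 1)).exists_bound_of_continuousOn
      (hR.1.continuousOn)
    exact ⟨C, fun u => by simpa [Real.norm_eq_abs] using hC (proj u) (hprojmem u)⟩
  obtain ⟨Cg, hCg⟩ : ∃ C, ∀ u, |g₀ u| ≤ C := by
    obtain ⟨C, hC⟩ := (isCompact_Icc (a := (0:ℝ)) (b := 1)).exists_bound_of_continuousOn hR.2.1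
    exact ⟨C, fun u => by simpa [Real.norm_eq_abs] using hC (proj u) (hprojmem u)⟩
  set h : ℝ → ℝ := fun ξ => P₀ (φ ξ) with hhdef
  set f0 : ℝ → ℝ := fun ξ => g₀ (φ ξ) with hf0def
  have hhm : Measurable h := hP₀cont.measurable.comp hφm
  have hf0m : Measurable f0 := hg₀cont.measurable.comp hφm
  have hhloc : LocallyIntegrable h volume := locInt_of_bdd hhm CP (fun x => hCP _)
  have hf0loc : LocallyIntegrable f0 volume := locInt_of_bdd hf0m Cg (fun x => hCg _)
  have hφloc : LocallyIntegrable φ volume :=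
    locInt_of_bdd hφm 1 (fun x => abs_le.2 ⟨by linarith [h0φ x], hφ1 x⟩)
  set G : ℝ → ℝ := fun x => ∫ t in (0:ℝ)..x, f0 t with hGdef
  have hGcont : Continuous G :=
    intervalIntegral.continuous_primitive (fun a b => locInt_interval hf0loc a b) 0
  set U : ℝ → ℝ := fun t => c * φ t + G t with hUdef
  have hUm : Measurable U := (hφm.const_mul c).add hGcont.measurable
  have hUloc : LocallyIntegrable U volume :=
    ((hφloc.smul c).add hGcont.locallyIntegrable : LocallyIntegrable _ volume)
  have hUint : ∀ a b : ℝ, IntervalIntegrable U volume a b := locInt_interval hUloc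
  set V : ℝ → ℝ := fun x => ∫ t in (0:ℝ)..x, U t with hVdef
  have hVcont : Continuous V := intervalIntegral.continuous_primitive hUint 0
  -- the fundamental distributional identity
  have hFkey : ∀ ψ : ℝ → ℝ, ContDiff ℝ (⊤:ℕ∞) ψ → HasCompactSupport ψ →
      (∫ x, (h x + V x) * deriv (deriv ψ) x) = 0 := by
    intro ψ hψs hψc
    have hψ'c : HasCompactSupport (deriv ψ) := hψc.deriv
    have hψ's : ContDiff ℝ (⊤:ℕ∞) (deriv ψ) := (contDiff_infty_iff_deriv.1 hψs).2
    have hweak := htw.weak_eq ψ ⟨hψs, hψc, subset_univ _⟩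
    rw [MeasureTheory.setIntegral_univ, MeasureTheory.setIntegral_univ,
      MeasureTheory.setIntegral_univ] at hweak
    have hit2 : ∀ x, iteratedDeriv 2 ψ x = deriv (deriv ψ) x := by
      intro x
      rw [iteratedDeriv_succ, iteratedDeriv_one]
    have hweak' : (∫ x, h x * deriv (deriv ψ) x)
        = c * (∫ x, φ x * deriv ψ x) - ∫ x, f0 x * ψ x := by
      have e1 : (∫ x, P (φ x) * iteratedDeriv 2 ψ x) = ∫ x, h x * deriv (deriv ψ) x := by
        refine integral_congr_ae (Eventually.of_forall fun x => ?_)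
        show P (φ x) * iteratedDeriv 2 ψ x = h x * deriv (deriv ψ) x
        rw [hit2 x, hhdef]
        simp only
        rw [hP₀eq _ (hmapsTo x)]
      have e2 : (∫ x, g (φ x) * ψ x) = ∫ x, f0 x * ψ x := by
        refine integral_congr_ae (Eventually.of_forall fun x => ?_)
        show g (φ x) * ψ x = f0 x * ψ x
        rw [hf0def]
        simp only
        rw [hg₀eq _ (hmapsTo x)]
      rw [← e1, ← e2]
      exact hweak
    have hG_parts : (∫ x, G x * deriv ψ x) = - ∫ x, f0 x * ψ x :=
      primitive_mul_deriv hf0m hf0loc hψs hψc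
    have hV_parts : (∫ x, V x * deriv (deriv ψ) x) = - ∫ x, U x * deriv ψ x :=
      primitive_mul_deriv hUm hUloc hψ's hψ'c
    have hU_split : (∫ x, U x * deriv ψ x)
        = c * (∫ x, φ x * deriv ψ x) + ∫ x, G x * deriv ψ x := by
      have e : (fun x => U x * deriv ψ x)
          = fun x => c * (φ x * deriv ψ x) + G x * deriv ψ x := by
        funext x; rw [hUdef]; ring
      have i1 : Integrable (fun x => φ x * deriv ψ x) volume :=
        integrable_mul_test hφloc hψ's.continuous hψ'c
      have i2 : Integrable (fun x => G x * deriv ψ x) volume :=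
        integrable_mul_test hGcont.locallyIntegrable hψ's.continuous hψ'c
      rw [e, integral_add (i1.const_mul c) i2, MeasureTheory.integral_const_mul]
    have hsum : (∫ x, (h x + V x) * deriv (deriv ψ) x)
        = (∫ x, h x * deriv (deriv ψ) x) + ∫ x, V x * deriv (deriv ψ) x := by
      have e : (fun x => (h x + V x) * deriv (deriv ψ) x)
          = fun x => h x * deriv (deriv ψ) x + V x * deriv (deriv ψ) x := by
        funext x; ring
      have hψ''c : HasCompactSupport (deriv (deriv ψ)) := hψ'c.deriv
      have hψ''s : ContDiff ℝ (⊤:ℕ∞) (deriv (deriv ψ)) := (contDiff_infty_iff_deriv.1 hψ's).2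
      have i1 : Integrable (fun x => h x * deriv (deriv ψ) x) volume :=
        integrable_mul_test hhloc hψ''s.continuous hψ''c
      have i2 : Integrable (fun x => V x * deriv (deriv ψ) x) volume :=
        integrable_mul_test hVcont.locallyIntegrable hψ''s.continuous hψ''c
      rw [e, integral_add i1 i2]
    rw [hsum, hweak', hV_parts, hU_split, hG_parts]
    ring
  -- affine representation
  obtain ⟨a, b, hab⟩ := ae_affine_of_deriv2_zero (hhloc.add hVcont.locallyIntegrable)
    (by
      intro ψ hψs hψc
      have := hFkey ψ hψs hψc
      simpa using this)
  set W : ℝ → ℝ := fun x => a + b * x - V x with hWdef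
  have hWcont : Continuous W :=
    ((continuous_const.add (continuous_const.mul continuous_id)).sub hVcont)
  have haeW : ∀ᵐ x : ℝ, h x = W x := by
    filter_upwards [hab] with x hx
    have hx' : h x + V x = a + b * x := hx
    show h x = a + b * x - V x
    linarith
  -- h = W away from jump set
  set J : Set ℝ := jumpSet φ univ with hJdef
  have hJfin : J.Finite := htw.jumps_finite
  have hJclosed : IsClosed J := hJfin.isClosed
  have hOopen : IsOpen (univ \ J) := isOpen_univ.sdiff hJclosed
  have hWeq : ∀ x, x ∉ J → h x = W x := by
    intro x0 hx0
    by_contra hne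
    have hx0' : x0 ∈ univ \ J := ⟨mem_univ _, hx0⟩
    have hφat : ContinuousAt φ x0 := (htw.cont).continuousAt (hOopen.mem_nhds hx0')
    have hhat : ContinuousAt h x0 := hP₀cont.continuousAt.comp hφat
    have hDat : ContinuousAt (fun x => h x - W x) x0 := hhat.sub hWcont.continuousAt
    have hDne : (fun x => h x - W x) x0 ≠ 0 := sub_ne_zero.2 hne
    have hev : ∀ᶠ y in nhds x0, (fun x => h x - W x) y ≠ 0 := hDat.eventually_ne hDne
    obtain ⟨ε, hε0, hball⟩ := Metric.eventually_nhds_iff_ball.1 hev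
    have hsub : Metric.ball x0 ε ⊆ {x | ¬ h x = W x} := by
      intro y hy
      have := hball y hy
      exact fun hEq => this (show h y - W y = 0 from sub_eq_zero.2 hEq)
    have hnull : volume {x : ℝ | ¬ h x = W x} = 0 := MeasureTheory.ae_iff.1 haeW
    have hpos := Metric.measure_ball_pos volume x0 hε0
    have : volume (Metric.ball x0 ε) ≤ volume {x : ℝ | ¬ h x = W x} := measure_mono hsub
    rw [hnull] at this
    exact absurd (le_antisymm this (by simp)) (ne_of_gt hpos)
  -- W ξs equals both P φl and P φr
  have hevr_nJ : ∀ᶠ x in nhdsWithin ξs (Ioi ξs), x ∉ J := by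
    have hKclosed : IsClosed (J \ {ξs}) := (hJfin.subset diff_subset).isClosed
    have hmem : (J \ {ξs})ᶜ ∈ nhds ξs :=
      hKclosed.isOpen_compl.mem_nhds (by simp)
    filter_upwards [eventually_nhdsWithin_of_eventually_nhds hmem, self_mem_nhdsWithin]
      with x hx hx2
    intro hxJ
    exact hx ⟨hxJ, by simp [ne_of_gt (mem_Ioi.1 hx2)]⟩
  have hevl_nJ : ∀ᶠ x in nhdsWithin ξs (Iio ξs), x ∉ J := by
    have hKclosed : IsClosed (J \ {ξs}) := (hJfin.subset diff_subset).isClosed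
    have hmem : (J \ {ξs})ᶜ ∈ nhds ξs :=
      hKclosed.isOpen_compl.mem_nhds (by simp)
    filter_upwards [eventually_nhdsWithin_of_eventually_nhds hmem, self_mem_nhdsWithin]
      with x hx hx2
    intro hxJ
    exact hx ⟨hxJ, by simp [ne_of_lt (mem_Iio.1 hx2)]⟩
  have hWl : W ξs = P φl := by
    have h1 : Tendsto h (nhdsWithin ξs (Ioi ξs)) (nhds (P₀ φl)) :=
      (hP₀cont.continuousAt.tendsto).comp hl
    have h2 : Tendsto W (nhdsWithin ξs (Ioi ξs)) (nhds (W ξs)) :=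
      (hWcont.tendsto ξs).mono_left nhdsWithin_le_nhds
    have h3 : Tendsto h (nhdsWithin ξs (Ioi ξs)) (nhds (W ξs)) := by
      refine h2.congr' ?_
      filter_upwards [hevr_nJ] with x hx
      exact (hWeq x hx).symm
    have := tendsto_nhds_unique h3 h1
    rw [this, hP₀eq _ ⟨hφl0, hφl1⟩]
  have hWr : W ξs = P φr := by
    have h1 : Tendsto h (nhdsWithin ξs (Iio ξs)) (nhds (P₀ φr)) :=
      (hP₀cont.continuousAt.tendsto).comp hr
    have h2 : Tendsto W (nhdsWithin ξs (Iio ξs)) (nhds (W ξs)) :=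
      (hWcont.tendsto ξs).mono_left nhdsWithin_le_nhds
    have h3 : Tendsto h (nhdsWithin ξs (Iio ξs)) (nhds (W ξs)) := by
      refine h2.congr' ?_
      filter_upwards [hevl_nJ] with x hx
      exact (hWeq x hx).symm
    have := tendsto_nhds_unique h3 h1
    rw [this, hP₀eq _ ⟨hφr0, hφr1⟩]
  have hRH : P φl = P φr := by rw [← hWl, hWr]
  -- strict monotonicity of P on the pieces
  have hPc01 : ContinuousOn P (Icc 0 1) := hR.1.continuousOn
  have hα1 : α ≤ 1 := by linarith
  have hβ0 : (0:ℝ) ≤ β := by linarith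
  have hPmono1 : StrictMonoOn P (Icc 0 α) := by
    apply strictMonoOn_of_deriv_pos (convex_Icc 0 α)
      (hPc01.mono (Icc_subset_Icc le_rfl hα1))
    intro x hx
    rw [interior_Icc] at hx
    exact hP.1 x (Or.inl hx)
  have hPmono2 : StrictMonoOn P (Icc β 1) := by
    apply strictMonoOn_of_deriv_pos (convex_Icc β 1)
      (hPc01.mono (Icc_subset_Icc hβ0 le_rfl))
    intro x hx
    rw [interior_Icc] at hx
    exact hP.1 x (Or.inr hx)
  have hPanti : StrictAntiOn P (Icc α β) := by
    apply strictAntiOn_of_deriv_neg (convex_Icc α β)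
      (hPc01.mono (Icc_subset_Icc (by linarith) (by linarith)))
    intro x hx
    rw [interior_Icc] at hx
    exact hP.2 x hx
  -- location of the jump states
  have hφlβ : φl < β := by
    by_contra hcon
    push_neg at hcon
    have := hPmono2 ⟨hcon, hφl1⟩ ⟨hcon.trans hlr.le, hφr1⟩ hlr
    rw [hRH] at this
    exact lt_irrefl _ this
  have hφrα : α < φr := by
    by_contra hcon
    push_neg at hcon
    have := hPmono1 ⟨hφl0, (hlr.trans_le hcon).le⟩ ⟨hφr0, hcon⟩ hlr
    rw [hRH] at this
    exact lt_irrefl _ this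
  have hnotboth : ¬ (φl ∈ Ioo α β ∧ φr ∈ Ioo α β) := by
    rintro ⟨h1, h2⟩
    have := hPanti ⟨h1.1.le, h1.2.le⟩ ⟨h2.1.le, h2.2.le⟩ hlr
    rw [hRH] at this
    exact lt_irrefl _ this
  -- W difference formula
  have hWdiff : ∀ x1 x2 : ℝ, W x2 - W x1 = b * (x2 - x1) - ∫ t in x1..x2, U t := by
    intro x1 x2
    have hadd := intervalIntegral.integral_add_adjacent_intervals
      (hUint 0 x1) (hUint x1 x2)
    rw [hWdef]
    simp only
    rw [hVdef]
    simp only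
    have : (∫ t in (0:ℝ)..x2, U t) - (∫ t in (0:ℝ)..x1, U t) = ∫ t in x1..x2, U t := by
      rw [← hadd]; ring
    linarith [this]
  -- limits of U
  have hUlim_r : Tendsto U (nhdsWithin ξs (Ioi ξs)) (nhds (c * φl + G ξs)) := by
    apply Tendsto.add
    · exact hl.const_mul c
    · exact (hGcont.tendsto ξs).mono_left nhdsWithin_le_nhds
  have hUlim_l : Tendsto U (nhdsWithin ξs (Iio ξs)) (nhds (c * φr + G ξs)) := by
    apply Tendsto.add
    · exact hr.const_mul c
    · exact (hGcont.tendsto ξs).mono_left nhdsWithin_le_nhds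
  have havg_r := avg_tendsto_right hUint hUlim_r
  have havg_l := avg_tendsto_left hUint hUlim_l
  -- the speed sign claims
  refine ⟨⟨⟨hφl0, hφlβ⟩, ?_⟩, ⟨⟨hφrα, hφr1⟩, ?_⟩⟩
  · -- φl ∈ Ioo α β → 0 ≤ c
    intro hmem
    have hφrβ : β ≤ φr := by
      by_contra hcon
      push_neg at hcon
      exact hnotboth ⟨hmem, ⟨hφrα, hcon⟩⟩
    -- right side: W nondecreasing near ξs⁺, so c φl + G ξs ≤ b
    have hev1 : ∀ᶠ x in nhdsWithin ξs (Ioi ξs), α < φ x :=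
      hl.eventually (lt_mem_nhds hmem.1)
    obtain ⟨q, hq, hqall⟩ := (nhdsGT_basis ξs).eventually_iff.1 (hev1.and hevr_nJ)
    have hmonoWr : ∀ x ∈ Ioo ξs q, ∀ y ∈ Ioo ξs q, x ≤ y → W x ≤ W y := by
      intro x hx y hy hxy
      obtain ⟨hαx, hxJ⟩ := hqall hx
      obtain ⟨hαy, hyJ⟩ := hqall hy
      rw [← hWeq x hxJ, ← hWeq y hyJ, hhdef]
      simp only
      rw [hP₀eq _ (hmapsTo x), hP₀eq _ (hmapsTo y)]
      have hyx : φ y ≤ φ x := hant hxy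
      have hxmem : φ x ∈ Icc α β := ⟨hαx.le, ((hle_l x hx.1).trans hmem.2.le)⟩
      have hymem : φ y ∈ Icc α β := ⟨hαy.le, ((hle_l y hy.1).trans hmem.2.le)⟩
      rcases eq_or_lt_of_le hyx with hEq | hlt
      · rw [hEq]
      · exact (hPanti hymem hxmem hlt).le
    have hWlow : ∀ s, s ∈ Ioo (0:ℝ) (q - ξs) → (∫ t in ξs..(ξs+s), U t) / s ≤ b := by
      intro s hs
      have hx : ξs + s ∈ Ioo ξs q := ⟨by linarith [hs.1], by linarith [hs.2]⟩
      have := cont_mono_right hWcont hmonoWr (ξs + s) hx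
      have hdiff := hWdiff ξs (ξs + s)
      rw [div_le_iff₀ hs.1]
      have : (0:ℝ) ≤ W (ξs + s) - W ξs := by linarith [this]
      linarith [hdiff, this]
    have hcl : c * φl + G ξs ≤ b := by
      refine le_of_tendsto havg_r ?_
      filter_upwards [Ioo_mem_nhdsGT_of_mem
        (left_mem_Ico.2 (by linarith : (0:ℝ) < q - ξs))] with s hs
      exact hWlow s hs
    -- left side: W nonincreasing near ξs⁻, so b ≤ c φr + G ξs
    obtain ⟨p, hp, hpall⟩ := (nhdsLT_basis ξs).eventually_iff.1 hevl_nJ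
    have hmonoWl : ∀ x ∈ Ioo p ξs, ∀ y ∈ Ioo p ξs, x ≤ y → (-W) x ≤ (-W) y := by
      intro x hx y hy hxy
      have hxJ := hpall hx
      have hyJ := hpall hy
      simp only [Pi.neg_apply, neg_le_neg_iff]
      rw [← hWeq x hxJ, ← hWeq y hyJ, hhdef]
      simp only
      rw [hP₀eq _ (hmapsTo x), hP₀eq _ (hmapsTo y)]
      have hyx : φ y ≤ φ x := hant hxy
      have hxmem : φ x ∈ Icc β 1 := ⟨(hφrβ.trans (hge_r x hx.2)), hφ1 x⟩
      have hymem : φ y ∈ Icc β 1 := ⟨(hφrβ.trans (hge_r y hy.2)), hφ1 y⟩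
      rcases eq_or_lt_of_le hyx with hEq | hlt
      · rw [hEq]
      · exact (hPmono2 hymem hxmem hlt).le
    have hWhigh : ∀ s, s ∈ Ioo (0:ℝ) (ξs - p) → b ≤ (∫ t in (ξs-s)..ξs, U t) / s := by
      intro s hs
      have hx : ξs - s ∈ Ioo p ξs := ⟨by linarith [hs.2], by linarith [hs.1]⟩
      have := cont_mono_left hWcont.neg hmonoWl (ξs - s) hx
      simp only [Pi.neg_apply, neg_le_neg_iff] at this
      -- this : W ξs ≤ W (ξs - s)
      have hdiff := hWdiff (ξs - s) ξs
      rw [le_div_iff₀ hs.1]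
      linarith [hdiff, this]
    have hcr : b ≤ c * φr + G ξs := by
      refine ge_of_tendsto havg_l ?_
      filter_upwards [Ioo_mem_nhdsGT_of_mem
        (left_mem_Ico.2 (by linarith : (0:ℝ) < ξs - p))] with s hs
      exact hWhigh s hs
    by_contra hc
    push_neg at hc
    have := mul_lt_mul_of_neg_left hlr hc
    linarith
  · -- φr ∈ Ioo α β → c ≤ 0
    intro hmem
    have hφlα : φl ≤ α := by
      by_contra hcon
      push_neg at hcon
      exact hnotboth ⟨⟨hcon, hφlβ⟩, hmem⟩
    -- right side: W nonincreasing near ξs⁺, so b ≤ c φl + G ξs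
    obtain ⟨q, hq, hqall⟩ := (nhdsGT_basis ξs).eventually_iff.1 hevr_nJ
    have hmonoWr : ∀ x ∈ Ioo ξs q, ∀ y ∈ Ioo ξs q, x ≤ y → (-W) x ≤ (-W) y := by
      intro x hx y hy hxy
      have hxJ := hqall hx
      have hyJ := hqall hy
      simp only [Pi.neg_apply, neg_le_neg_iff]
      rw [← hWeq x hxJ, ← hWeq y hyJ, hhdef]
      simp only
      rw [hP₀eq _ (hmapsTo x), hP₀eq _ (hmapsTo y)]
      have hyx : φ y ≤ φ x := hant hxy
      have hxmem : φ x ∈ Icc 0 α := ⟨h0φ x, (hle_l x hx.1).trans hφlα⟩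
      have hymem : φ y ∈ Icc 0 α := ⟨h0φ y, (hle_l y hy.1).trans hφlα⟩
      rcases eq_or_lt_of_le hyx with hEq | hlt
      · rw [hEq]
      · exact (hPmono1 hymem hxmem hlt).le
    have hWlow : ∀ s, s ∈ Ioo (0:ℝ) (q - ξs) → b ≤ (∫ t in ξs..(ξs+s), U t) / s := by
      intro s hs
      have hx : ξs + s ∈ Ioo ξs q := ⟨by linarith [hs.1], by linarith [hs.2]⟩
      have := cont_mono_right hWcont.neg hmonoWr (ξs + s) hx
      simp only [Pi.neg_apply, neg_le_neg_iff] at this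
      -- this : W (ξs + s) ≤ W ξs
      have hdiff := hWdiff ξs (ξs + s)
      rw [le_div_iff₀ hs.1]
      linarith [hdiff, this]
    have hcl : b ≤ c * φl + G ξs := by
      refine ge_of_tendsto havg_r ?_
      filter_upwards [Ioo_mem_nhdsGT_of_mem
        (left_mem_Ico.2 (by linarith : (0:ℝ) < q - ξs))] with s hs
      exact hWlow s hs
    -- left side: W nondecreasing near ξs⁻, so c φr + G ξs ≤ b
    have hev1 : ∀ᶠ x in nhdsWithin ξs (Iio ξs), φ x < β :=
      hr.eventually (gt_mem_nhds hmem.2)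
    obtain ⟨p, hp, hpall⟩ := (nhdsLT_basis ξs).eventually_iff.1 (hev1.and hevl_nJ)
    have hmonoWl : ∀ x ∈ Ioo p ξs, ∀ y ∈ Ioo p ξs, x ≤ y → W x ≤ W y := by
      intro x hx y hy hxy
      obtain ⟨hβx, hxJ⟩ := hpall hx
      obtain ⟨hβy, hyJ⟩ := hpall hy
      rw [← hWeq x hxJ, ← hWeq y hyJ, hhdef]
      simp only
      rw [hP₀eq _ (hmapsTo x), hP₀eq _ (hmapsTo y)]
      have hyx : φ y ≤ φ x := hant hxy
      have hxmem : φ x ∈ Icc α β := ⟨(hmem.1.le.trans (hge_r x hx.2)), hβx.le⟩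
      have hymem : φ y ∈ Icc α β := ⟨(hmem.1.le.trans (hge_r y hy.2)), hβy.le⟩
      rcases eq_or_lt_of_le hyx with hEq | hlt
      · rw [hEq]
      · exact (hPanti hymem hxmem hlt).le
    have hWhigh : ∀ s, s ∈ Ioo (0:ℝ) (ξs - p) → (∫ t in (ξs-s)..ξs, U t) / s ≤ b := by
      intro s hs
      have hx : ξs - s ∈ Ioo p ξs := ⟨by linarith [hs.2], by linarith [hs.1]⟩
      have := cont_mono_left hWcont hmonoWl (ξs - s) hx
      -- this : W (ξs - s) ≤ W ξs
      have hdiff := hWdiff (ξs - s) ξs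
      rw [div_le_iff₀ hs.1]
      linarith [hdiff, this]
    have hcr : c * φr + G ξs ≤ b := by
      refine le_of_tendsto havg_l ?_
      filter_upwards [Ioo_mem_nhdsGT_of_mem
        (left_mem_Ico.2 (by linarith : (0:ℝ) < ξs - p))] with s hs
      exact hWhigh s hs
    by_contra hc
    push_neg at hc
    have := mul_lt_mul_of_pos_left hlr hc
    linarith
end
end
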